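/- arXiv:1309.4029 — 5 statements merged into one kernel-verified Lean document; each statement's English description precedes it below -/
import Mathlib

section
/- Let X_1,...,X_N be sampled without replacement from a finite population of N > 1 reals with mean μ, minimum a and maximum b. Then for all ε > 0 and n < N, P(max_{n≤k≤N−1} (1/k)∑_{t=1}^k (X_t − μ) ≥ ε) ≤ exp(−2nε²/((1 − n/N)(1 + 1/n)(b−a)²)). -/
open MeasureTheory Finset Real
open scoped ENNReal

/-- The first `N` coordinates of the process `X` are a sample drawn without replacement
from the population `x : Fin N → ℝ`, i.e. the law of `(X 0, …, X (N-1))` is the uniform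
distribution over the orderings of the population. -/
def samplesWithoutReplacement {Ω : Type*} [MeasurableSpace Ω] (P : Measure Ω)
    (N : ℕ) (x : Fin N → ℝ) (X : ℕ → Ω → ℝ) : Prop :=
  Measure.map (fun ω (i : Fin N) => X i ω) P =
    (Nat.factorial N : ℝ≥0∞)⁻¹ • ∑ e : Equiv.Perm (Fin N), Measure.dirac (fun i => x (e i))


section HSproofs
open Real Finset


private lemma hs_quad (u : ℝ) : u - u^2 ≤ 1/4 := by nlinarith [sq_nonneg (u - 1/2)]

lemma hs_L0 {θ : ℝ} (h0 : 0 ≤ θ) (h1 : θ ≤ 1) (h : ℝ) :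
    (1 - θ) * exp (-θ * h) + θ * exp ((1 - θ) * h) ≤ exp (h ^ 2 / 8) := by
  have hLHS : (1 - θ) * exp (-θ * h) + θ * exp ((1 - θ) * h)
      = exp (-θ * h) * ((1 - θ) + θ * exp h) := by
    rw [show (1 - θ) * h = -θ * h + h by ring, exp_add]
    ring
  rw [hLHS]
  rcases eq_or_lt_of_le h0 with h0' | h0'
  · simp [← h0', one_le_exp_iff.2 (by positivity : (0:ℝ) ≤ h^2/8)]
  rcases eq_or_lt_of_le h1 with h1' | h1'
  · rw [h1']
    simp [← exp_add, one_le_exp_iff.2 (by positivity : (0:ℝ) ≤ h^2/8)]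
  -- main case 0 < θ < 1
  set D : ℝ → ℝ := fun t => (1 - θ) + θ * exp t with hDdef
  have hDpos : ∀ t, 0 < D t := fun t => by
    have := exp_pos t; simp only [hDdef]; nlinarith
  have hDne : ∀ t, D t ≠ 0 := fun t => (hDpos t).ne'
  set ψ : ℝ → ℝ := fun t => t^2/8 - (log (D t) - θ * t) with hψdef
  set g : ℝ → ℝ := fun t => t/4 + θ - θ * exp t / D t with hgdef
  have hD : ∀ t, HasDerivAt D (θ * exp t) t := fun t =>
    ((hasDerivAt_exp t).const_mul θ).const_add (1 - θ)
  have hψ' : ∀ t, HasDerivAt ψ (g t) t := by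
    intro t
    have h1d : HasDerivAt (fun t : ℝ => t^2/8) (2 * t / 8) t := by
      simpa using (hasDerivAt_pow 2 t).div_const 8
    have h2d : HasDerivAt (fun t => log (D t)) (θ * exp t / D t) t := (hD t).log (hDne t)
    have h3d : HasDerivAt (fun t : ℝ => θ * t) θ t := by
      simpa using (hasDerivAt_id t).const_mul θ
    have := h1d.sub (h2d.sub h3d)
    refine this.congr_deriv ?_
    simp only [hgdef]; ring
  have hg' : ∀ t, HasDerivAt g (1/4 - (θ * exp t * D t - (θ * exp t) * (θ * exp t)) / (D t)^2) t := by
    intro t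
    have h1d : HasDerivAt (fun t : ℝ => t/4 + θ) (1/4) t := by
      simpa using ((hasDerivAt_id t).div_const 4).add_const θ
    have h2d : HasDerivAt (fun t => θ * exp t / D t)
        ((θ * exp t * D t - (θ * exp t) * (θ * exp t)) / (D t)^2) t := by
      have := ((hasDerivAt_exp t).const_mul θ).div (hD t) (hDne t)
      exact this
    exact h1d.sub h2d
  have hg'nonneg : ∀ t, 0 ≤ 1/4 - (θ * exp t * D t - (θ * exp t) * (θ * exp t)) / (D t)^2 := by
    intro t
    set v : ℝ := θ * exp t / D t with hv
    have hne : 1 - θ + θ * exp t ≠ 0 := by have := hDpos t; simp only [hDdef] at this; linarith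
    have hveq : (θ * exp t * D t - (θ * exp t) * (θ * exp t)) / (D t)^2 = v - v^2 := by
      rw [hv]
      simp only [hDdef]
      field_simp
    rw [hveq]
    have := hs_quad v
    linarith
  have hgmono : Monotone g := by
    refine monotone_of_deriv_nonneg (fun t => (hg' t).differentiableAt) (fun t => ?_)
    rw [(hg' t).deriv]; exact hg'nonneg t
  have hg0 : g 0 = 0 := by
    simp only [hgdef, hDdef]
    rw [exp_zero]
    field_simp
    ring
  have hψdiff : Differentiable ℝ ψ := fun t => (hψ' t).differentiableAt
  have hψ0 : ψ 0 = 0 := by simp [hψdef, hDdef]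
  have key : ∀ t, 0 ≤ ψ t := by
    intro t
    rcases le_total 0 t with ht | ht
    · have hmono : MonotoneOn ψ (Set.Ici 0) := by
        refine monotoneOn_of_deriv_nonneg (convex_Ici 0) hψdiff.continuous.continuousOn
          (hψdiff.differentiableOn) (fun s hs => ?_)
        rw [(hψ' s).deriv]
        have : (0:ℝ) ≤ s := le_of_lt (by simpa using hs)
        have := hgmono this
        rw [hg0] at this; linarith
      have := hmono (by simp) (by simpa using ht) ht
      rwa [hψ0] at this
    · have hanti : AntitoneOn ψ (Set.Iic 0) := by
        refine antitoneOn_of_deriv_nonpos (convex_Iic 0) hψdiff.continuous.continuousOn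
          (hψdiff.differentiableOn) (fun s hs => ?_)
        rw [(hψ' s).deriv]
        have : s ≤ (0:ℝ) := le_of_lt (by simpa using hs)
        have := hgmono this
        rw [hg0] at this; linarith
      have := hanti (by simpa using ht) (by simp) ht
      rwa [hψ0] at this
  have hψh := key h
  have hexp : exp (-θ * h) * ((1 - θ) + θ * exp h) = exp (-θ * h + log (D h)) := by
    rw [exp_add, exp_log (hDpos h)]
  rw [hexp]
  apply exp_le_exp.2
  simp only [hψdef] at hψh
  linarith

lemma hs_L1 {ι : Type*} (F : Finset ι) (hF : F.Nonempty) (d : ι → ℝ) (p q m c : ℝ)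
    (hpq : p ≤ q) (hd : ∀ i ∈ F, d i ∈ Set.Icc p q)
    (hmean : ∑ i ∈ F, d i = F.card * m) :
    ∑ i ∈ F, exp (c * d i) ≤ F.card * exp (c * m + c^2 * (q - p)^2 / 8) := by
  have hcard : (0:ℝ) < F.card := by exact_mod_cast Finset.card_pos.2 hF
  have hm_mem : m ∈ Set.Icc p q := by
    constructor
    · have : (F.card : ℝ) * p ≤ ∑ i ∈ F, d i := by
        calc (F.card : ℝ) * p = ∑ _i ∈ F, p := by rw [Finset.sum_const, nsmul_eq_mul]
        _ ≤ _ := Finset.sum_le_sum (fun i hi => (hd i hi).1)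
      rw [hmean] at this
      exact le_of_mul_le_mul_left this hcard
    · have : ∑ i ∈ F, d i ≤ (F.card : ℝ) * q := by
        calc ∑ i ∈ F, d i ≤ ∑ _i ∈ F, q := Finset.sum_le_sum (fun i hi => (hd i hi).2)
        _ = (F.card : ℝ) * q := by rw [Finset.sum_const, nsmul_eq_mul]
      rw [hmean] at this
      exact le_of_mul_le_mul_left this hcard
  rcases eq_or_lt_of_le hpq with heq | hpq'
  · -- p = q : all d i = m
    have hm : m = p := le_antisymm (heq ▸ hm_mem.2) hm_mem.1
    have : ∀ i ∈ F, d i = p := fun i hi => le_antisymm (heq ▸ (hd i hi).2) (hd i hi).1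
    calc ∑ i ∈ F, exp (c * d i) = ∑ _i ∈ F, exp (c * p) :=
          Finset.sum_congr rfl (fun i hi => by rw [this i hi])
      _ = (F.card : ℝ) * exp (c * p) := by rw [Finset.sum_const, nsmul_eq_mul]
      _ ≤ (F.card : ℝ) * exp (c * m + c^2 * (q - p)^2 / 8) := by
          apply mul_le_mul_of_nonneg_left _ hcard.le
          apply exp_le_exp.2
          rw [hm]
          nlinarith [sq_nonneg c, sq_nonneg (q - p)]
  -- p < q
  have hqp : (0:ℝ) < q - p := sub_pos.2 hpq'
  set θ : ℝ := (m - p) / (q - p) with hθ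
  have hθ0 : 0 ≤ θ := div_nonneg (by linarith [hm_mem.1]) hqp.le
  have hθ1 : θ ≤ 1 := by
    rw [hθ, div_le_one hqp]; linarith [hm_mem.2]
  have hθqp : θ * (q - p) = m - p := by rw [hθ]; field_simp
  have h1θqp : (1 - θ) * (q - p) = q - m := by
    have : (1 - θ) * (q - p) = (q - p) - θ * (q - p) := by ring
    rw [this, hθqp]; ring
  -- pointwise convexity bound
  have hconv : ∀ i ∈ F, exp (c * d i) ≤
      ((q - d i) * exp (c * p) + (d i - p) * exp (c * q)) / (q - p) := by
    intro i hi
    have hwa : 0 ≤ (q - d i) / (q - p) := div_nonneg (by linarith [(hd i hi).2]) hqp.le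
    have hwb : 0 ≤ (d i - p) / (q - p) := div_nonneg (by linarith [(hd i hi).1]) hqp.le
    have hsum : (q - d i) / (q - p) + (d i - p) / (q - p) = 1 := by
      field_simp
      ring
    have hcomb : (q - d i) / (q - p) * (c * p) + (d i - p) / (q - p) * (c * q) = c * d i := by
      field_simp; ring
    have := convexOn_exp.2 (Set.mem_univ (c * p)) (Set.mem_univ (c * q)) hwa hwb hsum
    simp only [smul_eq_mul] at this
    rw [hcomb] at this
    calc exp (c * d i) ≤ (q - d i) / (q - p) * exp (c * p) + (d i - p) / (q - p) * exp (c * q) :=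
          this
      _ = ((q - d i) * exp (c * p) + (d i - p) * exp (c * q)) / (q - p) := by ring
  -- sum up
  have hsum1 : ∑ i ∈ F, exp (c * d i) ≤
      (F.card : ℝ) * (((q - m) * exp (c * p) + (m - p) * exp (c * q)) / (q - p)) := by
    calc ∑ i ∈ F, exp (c * d i)
        ≤ ∑ i ∈ F, ((q - d i) * exp (c * p) + (d i - p) * exp (c * q)) / (q - p) :=
          Finset.sum_le_sum hconv
      _ = ((∑ i ∈ F, (q - d i)) * exp (c * p) + (∑ i ∈ F, (d i - p)) * exp (c * q)) / (q - p) := by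
          rw [← Finset.sum_div, Finset.sum_add_distrib, ← Finset.sum_mul, ← Finset.sum_mul]
      _ = (F.card : ℝ) * (((q - m) * exp (c * p) + (m - p) * exp (c * q)) / (q - p)) := by
          have e1 : ∑ i ∈ F, (q - d i) = (F.card : ℝ) * (q - m) := by
            rw [Finset.sum_sub_distrib, Finset.sum_const, hmean, nsmul_eq_mul]; ring
          have e2 : ∑ i ∈ F, (d i - p) = (F.card : ℝ) * (m - p) := by
            rw [Finset.sum_sub_distrib, Finset.sum_const, hmean, nsmul_eq_mul]; ring
          rw [e1, e2]; ring
  -- scalar Hoeffding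
  have hL0 := hs_L0 hθ0 hθ1 (c * (q - p))
  have e3 : -θ * (c * (q - p)) = c * (p - m) := by
    have : -θ * (c * (q - p)) = -(c * (θ * (q - p))) := by ring
    rw [this, hθqp]; ring
  have e4 : (1 - θ) * (c * (q - p)) = c * (q - m) := by
    have : (1 - θ) * (c * (q - p)) = c * ((1 - θ) * (q - p)) := by ring
    rw [this, h1θqp]
  have e5 : (c * (q - p))^2 / 8 = c^2 * (q - p)^2 / 8 := by ring
  rw [e3, e4, e5] at hL0
  have eA : exp (c * m) * exp (c * (p - m)) = exp (c * p) := by rw [← exp_add]; congr 1; ring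
  have eB : exp (c * m) * exp (c * (q - m)) = exp (c * q) := by rw [← exp_add]; congr 1; ring
  have hkey : ((q - m) * exp (c * p) + (m - p) * exp (c * q)) / (q - p) ≤
      exp (c * m + c^2 * (q - p)^2 / 8) := by
    rw [div_le_iff₀ hqp]
    calc (q - m) * exp (c * p) + (m - p) * exp (c * q)
        = (q - p) * exp (c * m) * ((1 - θ) * exp (c * (p - m)) + θ * exp (c * (q - m))) := by
          rw [← eA, ← eB, ← hθqp, ← h1θqp]; ring
      _ ≤ (q - p) * exp (c * m) * exp (c^2 * (q - p)^2 / 8) :=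
          mul_le_mul_of_nonneg_left hL0 (by positivity)
      _ = exp (c * m + c^2 * (q - p)^2 / 8) * (q - p) := by rw [exp_add]; ring
  calc ∑ i ∈ F, exp (c * d i) ≤ _ := hsum1
    _ ≤ (F.card : ℝ) * exp (c * m + c^2 * (q - p)^2 / 8) :=
        mul_le_mul_of_nonneg_left hkey hcard.le


namespace HSAux


variable {N : ℕ}

/-- Permutations fixing all indices `≥ k`. -/
def Hg (N k : ℕ) : Finset (Equiv.Perm (Fin N)) :=
  Finset.univ.filter (fun σ => ∀ i : Fin N, k ≤ (i : ℕ) → σ i = i)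

def filt (N k : ℕ) : Finset (Fin N) := Finset.univ.filter (fun i => (i : ℕ) < k)

def S (x : Fin N → ℝ) (μ : ℝ) (k : ℕ) (e : Equiv.Perm (Fin N)) : ℝ :=
  ∑ t ∈ Finset.range k, ((if h : t < N then x (e ⟨t, h⟩) else 0) - μ)

noncomputable def Y (x : Fin N → ℝ) (μ : ℝ) (k : ℕ) (e : Equiv.Perm (Fin N)) : ℝ :=
  S x μ k e / k

lemma mem_Hg {k : ℕ} {σ : Equiv.Perm (Fin N)} :
    σ ∈ Hg N k ↔ ∀ i : Fin N, k ≤ (i : ℕ) → σ i = i := by simp [Hg]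

lemma one_mem_Hg (k : ℕ) : (1 : Equiv.Perm (Fin N)) ∈ Hg N k := mem_Hg.2 (fun i _ => rfl)

lemma Hg_card_pos (k : ℕ) : 0 < (Hg N k).card := Finset.card_pos.2 ⟨1, one_mem_Hg k⟩

lemma Hg_lt {k : ℕ} {σ : Equiv.Perm (Fin N)} (hσ : σ ∈ Hg N k) {i : Fin N}
    (hi : (i : ℕ) < k) : ((σ i : Fin N) : ℕ) < k := by
  by_contra hcon
  push_neg at hcon
  have h1 : σ (σ i) = σ i := mem_Hg.1 hσ (σ i) hcon
  have h2 : σ i = i := σ.injective h1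
  rw [h2] at hcon
  omega

lemma mul_mem_Hg {k : ℕ} {σ τ : Equiv.Perm (Fin N)} (hσ : σ ∈ Hg N k) (hτ : τ ∈ Hg N k) :
    σ * τ ∈ Hg N k := by
  refine mem_Hg.2 (fun i hi => ?_)
  rw [Equiv.Perm.mul_apply, mem_Hg.1 hτ i hi, mem_Hg.1 hσ i hi]

lemma inv_mem_Hg {k : ℕ} {σ : Equiv.Perm (Fin N)} (hσ : σ ∈ Hg N k) : σ⁻¹ ∈ Hg N k := by
  refine mem_Hg.2 (fun i hi => ?_)
  have := mem_Hg.1 hσ i hi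
  calc σ⁻¹ i = σ⁻¹ (σ i) := by rw [this]
    _ = i := Equiv.symm_apply_apply σ i

lemma swap_mem_Hg {k : ℕ} {t j : Fin N} (ht : (t : ℕ) < k) (hj : (j : ℕ) < k) :
    Equiv.swap t j ∈ Hg N k := by
  refine mem_Hg.2 (fun i hi => ?_)
  apply Equiv.swap_apply_of_ne_of_ne
  · rintro rfl; omega
  · rintro rfl; omega

lemma mem_filt {k : ℕ} {i : Fin N} : i ∈ filt N k ↔ (i : ℕ) < k := by simp [filt]

lemma card_filt {k : ℕ} (hk : k ≤ N) : (filt N k).card = k := by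
  have h : ∀ m ∈ Finset.range k, m < N := fun m hm => lt_of_lt_of_le (Finset.mem_range.1 hm) hk
  have : filt N k = (Finset.range k).attachFin h := by
    ext i
    simp [mem_filt, Finset.mem_attachFin, Finset.mem_range]
  rw [this, Finset.card_attachFin, Finset.card_range]

lemma sum_filt_comp {k j : ℕ} {σ : Equiv.Perm (Fin N)} (hkj : k ≤ j) (hσ : σ ∈ Hg N k)
    (g : Fin N → ℝ) : ∑ i ∈ filt N j, g (σ i) = ∑ i ∈ filt N j, g i := by
  apply Equiv.Perm.sum_comp
  intro i hi
  simp only [Set.mem_setOf_eq] at hi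
  rw [Finset.mem_coe, mem_filt]
  by_contra hcon
  push_neg at hcon
  exact hi (mem_Hg.1 hσ i (le_trans hkj hcon))

lemma S_eq_sum_filt {x : Fin N → ℝ} {μ : ℝ} {k : ℕ} (hk : k ≤ N) (e : Equiv.Perm (Fin N)) :
    S x μ k e = ∑ i ∈ filt N k, (x (e i) - μ) := by
  rw [S]
  refine Finset.sum_bij' (fun t ht => (⟨t, lt_of_lt_of_le (Finset.mem_range.1 ht) hk⟩ : Fin N))
    (fun i _ => (i : ℕ)) ?_ ?_ ?_ ?_ ?_
  · intro t ht; exact mem_filt.2 (Finset.mem_range.1 ht)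
  · intro i hi; exact Finset.mem_range.2 (mem_filt.1 hi)
  · intro t ht; rfl
  · intro i hi; rfl
  · intro t ht
    rw [dif_pos (lt_of_lt_of_le (Finset.mem_range.1 ht) hk)]

lemma S_comp {x : Fin N → ℝ} {μ : ℝ} {k j : ℕ} {σ : Equiv.Perm (Fin N)} (hσ : σ ∈ Hg N k)
    (hkj : k ≤ j) (hj : j ≤ N) (e : Equiv.Perm (Fin N)) : S x μ j (e * σ) = S x μ j e := by
  rw [S_eq_sum_filt hj, S_eq_sum_filt hj]
  simp only [Equiv.Perm.mul_apply]
  exact sum_filt_comp hkj hσ (fun i => x (e i) - μ)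

lemma Y_comp {x : Fin N → ℝ} {μ : ℝ} {k j : ℕ} {σ : Equiv.Perm (Fin N)} (hσ : σ ∈ Hg N k)
    (hkj : k ≤ j) (hj : j ≤ N) (e : Equiv.Perm (Fin N)) : Y x μ j (e * σ) = Y x μ j e := by
  rw [Y, Y, S_comp hσ hkj hj]

/-- Counting lemma: position `t < k` is "uniform" over `filt N k` under `Hg N k`. -/
lemma sum_Hg_apply {k : ℕ} (hkN : k ≤ N) {t : Fin N} (ht : (t : ℕ) < k) (g : Fin N → ℝ) :
    (k : ℝ) * ∑ σ ∈ Hg N k, g (σ t) = (Hg N k).card * ∑ i ∈ filt N k, g i := by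
  have step1 : ∀ j ∈ filt N k, ∑ σ ∈ Hg N k, g (σ j) = ∑ σ ∈ Hg N k, g (σ t) := by
    intro j hj
    have hjk := mem_filt.1 hj
    have hswap : Equiv.swap t j ∈ Hg N k := swap_mem_Hg ht hjk
    refine Finset.sum_nbij' (fun σ => σ * Equiv.swap t j) (fun σ => σ * Equiv.swap t j)
      ?_ ?_ ?_ ?_ ?_
    · intro σ hσ; exact mul_mem_Hg hσ hswap
    · intro σ hσ; exact mul_mem_Hg hσ hswap
    · intro σ _; rw [mul_assoc, Equiv.swap_mul_self, mul_one]
    · intro σ _; rw [mul_assoc, Equiv.swap_mul_self, mul_one]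
    · intro σ _
      rw [Equiv.Perm.mul_apply, Equiv.swap_apply_left]
  calc (k : ℝ) * ∑ σ ∈ Hg N k, g (σ t)
      = ∑ j ∈ filt N k, ∑ σ ∈ Hg N k, g (σ j) := by
        rw [Finset.sum_congr rfl step1, Finset.sum_const, card_filt hkN, nsmul_eq_mul]
    _ = ∑ σ ∈ Hg N k, ∑ j ∈ filt N k, g (σ j) := Finset.sum_comm
    _ = ∑ σ ∈ Hg N k, ∑ i ∈ filt N k, g i :=
        Finset.sum_congr rfl (fun σ hσ => sum_filt_comp le_rfl hσ g)
    _ = (Hg N k).card * ∑ i ∈ filt N k, g i := by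
        rw [Finset.sum_const, nsmul_eq_mul]

/-- Coset averaging. -/
lemma sum_mul_right (σ : Equiv.Perm (Fin N)) (f : Equiv.Perm (Fin N) → ℝ) :
    ∑ e : Equiv.Perm (Fin N), f (e * σ) = ∑ e : Equiv.Perm (Fin N), f e :=
  Fintype.sum_equiv (Equiv.mulRight σ) _ _ (fun e => rfl)


lemma S_def (x : Fin N → ℝ) (μ : ℝ) (k : ℕ) (e : Equiv.Perm (Fin N)) :
    S x μ k e = ∑ t ∈ Finset.range k, ((if h : t < N then x (e ⟨t, h⟩) else 0) - μ) := rfl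

/-- Reverse martingale property. -/
lemma sum_Hg_Y {x : Fin N → ℝ} {μ : ℝ} {n' k : ℕ} (hn1 : 1 ≤ n') (hnk : n' ≤ k) (hkN : k ≤ N)
    (e : Equiv.Perm (Fin N)) :
    ∑ σ ∈ Hg N k, Y x μ n' (e * σ) = (Hg N k).card * Y x μ k e := by
  have hk0 : (0:ℝ) < k := by exact_mod_cast lt_of_lt_of_le hn1 hnk
  have hn0 : (0:ℝ) < n' := by exact_mod_cast hn1
  have hS : (k : ℝ) * ∑ σ ∈ Hg N k, S x μ n' (e * σ)
      = (n' : ℝ) * ((Hg N k).card * S x μ k e) := by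
    have conv : ∀ σ ∈ Hg N k, S x μ n' (e * σ) = ∑ i ∈ filt N n', (x (e (σ i)) - μ) := by
      intro σ _
      rw [S_eq_sum_filt (le_trans hnk hkN)]
      simp only [Equiv.Perm.mul_apply]
    rw [Finset.sum_congr rfl conv, Finset.sum_comm, Finset.mul_sum]
    have key : ∀ i ∈ filt N n',
        (k : ℝ) * ∑ σ ∈ Hg N k, (x (e (σ i)) - μ) = (Hg N k).card * S x μ k e := by
      intro i hi
      rw [sum_Hg_apply hkN (lt_of_lt_of_le (mem_filt.1 hi) hnk) (fun w => x (e w) - μ),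
        ← S_eq_sum_filt hkN]
    rw [Finset.sum_congr rfl key, Finset.sum_const, card_filt (le_trans hnk hkN), nsmul_eq_mul]
  simp only [Y]
  rw [← Finset.sum_div, ← mul_div_assoc, div_eq_div_iff hn0.ne' hk0.ne']
  nlinarith [hS]

/-- Conditional Jensen. -/
lemma sum_Hg_exp_ge {x : Fin N → ℝ} {μ : ℝ} (l : ℝ) {n' k : ℕ} (hn1 : 1 ≤ n') (hnk : n' ≤ k)
    (hkN : k ≤ N) (e : Equiv.Perm (Fin N)) :
    ((Hg N k).card : ℝ) * exp (l * Y x μ k e) ≤ ∑ σ ∈ Hg N k, exp (l * Y x μ n' (e * σ)) := by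
  set c : ℝ := ((Hg N k).card : ℝ) with hc
  have hc0 : 0 < c := by rw [hc]; exact_mod_cast Hg_card_pos (N := N) k
  have hw : ∑ _σ ∈ Hg N k, c⁻¹ = 1 := by
    rw [Finset.sum_const, nsmul_eq_mul, mul_inv_cancel₀ hc0.ne']
  have hJ := convexOn_exp.map_sum_le (t := Hg N k) (w := fun _ => c⁻¹)
    (p := fun σ => l * Y x μ n' (e * σ)) (fun σ _ => by positivity) hw
    (fun σ _ => Set.mem_univ _)
  simp only [smul_eq_mul] at hJ
  have harg : ∑ σ ∈ Hg N k, c⁻¹ * (l * Y x μ n' (e * σ)) = l * Y x μ k e := by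
    rw [← Finset.mul_sum, ← Finset.mul_sum, sum_Hg_Y hn1 hnk hkN e, ← hc]
    field_simp
  rw [harg, ← Finset.mul_sum] at hJ
  calc c * exp (l * Y x μ k e) ≤ c * (c⁻¹ * ∑ σ ∈ Hg N k, exp (l * Y x μ n' (e * σ))) :=
        mul_le_mul_of_nonneg_left hJ hc0.le
    _ = ∑ σ ∈ Hg N k, exp (l * Y x μ n' (e * σ)) := by field_simp


variable {x : Fin N → ℝ} {μ a b : ℝ}

/-- One-step conditional Hoeffding bound (pointwise over a coset). -/
lemma coset_step (hax : ∀ i, a ≤ x i) (hxb : ∀ i, x i ≤ b) {k : ℕ} (hk1 : 1 ≤ k)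
    (hkN : k + 1 ≤ N) (l : ℝ) (e : Equiv.Perm (Fin N)) :
    ∑ σ ∈ Hg N (k+1), exp (l * Y x μ k (e * σ)) ≤
      ((Hg N (k+1)).card : ℝ) * exp (l * Y x μ (k+1) e + l^2 * (b - a)^2 / (8 * (k:ℝ)^2)) := by
  have hkN' : k < N := hkN
  have hk0 : (0:ℝ) < k := by exact_mod_cast hk1
  set T : ℝ := S x μ (k+1) e with hT
  set tk : Fin N := ⟨k, hkN'⟩ with htk
  have hd_eq : ∀ σ ∈ Hg N (k+1), Y x μ k (e * σ) = (T - (x (e (σ tk)) - μ)) / k := by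
    intro σ hσ
    have h1 : S x μ (k+1) (e * σ) = S x μ k (e * σ) +
        ((if h : k < N then x ((e * σ) ⟨k, h⟩) else 0) - μ) := by
      rw [S_def, S_def, Finset.sum_range_succ]
    rw [dif_pos hkN', S_comp hσ le_rfl hkN] at h1
    have h2 : S x μ k (e * σ) = T - (x (e (σ tk)) - μ) := by
      rw [hT]
      simp only [Equiv.Perm.mul_apply] at h1
      rw [h1, htk]
      ring
    rw [Y, h2]
  set p : ℝ := (T - (b - μ)) / k with hp
  set q : ℝ := (T - (a - μ)) / k with hq
  have hpq : p ≤ q := by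
    rw [hp, hq]
    gcongr
    · have hab : a ≤ b := le_trans (hax ⟨0, by omega⟩) (hxb ⟨0, by omega⟩)
      linarith
  have hd : ∀ σ ∈ Hg N (k+1), Y x μ k (e * σ) ∈ Set.Icc p q := by
    intro σ hσ
    rw [hd_eq σ hσ]
    constructor
    · rw [hp]; gcongr; linarith [hxb (e (σ tk))]
    · rw [hq]; gcongr; linarith [hax (e (σ tk))]
  have hmean : ∑ σ ∈ Hg N (k+1), Y x μ k (e * σ)
      = ((Hg N (k+1)).card : ℝ) * Y x μ (k+1) e :=
    sum_Hg_Y hk1 (Nat.le_succ k) hkN e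
  have hL1 := hs_L1 (Hg N (k+1)) ⟨1, one_mem_Hg (k+1)⟩ (fun σ => Y x μ k (e * σ))
    p q (Y x μ (k+1) e) l hpq hd hmean
  have hqp : q - p = (b - a) / k := by
    rw [hq, hp, div_sub_div_same]
    congr 1
    ring
  have hpow : l^2 * (q - p)^2 / 8 = l^2 * (b - a)^2 / (8 * (k:ℝ)^2) := by
    rw [hqp, div_pow]
    ring
  rw [hpow] at hL1
  exact hL1

/-- One-step bound, global version. -/
lemma global_step (hax : ∀ i, a ≤ x i) (hxb : ∀ i, x i ≤ b) {k : ℕ} (hk1 : 1 ≤ k)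
    (hkN : k + 1 ≤ N) (l : ℝ) :
    ∑ e : Equiv.Perm (Fin N), exp (l * Y x μ k e) ≤
      exp (l^2 * (b - a)^2 / (8 * (k:ℝ)^2)) *
        ∑ e : Equiv.Perm (Fin N), exp (l * Y x μ (k+1) e) := by
  set c : ℝ := ((Hg N (k+1)).card : ℝ) with hc
  have hc0 : 0 < c := by rw [hc]; exact_mod_cast Hg_card_pos (N := N) (k+1)
  have key : c * ∑ e : Equiv.Perm (Fin N), exp (l * Y x μ k e) ≤
      c * (exp (l^2 * (b - a)^2 / (8 * (k:ℝ)^2)) *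
        ∑ e : Equiv.Perm (Fin N), exp (l * Y x μ (k+1) e)) := by
    calc c * ∑ e : Equiv.Perm (Fin N), exp (l * Y x μ k e)
        = ∑ σ ∈ Hg N (k+1), ∑ e : Equiv.Perm (Fin N), exp (l * Y x μ k (e * σ)) := by
          rw [Finset.sum_congr rfl (fun σ _ => sum_mul_right σ (fun e => exp (l * Y x μ k e))),
            Finset.sum_const, nsmul_eq_mul, hc]
      _ = ∑ e : Equiv.Perm (Fin N), ∑ σ ∈ Hg N (k+1), exp (l * Y x μ k (e * σ)) :=
          Finset.sum_comm
      _ ≤ ∑ e : Equiv.Perm (Fin N),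
            c * exp (l * Y x μ (k+1) e + l^2 * (b - a)^2 / (8 * (k:ℝ)^2)) :=
          Finset.sum_le_sum (fun e _ => coset_step hax hxb hk1 hkN l e)
      _ = c * (exp (l^2 * (b - a)^2 / (8 * (k:ℝ)^2)) *
            ∑ e : Equiv.Perm (Fin N), exp (l * Y x μ (k+1) e)) := by
          rw [Finset.mul_sum, Finset.mul_sum]
          exact Finset.sum_congr rfl (fun e _ => by rw [exp_add]; ring)
  exact le_of_mul_le_mul_left key hc0

lemma S_N_zero (hN : 0 < N) (hμ : μ = (∑ i, x i) / N) (e : Equiv.Perm (Fin N)) :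
    S x μ N e = 0 := by
  rw [S_eq_sum_filt le_rfl]
  have hfilt : filt N N = Finset.univ := by
    ext i
    simp [mem_filt, i.isLt]
  rw [hfilt, Finset.sum_sub_distrib, Finset.sum_const, Finset.card_univ, Fintype.card_fin,
    Equiv.sum_comp e x, hμ]
  have hN0 : (N:ℝ) ≠ 0 := by exact_mod_cast hN.ne'
  field_simp
  have hNs : (N:ℝ) * ((∑ i, x i) / N) = ∑ i, x i := by field_simp
  rw [nsmul_eq_mul, hNs, sub_self]

lemma chain (hax : ∀ i, a ≤ x i) (hxb : ∀ i, x i ≤ b) (hμ : μ = (∑ i, x i) / N)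
    {n' : ℕ} (hn1 : 1 ≤ n') (hn'N : n' ≤ N) (l : ℝ) :
    ∀ m : ℕ, m ≤ N - n' →
      ∑ e : Equiv.Perm (Fin N), exp (l * Y x μ (N - m) e) ≤
        (N.factorial : ℝ) * exp (l^2 * (b - a)^2 / 8 *
          ∑ j ∈ Finset.Icc (N - m) (N - 1), (1:ℝ) / (j:ℝ)^2) := by
  have hNpos : 0 < N := lt_of_lt_of_le hn1 hn'N
  intro m
  induction m with
  | zero =>
    intro _
    have hY : ∀ e : Equiv.Perm (Fin N), Y x μ (N - 0) e = 0 := by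
      intro e
      simp only [Nat.sub_zero, Y, S_N_zero hNpos hμ e, zero_div]
    have hIcc : Finset.Icc (N - 0) (N - 1) = ∅ := by
      apply Finset.Icc_eq_empty
      omega
    simp only [hY, hIcc, Finset.sum_empty, mul_zero, exp_zero, mul_one]
    rw [Finset.sum_const, Finset.card_univ]
    simp [Fintype.card_perm, Fintype.card_fin]
  | succ m ih =>
    intro hm
    set k : ℕ := N - (m + 1) with hk
    have hksucc : k + 1 = N - m := by omega
    have hk1 : 1 ≤ k := by omega
    have hkN : k + 1 ≤ N := by omega
    have hkN1 : k ≤ N - 1 := by omega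
    have step := global_step (μ := μ) hax hxb hk1 hkN l
    rw [hksucc] at step
    have ih' := ih (by omega)
    have hIcc : ∑ j ∈ Finset.Icc k (N - 1), (1:ℝ) / (j:ℝ)^2
        = 1 / (k:ℝ)^2 + ∑ j ∈ Finset.Icc (N - m) (N - 1), (1:ℝ) / (j:ℝ)^2 := by
      rw [← hksucc, Finset.Icc_add_one_left_eq_Ioc]
      rw [← Finset.Ioc_insert_left hkN1, Finset.sum_insert (by simp)]
    calc ∑ e : Equiv.Perm (Fin N), exp (l * Y x μ k e)
        ≤ exp (l^2 * (b - a)^2 / (8 * (k:ℝ)^2)) *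
            ∑ e : Equiv.Perm (Fin N), exp (l * Y x μ (N - m) e) := step
      _ ≤ exp (l^2 * (b - a)^2 / (8 * (k:ℝ)^2)) * ((N.factorial : ℝ) *
            exp (l^2 * (b - a)^2 / 8 * ∑ j ∈ Finset.Icc (N - m) (N - 1), (1:ℝ) / (j:ℝ)^2)) :=
          mul_le_mul_of_nonneg_left ih' (exp_pos _).le
      _ = (N.factorial : ℝ) * exp (l^2 * (b - a)^2 / 8 *
            ∑ j ∈ Finset.Icc k (N - 1), (1:ℝ) / (j:ℝ)^2) := by
          rw [hIcc, mul_add, exp_add]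
          have hk0 : (k:ℝ) ≠ 0 := by
            have : (0:ℝ) < k := by exact_mod_cast hk1
            exact this.ne'
          have : l^2 * (b - a)^2 / 8 * (1 / (k:ℝ)^2) = l^2 * (b - a)^2 / (8 * (k:ℝ)^2) := by
            field_simp
          rw [this]
          ring

lemma chain_final (hax : ∀ i, a ≤ x i) (hxb : ∀ i, x i ≤ b) (hμ : μ = (∑ i, x i) / N)
    {n' : ℕ} (hn1 : 1 ≤ n') (hn'N : n' ≤ N) (l : ℝ) :
    ∑ e : Equiv.Perm (Fin N), exp (l * Y x μ n' e) ≤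
      (N.factorial : ℝ) * exp (l^2 * (b - a)^2 / 8 *
        ∑ j ∈ Finset.Icc n' (N - 1), (1:ℝ) / (j:ℝ)^2) := by
  have h := chain hax hxb hμ hn1 hn'N l (N - n') le_rfl
  have : N - (N - n') = n' := by omega
  rwa [this] at h

lemma stopping {n' : ℕ} (hn1 : 1 ≤ n') (hnN : n' ≤ N - 1) (hN1 : 1 ≤ N)
    {ε l : ℝ} (hl : 0 ≤ l) (A : Finset (Equiv.Perm (Fin N)))
    (hA : ∀ e, e ∈ A ↔ ∃ k ∈ Finset.Icc n' (N - 1), ε ≤ Y x μ k e) :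
    (A.card : ℝ) * exp (l * ε) ≤ ∑ e : Equiv.Perm (Fin N), exp (l * Y x μ n' e) := by
  classical
  set I : Finset ℕ := Finset.Icc n' (N - 1) with hI
  set B : ℕ → Finset (Equiv.Perm (Fin N)) := fun k =>
    Finset.univ.filter (fun e => ε ≤ Y x μ k e ∧ ∀ j ∈ I, k < j → Y x μ j e < ε) with hB
  have hmemB : ∀ k e, e ∈ B k ↔ (ε ≤ Y x μ k e ∧ ∀ j ∈ I, k < j → Y x μ j e < ε) := by
    intro k e
    simp [hB]
  -- A is the disjoint union of the B k
  have hAB : A = I.biUnion B := by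
    ext e
    rw [Finset.mem_biUnion, hA]
    constructor
    · rintro ⟨k, hk, hY⟩
      have hFne : (I.filter (fun j => ε ≤ Y x μ j e)).Nonempty :=
        ⟨k, Finset.mem_filter.2 ⟨hk, hY⟩⟩
      obtain ⟨hM1, hM2⟩ :=
        Finset.mem_filter.1 ((I.filter (fun j => ε ≤ Y x μ j e)).max'_mem hFne)
      refine ⟨_, hM1, (hmemB _ e).2 ⟨hM2, ?_⟩⟩
      intro j hj hMj
      by_contra hcon
      push_neg at hcon
      have hjF : j ∈ I.filter (fun j => ε ≤ Y x μ j e) := Finset.mem_filter.2 ⟨hj, hcon⟩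
      have := Finset.le_max' _ j hjF
      omega
    · rintro ⟨k, hk, hBk⟩
      exact ⟨k, hk, ((hmemB k e).1 hBk).1⟩
  have hdisj : (I : Set ℕ).PairwiseDisjoint B := by
    intro k hk k' hk' hne
    have key : ∀ j j' : ℕ, j < j' → j' ∈ I → Disjoint (B j) (B j') := by
      intro j j' hjj' hj'
      rw [Finset.disjoint_left]
      intro e hej hej'
      have h1 := ((hmemB j e).1 hej).2 j' hj' hjj'
      have h2 := ((hmemB j' e).1 hej').1
      linarith
    rcases lt_or_gt_of_ne hne with h | h
    · exact key k k' h (by exact_mod_cast hk')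
    · exact (key k' k h (by exact_mod_cast hk)).symm
  -- per-k bound
  have hperk : ∀ k ∈ I, ((B k).card : ℝ) * exp (l * ε) ≤
      ∑ e ∈ B k, exp (l * Y x μ n' e) := by
    intro k hkI
    rw [hI, Finset.mem_Icc] at hkI
    have hkN : k ≤ N := by omega
    have hn'k : n' ≤ k := hkI.1
    set c : ℝ := ((Hg N k).card : ℝ) with hc
    have hc0 : 0 < c := by rw [hc]; exact_mod_cast Hg_card_pos (N := N) k
    have hinv : ∀ σ ∈ Hg N k, ∀ e, e ∈ B k ↔ e * σ ∈ B k := by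
      intro σ hσ e
      rw [hmemB, hmemB]
      constructor
      · rintro ⟨h1, h2⟩
        refine ⟨by rwa [Y_comp hσ le_rfl hkN], fun j hj hkj => ?_⟩
        have hjN : j ≤ N := by rw [hI, Finset.mem_Icc] at hj; omega
        rw [Y_comp hσ hkj.le hjN]
        exact h2 j hj hkj
      · rintro ⟨h1, h2⟩
        refine ⟨by rwa [Y_comp hσ le_rfl hkN] at h1, fun j hj hkj => ?_⟩
        have hjN : j ≤ N := by rw [hI, Finset.mem_Icc] at hj; omega
        rw [← Y_comp hσ hkj.le hjN e]
        exact h2 j hj hkj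
    have reindex : ∀ σ ∈ Hg N k,
        ∑ e ∈ B k, exp (l * Y x μ n' (e * σ)) = ∑ e ∈ B k, exp (l * Y x μ n' e) := by
      intro σ hσ
      refine Finset.sum_nbij' (fun e => e * σ) (fun e => e * σ⁻¹) ?_ ?_ ?_ ?_ ?_
      · intro e he; exact (hinv σ hσ e).1 he
      · intro e he
        exact (hinv σ⁻¹ (inv_mem_Hg hσ) e).1 he
      · intro e _; rw [mul_assoc, mul_inv_cancel, mul_one]
      · intro e _; rw [mul_assoc, inv_mul_cancel, mul_one]
      · intro e _; rfl
    have key : c * (((B k).card : ℝ) * exp (l * ε)) ≤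
        c * ∑ e ∈ B k, exp (l * Y x μ n' e) := by
      calc c * (((B k).card : ℝ) * exp (l * ε))
          = ∑ e ∈ B k, c * exp (l * ε) := by
            rw [Finset.sum_const, nsmul_eq_mul]; ring
        _ ≤ ∑ e ∈ B k, c * exp (l * Y x μ k e) := by
            apply Finset.sum_le_sum
            intro e he
            have hY := ((hmemB k e).1 he).1
            have : l * ε ≤ l * Y x μ k e := mul_le_mul_of_nonneg_left hY hl
            exact mul_le_mul_of_nonneg_left (exp_le_exp.2 this) hc0.le
        _ ≤ ∑ e ∈ B k, ∑ σ ∈ Hg N k, exp (l * Y x μ n' (e * σ)) :=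
            Finset.sum_le_sum (fun e _ => sum_Hg_exp_ge l hn1 hn'k hkN e)
        _ = ∑ σ ∈ Hg N k, ∑ e ∈ B k, exp (l * Y x μ n' (e * σ)) := Finset.sum_comm
        _ = ∑ σ ∈ Hg N k, ∑ e ∈ B k, exp (l * Y x μ n' e) :=
            Finset.sum_congr rfl reindex
        _ = c * ∑ e ∈ B k, exp (l * Y x μ n' e) := by
            rw [Finset.sum_const, nsmul_eq_mul, hc]
    exact le_of_mul_le_mul_left key hc0
  -- assemble
  have hcard : (A.card : ℝ) = ∑ k ∈ I, ((B k).card : ℝ) := by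
    rw [hAB, Finset.card_biUnion hdisj]
    push_cast
    rfl
  calc (A.card : ℝ) * exp (l * ε) = ∑ k ∈ I, ((B k).card : ℝ) * exp (l * ε) := by
        rw [hcard, Finset.sum_mul]
    _ ≤ ∑ k ∈ I, ∑ e ∈ B k, exp (l * Y x μ n' e) := Finset.sum_le_sum hperk
    _ = ∑ e ∈ A, exp (l * Y x μ n' e) := by rw [hAB, Finset.sum_biUnion hdisj]
    _ ≤ ∑ e : Equiv.Perm (Fin N), exp (l * Y x μ n' e) :=
        Finset.sum_le_sum_of_subset_of_nonneg (Finset.subset_univ A)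
          (fun e _ _ => (exp_pos _).le)

lemma sum_inv_sq_le {n' : ℕ} (hn1 : 1 ≤ n') (hnN : n' < N) :
    ∑ j ∈ Finset.Icc n' (N - 1), (1:ℝ) / (j:ℝ)^2 ≤
      (1 - (n':ℝ)/(N:ℝ)) * (1 + 1/(n':ℝ)) / (n':ℝ) := by
  have hn'0 : (0:ℝ) < (n':ℝ) := by exact_mod_cast hn1
  have hN0 : (0:ℝ) < (N:ℝ) := by exact_mod_cast (by omega : 0 < N)
  have hIco : Finset.Icc n' (N - 1) = Finset.Ico n' N := by
    rw [← Finset.Ico_add_one_right_eq_Icc]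
    congr 1
    omega
  have htel : ∑ j ∈ Finset.Icc n' (N - 1), ((1:ℝ)/(j:ℝ) - 1/((j:ℝ)+1))
      = 1/(n':ℝ) - 1/(N:ℝ) := by
    rw [hIco]
    have h1 : ∀ m : ℕ, ∑ j ∈ Finset.range m, ((1:ℝ)/(j:ℝ) - 1/((j:ℝ)+1))
        = (1:ℝ)/((0:ℕ):ℝ) - 1/(m:ℝ) := by
      intro m
      have := Finset.sum_range_sub' (f := fun j : ℕ => (1:ℝ)/(j:ℝ)) (n := m)
      simpa using this
    rw [Finset.sum_Ico_eq_sub _ (le_of_lt hnN), h1, h1]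
    simp
    ring
  have hterm : ∀ j ∈ Finset.Icc n' (N - 1),
      (1:ℝ)/(j:ℝ)^2 ≤ (1 + 1/(n':ℝ)) * ((1:ℝ)/(j:ℝ) - 1/((j:ℝ)+1)) := by
    intro j hj
    rw [Finset.mem_Icc] at hj
    have hj1 : (1:ℝ) ≤ (j:ℝ) := by exact_mod_cast le_trans hn1 hj.1
    have hnj : (n':ℝ) ≤ (j:ℝ) := by exact_mod_cast hj.1
    have hj0 : (0:ℝ) < (j:ℝ) := by linarith
    have h3 : (1 + 1/(n':ℝ)) * ((1:ℝ)/(j:ℝ) - 1/((j:ℝ)+1)) - 1/(j:ℝ)^2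
        = ((j:ℝ) - (n':ℝ)) / ((n':ℝ) * (j:ℝ)^2 * ((j:ℝ)+1)) := by
      field_simp
      ring
    have h2 : 0 ≤ ((j:ℝ) - (n':ℝ)) / ((n':ℝ) * (j:ℝ)^2 * ((j:ℝ)+1)) := by
      apply div_nonneg (by linarith)
      positivity
    linarith
  calc ∑ j ∈ Finset.Icc n' (N - 1), (1:ℝ) / (j:ℝ)^2
      ≤ ∑ j ∈ Finset.Icc n' (N - 1), (1 + 1/(n':ℝ)) * ((1:ℝ)/(j:ℝ) - 1/((j:ℝ)+1)) :=
        Finset.sum_le_sum hterm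
    _ = (1 + 1/(n':ℝ)) * (1/(n':ℝ) - 1/(N:ℝ)) := by rw [← Finset.mul_sum, htel]
    _ = (1 - (n':ℝ)/(N:ℝ)) * (1 + 1/(n':ℝ)) / (n':ℝ) := by
        field_simp

lemma card_bound {n : ℕ} (hN : 1 < N) (hn1 : 1 ≤ n) (hn : n < N)
    (hax : ∀ i, a ≤ x i) (hxb : ∀ i, x i ≤ b) (hμ : μ = (∑ i, x i) / N)
    {ε : ℝ} (hε : 0 < ε) (A : Finset (Equiv.Perm (Fin N)))
    (hA : ∀ e, e ∈ A ↔ ∃ k ∈ Finset.Icc n (N - 1), ε ≤ Y x μ k e) :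
    (A.card : ℝ) ≤ (N.factorial : ℝ) *
      exp (-(2 * n * ε^2) / ((1 - (n:ℝ)/(N:ℝ)) * (1 + 1/(n:ℝ)) * (b - a)^2)) := by
  have hab : a ≤ b := le_trans (hax ⟨0, by omega⟩) (hxb ⟨0, by omega⟩)
  have hn'0 : (0:ℝ) < (n:ℝ) := by exact_mod_cast hn1
  have hN0 : (0:ℝ) < (N:ℝ) := by exact_mod_cast (by omega : 0 < N)
  rcases eq_or_lt_of_le hab with heq | hlt
  · -- degenerate case a = b
    have hx : ∀ i, x i = a := fun i => le_antisymm (heq ▸ hxb i) (hax i)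
    have hμa : μ = a := by
      rw [hμ]
      have : ∑ i, x i = (N:ℝ) * a := by
        rw [Finset.sum_congr rfl (fun i _ => hx i), Finset.sum_const, Finset.card_univ,
          Fintype.card_fin, nsmul_eq_mul]
      rw [this]
      field_simp
    have hAempty : A = ∅ := by
      rw [Finset.eq_empty_iff_forall_notMem]
      intro e he
      obtain ⟨k, hk, hY⟩ := (hA e).1 he
      rw [Finset.mem_Icc] at hk
      have hkN : k ≤ N := by omega
      have : Y x μ k e = 0 := by
        rw [Y, S_eq_sum_filt hkN]
        have : ∀ i ∈ filt N k, x (e i) - μ = 0 := fun i _ => by rw [hx, hμa]; ring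
        rw [Finset.sum_congr rfl this, Finset.sum_const, smul_zero, zero_div]
      rw [this] at hY
      linarith
    rw [hAempty]
    simp only [Finset.card_empty, Nat.cast_zero]
    positivity
  -- main case a < b
  set c : ℝ := ∑ j ∈ Finset.Icc n (N - 1), (1:ℝ) / (j:ℝ)^2 with hc
  have hIne : (Finset.Icc n (N - 1)).Nonempty := Finset.nonempty_Icc.2 (by omega)
  have hc0 : 0 < c := by
    rw [hc]
    apply Finset.sum_pos _ hIne
    intro j hj
    rw [Finset.mem_Icc] at hj
    have : (0:ℝ) < (j:ℝ) := by exact_mod_cast (by omega : 0 < j)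
    positivity
  have hba : (0:ℝ) < b - a := sub_pos.2 hlt
  set l : ℝ := 4 * ε / ((b - a)^2 * c) with hl
  have hl0 : 0 < l := by rw [hl]; positivity
  have h1 := stopping (x := x) (μ := μ) hn1 (by omega) (by omega) hl0.le A hA
  have h2 := chain_final (a := a) (b := b) hax hxb hμ hn1 (le_of_lt hn) l
  rw [← hc] at h2
  have h3 : (A.card : ℝ) * exp (l * ε) ≤
      (N.factorial : ℝ) * exp (l^2 * (b - a)^2 / 8 * c) := le_trans h1 h2
  have h4 : (A.card : ℝ) ≤ (N.factorial : ℝ) * exp (l^2 * (b - a)^2 / 8 * c - l * ε) := by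
    have hrw : (N.factorial : ℝ) * exp (l^2 * (b - a)^2 / 8 * c - l * ε)
        = (N.factorial : ℝ) * exp (l^2 * (b - a)^2 / 8 * c) / exp (l * ε) := by
      rw [exp_sub]; ring
    rw [hrw, le_div_iff₀ (exp_pos (l * ε))]
    exact h3
  have hexp_eq : l^2 * (b - a)^2 / 8 * c - l * ε = -(2 * ε^2) / ((b - a)^2 * c) := by
    rw [hl]
    field_simp
    try ring
  rw [hexp_eq] at h4
  -- compare exponents
  have hR0 : 0 < (1 - (n:ℝ)/(N:ℝ)) * (1 + 1/(n:ℝ)) := by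
    apply mul_pos
    · rw [sub_pos, div_lt_one hN0]
      exact_mod_cast hn
    · positivity
  have hcR := sum_inv_sq_le (N := N) hn1 hn
  rw [← hc] at hcR
  have hden : (b - a)^2 * c ≤ (b - a)^2 * ((1 - (n:ℝ)/(N:ℝ)) * (1 + 1/(n:ℝ)) / (n:ℝ)) :=
    mul_le_mul_of_nonneg_left hcR (sq_nonneg _)
  have hstep : 2 * ε^2 / ((b - a)^2 * ((1 - (n:ℝ)/(N:ℝ)) * (1 + 1/(n:ℝ)) / (n:ℝ)))
      ≤ 2 * ε^2 / ((b - a)^2 * c) := by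
    gcongr <;> first | positivity | exact hden
  have heq2 : 2 * ε^2 / ((b - a)^2 * ((1 - (n:ℝ)/(N:ℝ)) * (1 + 1/(n:ℝ)) / (n:ℝ)))
      = 2 * n * ε^2 / ((1 - (n:ℝ)/(N:ℝ)) * (1 + 1/(n:ℝ)) * (b - a)^2) := by
    rw [div_eq_div_iff (by positivity) (by positivity)]
    field_simp
    try ring
  rw [heq2] at hstep
  have hmono : -(2 * ε^2) / ((b - a)^2 * c) ≤
      -(2 * n * ε^2) / ((1 - (n:ℝ)/(N:ℝ)) * (1 + 1/(n:ℝ)) * (b - a)^2) := by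
    rw [neg_div, neg_div, neg_le_neg_iff]
    exact hstep
  calc (A.card : ℝ) ≤ (N.factorial : ℝ) * exp (-(2 * ε^2) / ((b - a)^2 * c)) := h4
    _ ≤ (N.factorial : ℝ) *
        exp (-(2 * n * ε^2) / ((1 - (n:ℝ)/(N:ℝ)) * (1 + 1/(n:ℝ)) * (b - a)^2)) := by
        apply mul_le_mul_of_nonneg_left (exp_le_exp.2 hmono)
        positivity

end HSAux

end HSproofs

/-- Hoeffding–Serfling inequality, first part (Theorem 1 of Bardenet–Maillard). -/
theorem hoeffding_serfling_first
    {Ω : Type*} [MeasurableSpace Ω] (P : Measure Ω) [IsProbabilityMeasure P]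
    (N n : ℕ) (hN : 1 < N) (hn1 : 1 ≤ n) (hn : n < N) (x : Fin N → ℝ)
    (X : ℕ → Ω → ℝ) (hXm : ∀ i, Measurable (X i))
    (hX : samplesWithoutReplacement P N x X)
    (a b : ℝ) (ha : IsLeast (Set.range x) a) (hb : IsGreatest (Set.range x) b)
    (μ : ℝ) (hμ : μ = (∑ i, x i) / N)
    (ε : ℝ) (hε : 0 < ε) :
    P {ω | (Finset.Icc n (N - 1)).sup' (Finset.nonempty_Icc.2 (by omega))
          (fun k => (∑ t ∈ Finset.range k, (X t ω - μ)) / (k : ℝ)) ≥ ε} ≤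
      ENNReal.ofReal (Real.exp (-(2 * n * ε ^ 2) /
        ((1 - (n : ℝ) / N) * (1 + 1 / (n : ℝ)) * (b - a) ^ 2))) := by
  classical
  have hne : (Finset.Icc n (N - 1)).Nonempty := Finset.nonempty_Icc.2 (by omega)
  set V : Ω → (Fin N → ℝ) := fun ω (i : Fin N) => X i ω with hV
  have hVm : Measurable V := measurable_pi_lambda _ (fun i => hXm i)
  set G : (Fin N → ℝ) → ℝ := fun y => (Finset.Icc n (N - 1)).sup' hne
    (fun k => (∑ t ∈ Finset.range k, ((if h : t < N then y ⟨t, h⟩ else 0) - μ)) / (k : ℝ))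
    with hG
  have hGm : Measurable G := by
    have heq : G = (Finset.Icc n (N - 1)).sup' hne (fun k (y : Fin N → ℝ) =>
        (∑ t ∈ Finset.range k, ((if h : t < N then y ⟨t, h⟩ else 0) - μ)) / (k : ℝ)) := by
      funext y
      rw [hG, Finset.sup'_apply]
    rw [heq]
    apply Finset.measurable_sup' hne
    intro k _
    apply Measurable.div_const
    apply Finset.measurable_sum
    intro t _
    by_cases h : t < N
    · simp only [dif_pos h]
      exact (measurable_pi_apply _).sub measurable_const
    · simp only [dif_neg h]
      exact measurable_const
  set B : Set (Fin N → ℝ) := {y | ε ≤ G y} with hB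
  have hBm : MeasurableSet B := measurableSet_le measurable_const hGm
  -- the event is the preimage of B
  have hEvent : {ω | (Finset.Icc n (N - 1)).sup' (Finset.nonempty_Icc.2 (by omega))
      (fun k => (∑ t ∈ Finset.range k, (X t ω - μ)) / (k : ℝ)) ≥ ε} = V ⁻¹' B := by
    ext ω
    simp only [Set.mem_setOf_eq, Set.mem_preimage, hB, ge_iff_le]
    have : G (V ω) = (Finset.Icc n (N - 1)).sup' (Finset.nonempty_Icc.2 (by omega))
        (fun k => (∑ t ∈ Finset.range k, (X t ω - μ)) / (k : ℝ)) := by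
      rw [hG]
      apply Finset.sup'_congr _ rfl
      intro k hk
      rw [Finset.mem_Icc] at hk
      congr 1
      apply Finset.sum_congr rfl
      intro t ht
      rw [Finset.mem_range] at ht
      have htN : t < N := by omega
      rw [dif_pos htN]
    rw [this]
  -- the set of "bad" permutations
  set A : Finset (Equiv.Perm (Fin N)) :=
    Finset.univ.filter (fun e => (fun i => x (e i)) ∈ B) with hA
  have hmemA : ∀ e : Equiv.Perm (Fin N),
      e ∈ A ↔ ∃ k ∈ Finset.Icc n (N - 1), ε ≤ HSAux.Y x μ k e := by
    intro e
    rw [hA, Finset.mem_filter]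
    simp only [Finset.mem_univ, true_and, hB, Set.mem_setOf_eq]
    have hGe : G (fun i => x (e i)) = (Finset.Icc n (N - 1)).sup' hne
        (fun k => HSAux.Y x μ k e) := by
      rw [hG]
      apply Finset.sup'_congr _ rfl
      intro k _
      rw [HSAux.Y, HSAux.S_def]
    rw [hGe, Finset.le_sup'_iff]
  -- compute the probability
  have hPE : P (V ⁻¹' B) = (Nat.factorial N : ℝ≥0∞)⁻¹ * (A.card : ℝ≥0∞) := by
    rw [← Measure.map_apply hVm hBm, hX, Measure.smul_apply, smul_eq_mul,
      Measure.finset_sum_apply]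
    congr 1
    calc ∑ e : Equiv.Perm (Fin N), Measure.dirac (fun i => x (e i)) B
        = ∑ e : Equiv.Perm (Fin N), (if (fun i => x (e i)) ∈ B then (1:ℝ≥0∞) else 0) := by
          apply Finset.sum_congr rfl
          intro e _
          rw [Measure.dirac_apply' _ hBm, Set.indicator_apply]
          simp
      _ = ∑ e ∈ A, (1:ℝ≥0∞) := (Finset.sum_filter _ _).symm
      _ = (A.card : ℝ≥0∞) := by rw [Finset.sum_const, nsmul_eq_mul, mul_one]
  rw [hEvent, hPE]
  -- convert the combinatorial bound
  have hax : ∀ i, a ≤ x i := fun i => ha.2 ⟨i, rfl⟩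
  have hxb : ∀ i, x i ≤ b := fun i => hb.2 ⟨i, rfl⟩
  have hreal := HSAux.card_bound hN hn1 hn hax hxb hμ hε A hmemA
  have hENN : (A.card : ℝ≥0∞) ≤ (Nat.factorial N : ℝ≥0∞) *
      ENNReal.ofReal (exp (-(2 * n * ε ^ 2) /
        ((1 - (n : ℝ) / N) * (1 + 1 / (n : ℝ)) * (b - a) ^ 2))) := by
    calc (A.card : ℝ≥0∞) = ENNReal.ofReal ((A.card : ℝ)) := by
          rw [ENNReal.ofReal_natCast]
      _ ≤ ENNReal.ofReal ((N.factorial : ℝ) * exp (-(2 * n * ε^2) /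
            ((1 - (n:ℝ)/(N:ℝ)) * (1 + 1/(n:ℝ)) * (b - a)^2))) :=
          ENNReal.ofReal_le_ofReal (by exact_mod_cast hreal)
      _ = (Nat.factorial N : ℝ≥0∞) * ENNReal.ofReal (exp (-(2 * n * ε ^ 2) /
            ((1 - (n : ℝ) / N) * (1 + 1 / (n : ℝ)) * (b - a) ^ 2))) := by
          rw [ENNReal.ofReal_mul (by positivity), ENNReal.ofReal_natCast]
  have hfac0 : (Nat.factorial N : ℝ≥0∞) ≠ 0 := by
    exact_mod_cast Nat.cast_ne_zero.2 (Nat.factorial_ne_zero N)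
  have hfactop : (Nat.factorial N : ℝ≥0∞) ≠ ⊤ := ENNReal.natCast_ne_top _
  calc (Nat.factorial N : ℝ≥0∞)⁻¹ * (A.card : ℝ≥0∞)
      ≤ (Nat.factorial N : ℝ≥0∞)⁻¹ * ((Nat.factorial N : ℝ≥0∞) *
          ENNReal.ofReal (exp (-(2 * n * ε ^ 2) /
            ((1 - (n : ℝ) / N) * (1 + 1 / (n : ℝ)) * (b - a) ^ 2)))) :=
        mul_le_mul_right hENN _
    _ = ENNReal.ofReal (exp (-(2 * n * ε ^ 2) /
          ((1 - (n : ℝ) / N) * (1 + 1 / (n : ℝ)) * (b - a) ^ 2))) := by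
        rw [← mul_assoc, ENNReal.inv_mul_cancel hfac0 hfactop, one_mul]
end

section
/- Let X_1,...,X_N be sampled without replacement from a finite population of N > 1 reals with mean μ, minimum a and maximum b. Then for all ε > 0 and n < N, P(max_{1≤k≤n} (∑_{t=1}^k (X_t − μ))/(N−k) ≥ nε/(N−n)) ≤ exp(−2nε²/((1 − (n−1)/N)(b−a)²)). -/
open MeasureTheory Finset Real
open scoped ENNReal

open Real

lemma hoeff_pos {p : ℝ} (hp0 : 0 ≤ p) (hp1 : p ≤ 1) (h : ℝ) :
    0 < 1 - p + p * exp h := by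
  rcases eq_or_lt_of_le hp1 with rfl | hp1
  · simpa using exp_pos h
  · have : 0 ≤ p * exp h := mul_nonneg hp0 (exp_pos h).le
    linarith

lemma hoeff_core {p : ℝ} (hp0 : 0 ≤ p) (hp1 : p ≤ 1) (h : ℝ) :
    1 - p + p * exp h ≤ exp (p * h + h ^ 2 / 8) := by
  set g : ℝ → ℝ := fun h => 1 - p + p * exp h with hg
  have hgpos : ∀ y, 0 < g y := fun y => hoeff_pos hp0 hp1 y
  set f : ℝ → ℝ := fun h => p * h + h ^ 2 / 8 - log (g h) with hf
  set f1 : ℝ → ℝ := fun h => p + h / 4 - p * exp h / g h with hf1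
  have hgd : ∀ y, HasDerivAt g (p * exp y) y := by
    intro y
    exact ((hasDerivAt_exp y).const_mul p).const_add (1 - p)
  have hfd : ∀ y, HasDerivAt f (f1 y) y := by
    intro y
    have h1 : HasDerivAt (fun h : ℝ => p * h + h ^ 2 / 8) (p + 2 * y / 8) y := by
      have := ((hasDerivAt_pow 2 y).div_const 8).const_add 0
      have h2 : HasDerivAt (fun h : ℝ => p * h) p y := by
        simpa using (hasDerivAt_id y).const_mul p
      have h3 : HasDerivAt (fun h : ℝ => p * h + h ^ 2 / 8) (p + ↑2 * y ^ (2 - 1) / 8) y :=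
        h2.add ((hasDerivAt_pow 2 y).div_const 8)
      convert h3 using 1; norm_num
    have h2 : HasDerivAt (fun h => log (g h)) (p * exp y / g y) y :=
      (hgd y).log (hgpos y).ne'
    have := h1.sub h2
    have h3 : HasDerivAt f (p + 2 * y / 8 - p * exp y / g y) y := this
    convert h3 using 1
    show p + y / 4 - p * exp y / g y = _; ring
  have hf1d : ∀ y, HasDerivAt f1 (1/4 - (p * exp y * g y - p * exp y * (p * exp y)) / (g y) ^ 2) y := by
    intro y
    have h1 : HasDerivAt (fun h : ℝ => p + h / 4) (1/4) y := by
      simpa using ((hasDerivAt_id y).div_const 4).const_add p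
    have h2 : HasDerivAt (fun h => p * exp h / g h)
        ((p * exp y * g y - p * exp y * (p * exp y)) / (g y) ^ 2) y := by
      have hnum : HasDerivAt (fun h : ℝ => p * exp h) (p * exp y) y :=
        (hasDerivAt_exp y).const_mul p
      exact hnum.div (hgd y) (hgpos y).ne'
    exact h1.sub h2
  have hf1mono : Monotone f1 := by
    apply monotone_of_deriv_nonneg
    · exact fun y => (hf1d y).differentiableAt
    · intro y
      rw [(hf1d y).deriv]
      have hA : 0 ≤ 1 - p := by linarith
      have hB : 0 ≤ p * exp y := mul_nonneg hp0 (exp_pos y).le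
      have key : p * exp y * g y - p * exp y * (p * exp y) ≤ (g y)^2 / 4 := by
        have h4 : 4 * ((1-p) * (p * exp y)) ≤ ((1-p) + p * exp y)^2 := by
          nlinarith [sq_nonneg ((1-p) - p * exp y)]
        have hge : g y = (1-p) + p * exp y := by simp [hg]
        nlinarith [h4]
      have hg2 : 0 < (g y)^2 := pow_pos (hgpos y) 2
      have : (p * exp y * g y - p * exp y * (p * exp y)) / (g y)^2 ≤ 1/4 :=
        (div_le_iff₀ hg2).2 (by linarith)
      linarith
  -- f1 0 = 0
  have hf10 : f1 0 = 0 := by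
    simp [hf1, hg]
  have hf0 : f 0 = 0 := by
    simp [hf, hg]
  have key : ∀ y, 0 ≤ f y := by
    intro y
    rcases le_total 0 y with hy | hy
    · have hmono : MonotoneOn f (Set.Ici 0) := by
        apply monotoneOn_of_deriv_nonneg (convex_Ici 0)
        · exact (Continuous.continuousOn (by
            exact Differentiable.continuous (fun z => (hfd z).differentiableAt)))
        · exact fun z _ => (hfd z).differentiableAt.differentiableWithinAt
        · intro z hz
          rw [(hfd z).deriv]
          rw [← hf10]
          exact hf1mono (le_of_lt (by simpa using hz))
      have := hmono (Set.self_mem_Ici) (Set.mem_Ici.2 hy) hy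
      linarith [hf0]
    · have hanti : AntitoneOn f (Set.Iic 0) := by
        apply antitoneOn_of_deriv_nonpos (convex_Iic 0)
        · exact (Continuous.continuousOn (by
            exact Differentiable.continuous (fun z => (hfd z).differentiableAt)))
        · exact fun z _ => (hfd z).differentiableAt.differentiableWithinAt
        · intro z hz
          rw [(hfd z).deriv]
          rw [← hf10]
          exact hf1mono (le_of_lt (by simpa using hz))
      have := hanti (Set.mem_Iic.2 hy) (Set.self_mem_Iic) hy
      linarith [hf0]
  have := key h
  have hlog : log (g h) ≤ p * h + h ^ 2 / 8 := by
    simp only [hf] at this; linarith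
  calc g h = exp (log (g h)) := (exp_log (hgpos h)).symm
    _ ≤ exp (p * h + h ^ 2 / 8) := exp_le_exp.2 hlog

lemma hoeff_finset {ι : Type*} (s : Finset ι) (hs : s.Nonempty) (y : ι → ℝ) (a b t : ℝ)
    (hab : a < b) (hy : ∀ i ∈ s, a ≤ y i ∧ y i ≤ b) :
    ∑ i ∈ s, exp (t * y i) ≤
      s.card * exp (t * ((∑ i ∈ s, y i) / s.card) + t ^ 2 * (b - a) ^ 2 / 8) := by
  have hcard : (0:ℝ) < s.card := by exact_mod_cast Finset.card_pos.2 hs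
  have hba : (0:ℝ) < b - a := by linarith
  set m : ℝ := (∑ i ∈ s, y i) / s.card with hm
  have hma : a ≤ m := by
    rw [hm, le_div_iff₀ hcard]
    calc a * s.card = ∑ _i ∈ s, a := by rw [Finset.sum_const]; ring
      _ ≤ ∑ i ∈ s, y i := Finset.sum_le_sum (fun i hi => (hy i hi).1)
  have hmb : m ≤ b := by
    rw [hm, div_le_iff₀ hcard]
    calc ∑ i ∈ s, y i ≤ ∑ _i ∈ s, b := Finset.sum_le_sum (fun i hi => (hy i hi).2)
      _ = b * s.card := by rw [Finset.sum_const]; ring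
  set p : ℝ := (m - a) / (b - a) with hp
  have hp0 : 0 ≤ p := div_nonneg (by linarith) hba.le
  have hp1 : p ≤ 1 := by rw [hp, div_le_one hba]; linarith
  -- pointwise convexity bound
  have hpt : ∀ i ∈ s, exp (t * y i) ≤
      ((b - y i) / (b - a)) * exp (t * a) + ((y i - a) / (b - a)) * exp (t * b) := by
    intro i hi
    have h1 : (0:ℝ) ≤ (b - y i) / (b - a) := div_nonneg (by linarith [(hy i hi).2]) hba.le
    have h2 : (0:ℝ) ≤ (y i - a) / (b - a) := div_nonneg (by linarith [(hy i hi).1]) hba.le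
    have h3 : (b - y i) / (b - a) + (y i - a) / (b - a) = 1 := by field_simp; ring
    have := convexOn_exp.2 (Set.mem_univ (t * a)) (Set.mem_univ (t * b)) h1 h2 h3
    have hbane : b - a ≠ 0 := ne_of_gt hba
    have harg : (b - y i) / (b - a) * (t * a) + (y i - a) / (b - a) * (t * b) = t * y i := by
      field_simp; ring
    simp only [smul_eq_mul] at this
    rw [harg] at this
    exact this
  have hsum : ∑ i ∈ s, exp (t * y i) ≤
      s.card * ((1 - p) * exp (t * a) + p * exp (t * b)) := by
    calc ∑ i ∈ s, exp (t * y i)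
        ≤ ∑ i ∈ s, (((b - y i) / (b - a)) * exp (t * a) + ((y i - a) / (b - a)) * exp (t * b)) :=
          Finset.sum_le_sum hpt
      _ = s.card * ((1 - p) * exp (t * a) + p * exp (t * b)) := by
          rw [Finset.sum_add_distrib, ← Finset.sum_mul, ← Finset.sum_mul,
            ← Finset.sum_div, ← Finset.sum_div]
          have e1 : ∑ i ∈ s, (b - y i) = s.card * b - s.card * m := by
            rw [Finset.sum_sub_distrib, Finset.sum_const, hm]
            field_simp
            rw [nsmul_eq_mul]
          have e2 : ∑ i ∈ s, (y i - a) = s.card * m - s.card * a := by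
            rw [Finset.sum_sub_distrib, Finset.sum_const, hm]
            field_simp
            rw [nsmul_eq_mul]
          rw [e1, e2, hp]
          field_simp
          ring
  have hcore := hoeff_core hp0 hp1 (t * (b - a))
  have hfin : (1 - p) * exp (t * a) + p * exp (t * b) ≤
      exp (t * m + t ^ 2 * (b - a) ^ 2 / 8) := by
    have e3 : exp (t * b) = exp (t * a) * exp (t * (b - a)) := by
      rw [← exp_add]; ring_nf
    have e4 : (1 - p) * exp (t * a) + p * exp (t * b)
        = exp (t * a) * (1 - p + p * exp (t * (b - a))) := by rw [e3]; ring
    rw [e4]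
    calc exp (t * a) * (1 - p + p * exp (t * (b - a)))
        ≤ exp (t * a) * exp (p * (t * (b - a)) + (t * (b - a)) ^ 2 / 8) := by
          exact mul_le_mul_of_nonneg_left hcore (exp_pos _).le
      _ = exp (t * a + (p * (t * (b - a)) + (t * (b - a)) ^ 2 / 8)) := by rw [← exp_add]
      _ = exp (t * m + t ^ 2 * (b - a) ^ 2 / 8) := by
          congr 1
          rw [hp]
          field_simp
          ring
  calc ∑ i ∈ s, exp (t * y i) ≤ s.card * ((1 - p) * exp (t * a) + p * exp (t * b)) := hsum
    _ ≤ s.card * exp (t * m + t ^ 2 * (b - a) ^ 2 / 8) :=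
        mul_le_mul_of_nonneg_left hfin hcard.le


namespace HSaux

variable {N : ℕ}

/-- partial centered sum over first `k` positions -/
noncomputable def pre (x : Fin N → ℝ) (μ : ℝ) (k : ℕ) (e : Equiv.Perm (Fin N)) : ℝ :=
  ∑ t ∈ Finset.univ.filter (fun t : Fin N => (t : ℕ) < k), (x (e t) - μ)

/-- self-normalized sum -/
noncomputable def Zf (x : Fin N → ℝ) (μ : ℝ) (k : ℕ) (e : Equiv.Perm (Fin N)) : ℝ :=
  pre x μ k e / ((N : ℝ) - k)

lemma pre_inv (x : Fin N → ℝ) (μ : ℝ) (k : ℕ) (e σ : Equiv.Perm (Fin N))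
    (hσ : ∀ i : Fin N, (i : ℕ) < k → σ i = i) : pre x μ k (e * σ) = pre x μ k e := by
  unfold pre
  refine Finset.sum_congr rfl fun t ht => ?_
  rw [Equiv.Perm.mul_apply, hσ t (Finset.mem_filter.1 ht).2]

lemma swap_fix {k : ℕ} (hk : k < N) (j : Fin N) (hj : k ≤ (j : ℕ))
    (i : Fin N) (hi : (i : ℕ) < k) : Equiv.swap (⟨k, hk⟩ : Fin N) j i = i := by
  apply Equiv.swap_apply_of_ne_of_ne
  · intro h; rw [h] at hi; simp at hi
  · intro h; rw [h] at hi; omega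

lemma Zf_inv (x : Fin N → ℝ) (μ : ℝ) {k m : ℕ} (hkm : k ≤ m) (hm : m < N) (e : Equiv.Perm (Fin N))
    (j : Fin N) (hj : j ∈ Finset.Ici (⟨m, hm⟩ : Fin N)) :
    Zf x μ k (e * Equiv.swap ⟨m, hm⟩ j) = Zf x μ k e := by
  have hjle : (⟨m, hm⟩ : Fin N) ≤ j := Finset.mem_Ici.1 hj
  have hj' : m ≤ (j : ℕ) := hjle
  unfold Zf
  rw [pre_inv]
  intro i hi
  exact swap_fix hm j hj' i (lt_of_lt_of_le hi hkm)

lemma tower (k : ℕ) (hk : k < N) (F : Equiv.Perm (Fin N) → ℝ) :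
    ((N - k : ℕ) : ℝ) * ∑ e : Equiv.Perm (Fin N), F e =
      ∑ e : Equiv.Perm (Fin N), ∑ j ∈ Finset.Ici (⟨k, hk⟩ : Fin N),
        F (e * Equiv.swap ⟨k, hk⟩ j) := by
  rw [Finset.sum_comm]
  have : ∀ j ∈ Finset.Ici (⟨k, hk⟩ : Fin N),
      ∑ e : Equiv.Perm (Fin N), F (e * Equiv.swap ⟨k, hk⟩ j)
        = ∑ e : Equiv.Perm (Fin N), F e := by
    intro j _
    exact Equiv.sum_comp (Equiv.mulRight (Equiv.swap ⟨k, hk⟩ j)) F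
  rw [Finset.sum_congr rfl this, Finset.sum_const, Fin.card_Ici, nsmul_eq_mul]

lemma card_Ici' (k : ℕ) (hk : k < N) : (Finset.Ici (⟨k, hk⟩ : Fin N)).card = N - k :=
  Fin.card_Ici _

lemma pre_succ (x : Fin N → ℝ) (μ : ℝ) {k : ℕ} (hk : k < N) (e : Equiv.Perm (Fin N))
    (j : Fin N) (hj : j ∈ Finset.Ici (⟨k, hk⟩ : Fin N)) :
    pre x μ (k + 1) (e * Equiv.swap ⟨k, hk⟩ j) = pre x μ k e + (x (e j) - μ) := by
  have hjle : (⟨k, hk⟩ : Fin N) ≤ j := Finset.mem_Ici.1 hj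
  have hj' : k ≤ (j : ℕ) := hjle
  unfold pre
  have hset : Finset.univ.filter (fun t : Fin N => (t : ℕ) < k + 1)
      = insert (⟨k, hk⟩ : Fin N) (Finset.univ.filter (fun t : Fin N => (t : ℕ) < k)) := by
    ext t
    simp only [Finset.mem_filter, Finset.mem_univ, true_and, Finset.mem_insert]
    constructor
    · intro h
      rcases Nat.lt_succ_iff_lt_or_eq.1 h with h' | h'
      · exact Or.inr h'
      · exact Or.inl (Fin.ext h')
    · rintro (rfl | h)
      · exact Nat.lt_succ_self k
      · exact Nat.lt_succ_of_lt h
  rw [hset, Finset.sum_insert (by simp)]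
  have h1 : (e * Equiv.swap ⟨k, hk⟩ j) ⟨k, hk⟩ = e j := by
    simp [Equiv.Perm.mul_apply]
  have h2 : ∀ t ∈ Finset.univ.filter (fun t : Fin N => (t : ℕ) < k),
      (e * Equiv.swap ⟨k, hk⟩ j) t = e t := by
    intro t ht
    rw [Equiv.Perm.mul_apply, swap_fix hk j hj' t (Finset.mem_filter.1 ht).2]
  rw [h1, Finset.sum_congr rfl (fun t ht => by rw [h2 t ht])]
  ring

lemma sum_Ici_x (x : Fin N → ℝ) (μ : ℝ) {k : ℕ} (hk : k < N) (e : Equiv.Perm (Fin N)) :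
    ∑ j ∈ Finset.Ici (⟨k, hk⟩ : Fin N), (x (e j) - μ)
      = (∑ i, x i) - (N : ℝ) * μ - pre x μ k e := by
  have hpart := Finset.sum_filter_add_sum_filter_not Finset.univ
    (fun t : Fin N => (t : ℕ) < k) (fun t => x (e t) - μ)
  have hIci : Finset.univ.filter (fun t : Fin N => ¬ (t : ℕ) < k)
      = Finset.Ici (⟨k, hk⟩ : Fin N) := by
    ext t
    simp [Finset.mem_filter, Finset.mem_Ici, Fin.le_def, Nat.not_lt]
  have htot : ∑ t : Fin N, (x (e t) - μ) = (∑ i, x i) - (N : ℝ) * μ := by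
    rw [Finset.sum_sub_distrib, Finset.sum_const]
    have h := Equiv.sum_comp e x
    simp only [h, Finset.card_univ, Fintype.card_fin, nsmul_eq_mul]
  rw [hIci] at hpart
  have : pre x μ k e + ∑ j ∈ Finset.Ici (⟨k, hk⟩ : Fin N), (x (e j) - μ)
      = (∑ i, x i) - (N : ℝ) * μ := by
    rw [← htot, ← hpart]; rfl
  linarith

end HSaux

namespace HSaux
open Real Finset

lemma jensen_exp {ι : Type*} (s : Finset ι) (hs : s.Nonempty) (w : ι → ℝ) :
    (s.card : ℝ) * Real.exp ((∑ i ∈ s, w i) / s.card) ≤ ∑ i ∈ s, Real.exp (w i) := by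
  have hcard : (0:ℝ) < s.card := by exact_mod_cast Finset.card_pos.2 hs
  have h := convexOn_exp.map_sum_le (t := s) (w := fun _ => (s.card : ℝ)⁻¹)
    (p := w) (fun i _ => by positivity)
    (by rw [Finset.sum_const, nsmul_eq_mul]; field_simp)
    (fun i _ => Set.mem_univ _)
  simp only [smul_eq_mul] at h
  rw [← Finset.mul_sum] at h
  have h2 : (s.card : ℝ)⁻¹ * ∑ i ∈ s, w i = (∑ i ∈ s, w i) / s.card := by ring
  rw [h2] at h
  calc (s.card : ℝ) * Real.exp ((∑ i ∈ s, w i) / s.card)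
      ≤ (s.card : ℝ) * ∑ i ∈ s, (s.card : ℝ)⁻¹ * Real.exp (w i) :=
        mul_le_mul_of_nonneg_left h hcard.le
    _ = ∑ i ∈ s, Real.exp (w i) := by rw [← Finset.mul_sum]; field_simp

section Steps

variable {N : ℕ} (x : Fin N → ℝ) (μ : ℝ)

lemma expo (lam : ℝ) {k : ℕ} (hk1 : k + 1 < N) (e : Equiv.Perm (Fin N))
    (j : Fin N) (hj : j ∈ Finset.Ici (⟨k, Nat.lt_of_succ_lt hk1⟩ : Fin N)) :
    lam * Zf x μ (k+1) (e * Equiv.swap ⟨k, Nat.lt_of_succ_lt hk1⟩ j)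
      = (lam / ((N:ℝ) - k - 1)) * x (e j)
        + (lam / ((N:ℝ) - k - 1)) * (pre x μ k e - μ) := by
  unfold Zf
  rw [pre_succ x μ (Nat.lt_of_succ_lt hk1) e j hj]
  push_cast
  ring

lemma sum_x_Ici (hμN : (N:ℝ) * μ = ∑ i, x i) {k : ℕ} (hk : k < N) (e : Equiv.Perm (Fin N)) :
    ∑ j ∈ Finset.Ici (⟨k, hk⟩ : Fin N), x (e j)
      = ((N : ℝ) - k) * μ - pre x μ k e := by
  have h1 := sum_Ici_x x μ hk e
  rw [← hμN] at h1
  have h2 : ∑ j ∈ Finset.Ici (⟨k, hk⟩ : Fin N), x (e j)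
      = (∑ j ∈ Finset.Ici (⟨k, hk⟩ : Fin N), (x (e j) - μ))
        + (Finset.Ici (⟨k, hk⟩ : Fin N)).card * μ := by
    rw [Finset.sum_sub_distrib, Finset.sum_const, nsmul_eq_mul]; ring
  rw [h2, h1, card_Ici' k hk]
  have : ((N - k : ℕ) : ℝ) = (N:ℝ) - k := by
    have := hk.le
    push_cast [Nat.cast_sub this]
    ring
  rw [this]
  ring

/-- conditional mean identity : average of the next exponent equals current one -/
lemma avg_id (hμN : (N:ℝ) * μ = ∑ i, x i) (lam : ℝ) {k : ℕ} (hk1 : k + 1 < N)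
    (e : Equiv.Perm (Fin N)) :
    (lam / ((N:ℝ) - k - 1)) * (pre x μ k e - μ)
      + (lam / ((N:ℝ) - k - 1)) *
        ((∑ j ∈ Finset.Ici (⟨k, Nat.lt_of_succ_lt hk1⟩ : Fin N), x (e j)) / ((N:ℝ) - k))
      = lam * Zf x μ k e := by
  have hk : k < N := Nat.lt_of_succ_lt hk1
  rw [sum_x_Ici x μ hμN hk e]
  unfold Zf
  have hD : (N:ℝ) - k - 1 ≠ 0 := by
    have : (k:ℝ) + 1 < N := by exact_mod_cast hk1
    intro h; linarith
  have hC : (N:ℝ) - k ≠ 0 := by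
    have : (k:ℝ) < N := by exact_mod_cast hk
    intro h; linarith
  field_simp
  ring

end Steps
end HSaux


namespace HSaux
open Real Finset

variable {N : ℕ}

lemma cardR_pos {k : ℕ} (hk : k < N) : (0:ℝ) < (N:ℝ) - k := by
  have : (k:ℝ) < N := by exact_mod_cast hk
  linarith

lemma card_Ici_cast {k : ℕ} (hk : k < N) :
    (((Finset.Ici (⟨k, hk⟩ : Fin N)).card : ℕ) : ℝ) = (N:ℝ) - k := by
  rw [card_Ici' k hk]
  push_cast [Nat.cast_sub hk.le]
  ring

lemma Ici_nonempty {k : ℕ} (hk : k < N) : (Finset.Ici (⟨k, hk⟩ : Fin N)).Nonempty :=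
  ⟨⟨k, hk⟩, Finset.mem_Ici.2 le_rfl⟩

/-- one-step submartingale inequality (Jensen direction), with a cylinder indicator -/
lemma step_ge (x : Fin N → ℝ) (μ : ℝ) (hμN : (N:ℝ) * μ = ∑ i, x i) (lam : ℝ)
    {m : ℕ} (hm1 : m + 1 < N) (B : Equiv.Perm (Fin N) → Prop) [DecidablePred B]
    (hB : ∀ (e σ : Equiv.Perm (Fin N)), (∀ i : Fin N, (i : ℕ) < m → σ i = i) →
      (B (e * σ) ↔ B e)) :
    ∑ e : Equiv.Perm (Fin N), (if B e then Real.exp (lam * Zf x μ m e) else 0)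
      ≤ ∑ e : Equiv.Perm (Fin N), (if B e then Real.exp (lam * Zf x μ (m+1) e) else 0) := by
  have hm : m < N := Nat.lt_of_succ_lt hm1
  set pm : Fin N := ⟨m, hm⟩ with hpm
  have hcard : (((N - m : ℕ)) : ℝ) = (N:ℝ) - m := by push_cast [Nat.cast_sub hm.le]; ring
  have hcpos : (0:ℝ) < (N:ℝ) - m := cardR_pos hm
  have key : ∀ e : Equiv.Perm (Fin N),
      ((N:ℝ) - m) * (if B e then Real.exp (lam * Zf x μ m e) else 0)
        ≤ ∑ j ∈ Finset.Ici pm,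
            (if B (e * Equiv.swap pm j) then Real.exp (lam * Zf x μ (m+1) (e * Equiv.swap pm j)) else 0) := by
    intro e
    have hBe : ∀ j ∈ Finset.Ici pm, B (e * Equiv.swap pm j) ↔ B e := by
      intro j hj
      have hjle : pm ≤ j := Finset.mem_Ici.1 hj
      exact hB e _ (fun i hi => swap_fix hm j hjle i hi)
    by_cases hb : B e
    · have hrw : ∀ j ∈ Finset.Ici pm,
          (if B (e * Equiv.swap pm j) then Real.exp (lam * Zf x μ (m+1) (e * Equiv.swap pm j)) else 0)
            = Real.exp (lam * Zf x μ (m+1) (e * Equiv.swap pm j)) := by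
        intro j hj; rw [if_pos ((hBe j hj).2 hb)]
      rw [Finset.sum_congr rfl hrw, if_pos hb]
      -- Jensen
      have hJ := jensen_exp (Finset.Ici pm) (Ici_nonempty hm)
        (fun j => lam * Zf x μ (m+1) (e * Equiv.swap pm j))
      rw [card_Ici_cast hm] at hJ
      have havg : (∑ j ∈ Finset.Ici pm, lam * Zf x μ (m+1) (e * Equiv.swap pm j)) / ((N:ℝ) - m)
          = lam * Zf x μ m e := by
        have hsum : ∑ j ∈ Finset.Ici pm, lam * Zf x μ (m+1) (e * Equiv.swap pm j)
            = ∑ j ∈ Finset.Ici pm,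
              ((lam / ((N:ℝ) - m - 1)) * x (e j) + (lam / ((N:ℝ) - m - 1)) * (pre x μ m e - μ)) :=
          Finset.sum_congr rfl (fun j hj => expo x μ lam hm1 e j hj)
        rw [hsum, Finset.sum_add_distrib, Finset.sum_const, ← Finset.mul_sum,
          card_Ici' m hm, nsmul_eq_mul, hcard]
        rw [div_eq_iff (ne_of_gt hcpos)]
        have hthis := avg_id x μ hμN lam hm1 e
        have h4 : lam / ((N:ℝ)-m-1) * ((∑ j ∈ Finset.Ici pm, x (e j)) / ((N:ℝ)-m)) * ((N:ℝ)-m)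
            = lam / ((N:ℝ)-m-1) * (∑ j ∈ Finset.Ici pm, x (e j)) := by
          field_simp
        linear_combination hthis * ((N:ℝ) - (m:ℝ)) - h4
      rw [havg] at hJ
      exact hJ
    · have hrw : ∀ j ∈ Finset.Ici pm,
          (if B (e * Equiv.swap pm j) then Real.exp (lam * Zf x μ (m+1) (e * Equiv.swap pm j)) else 0)
            = 0 := by
        intro j hj; rw [if_neg (fun h => hb ((hBe j hj).1 h))]
      rw [Finset.sum_congr rfl hrw, if_neg hb, Finset.sum_const, mul_zero, smul_zero]
  have htow := tower m hm
    (fun e => if B e then Real.exp (lam * Zf x μ (m+1) e) else 0)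
  rw [hcard] at htow
  have hsum_le : ((N:ℝ) - m) * ∑ e : Equiv.Perm (Fin N), (if B e then Real.exp (lam * Zf x μ m e) else 0)
      ≤ ((N:ℝ) - m) * ∑ e : Equiv.Perm (Fin N), (if B e then Real.exp (lam * Zf x μ (m+1) e) else 0) := by
    rw [htow, Finset.mul_sum]
    exact Finset.sum_le_sum (fun e _ => key e)
  exact le_of_mul_le_mul_left hsum_le hcpos

end HSaux


namespace HSaux
open Real Finset

variable {N : ℕ}

/-- one-step Hoeffding bound on the exponential moment -/
lemma step_le (x : Fin N → ℝ) (μ : ℝ) (hμN : (N:ℝ) * μ = ∑ i, x i)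
    (a b : ℝ) (hab : a < b) (hax : ∀ i, a ≤ x i) (hxb : ∀ i, x i ≤ b)
    (lam : ℝ) {k : ℕ} (hk1 : k + 1 < N) :
    ∑ e : Equiv.Perm (Fin N), Real.exp (lam * Zf x μ (k+1) e)
      ≤ Real.exp (lam^2 * (b-a)^2 / (8 * ((N:ℝ) - k - 1)^2)) *
        ∑ e : Equiv.Perm (Fin N), Real.exp (lam * Zf x μ k e) := by
  have hk : k < N := Nat.lt_of_succ_lt hk1
  set pk : Fin N := ⟨k, hk⟩ with hpk
  have hcard : (((N - k : ℕ)) : ℝ) = (N:ℝ) - k := by push_cast [Nat.cast_sub hk.le]; ring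
  have hcpos : (0:ℝ) < (N:ℝ) - k := cardR_pos hk
  set t : ℝ := lam / ((N:ℝ) - k - 1) with ht
  set K : ℝ := Real.exp (lam^2 * (b-a)^2 / (8 * ((N:ℝ) - k - 1)^2)) with hK
  have key : ∀ e : Equiv.Perm (Fin N),
      ∑ j ∈ Finset.Ici pk, Real.exp (lam * Zf x μ (k+1) (e * Equiv.swap pk j))
        ≤ ((N:ℝ) - k) * (K * Real.exp (lam * Zf x μ k e)) := by
    intro e
    have hrw : ∀ j ∈ Finset.Ici pk,
        Real.exp (lam * Zf x μ (k+1) (e * Equiv.swap pk j))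
          = Real.exp (t * x (e j)) * Real.exp (t * (pre x μ k e - μ)) := by
      intro j hj
      rw [← Real.exp_add, ← expo x μ lam hk1 e j hj]
    rw [Finset.sum_congr rfl hrw, ← Finset.sum_mul]
    have hH := hoeff_finset (Finset.Ici pk) (Ici_nonempty hk) (fun j => x (e j)) a b t hab
      (fun j _ => ⟨hax _, hxb _⟩)
    rw [card_Ici_cast hk] at hH
    have hmean : t * ((∑ j ∈ Finset.Ici pk, x (e j)) / ((N:ℝ) - k)) + t * (pre x μ k e - μ)
        = lam * Zf x μ k e := by
      have := avg_id x μ hμN lam hk1 e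
      rw [← ht] at this
      linarith
    calc (∑ j ∈ Finset.Ici pk, Real.exp (t * x (e j))) * Real.exp (t * (pre x μ k e - μ))
        ≤ (((N:ℝ) - k) * Real.exp (t * ((∑ j ∈ Finset.Ici pk, x (e j)) / ((N:ℝ) - k))
              + t^2 * (b - a)^2 / 8)) * Real.exp (t * (pre x μ k e - μ)) := by
          apply mul_le_mul_of_nonneg_right _ (Real.exp_pos _).le
          exact hH
      _ = ((N:ℝ) - k) * (K * Real.exp (lam * Zf x μ k e)) := by
          rw [mul_assoc, ← Real.exp_add]
          congr 1
          rw [hK, ← Real.exp_add]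
          congr 1
          rw [← hmean, ht]
          field_simp
          ring
  have htow := tower k hk (fun e => Real.exp (lam * Zf x μ (k+1) e))
  rw [hcard] at htow
  have hstep : ((N:ℝ) - k) * ∑ e : Equiv.Perm (Fin N), Real.exp (lam * Zf x μ (k+1) e)
      ≤ ((N:ℝ) - k) * (K * ∑ e : Equiv.Perm (Fin N), Real.exp (lam * Zf x μ k e)) := by
    rw [htow]
    calc ∑ e : Equiv.Perm (Fin N), ∑ j ∈ Finset.Ici pk,
          Real.exp (lam * Zf x μ (k+1) (e * Equiv.swap pk j))
        ≤ ∑ e : Equiv.Perm (Fin N), ((N:ℝ) - k) * (K * Real.exp (lam * Zf x μ k e)) :=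
          Finset.sum_le_sum (fun e _ => key e)
      _ = ((N:ℝ) - k) * (K * ∑ e : Equiv.Perm (Fin N), Real.exp (lam * Zf x μ k e)) := by
          rw [← Finset.mul_sum, ← Finset.mul_sum]
  exact le_of_mul_le_mul_left hstep hcpos

lemma Zf_zero (x : Fin N → ℝ) (μ : ℝ) (e : Equiv.Perm (Fin N)) : Zf x μ 0 e = 0 := by
  unfold Zf pre
  simp

lemma mgf_bound (n : ℕ) (hn : n < N) (x : Fin N → ℝ) (μ : ℝ) (hμN : (N:ℝ) * μ = ∑ i, x i)
    (a b : ℝ) (hab : a < b) (hax : ∀ i, a ≤ x i) (hxb : ∀ i, x i ≤ b) (lam : ℝ) :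
    ∀ k, k ≤ n → ∑ e : Equiv.Perm (Fin N), Real.exp (lam * Zf x μ k e)
      ≤ (Nat.factorial N : ℝ) *
        Real.exp (lam^2 * (b-a)^2 / 8 * ∑ i ∈ Finset.range k, 1 / ((N:ℝ) - i - 1)^2) := by
  intro k
  induction k with
  | zero =>
    intro _
    simp only [Zf_zero, mul_zero, Real.exp_zero, Finset.sum_const, Finset.range_zero,
      Finset.sum_empty, Finset.card_univ]
    rw [Fintype.card_perm, Fintype.card_fin]
    simp
  | succ k ih =>
    intro hkn
    have hk1 : k + 1 < N := lt_of_le_of_lt hkn hn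
    have hih := ih (le_of_lt (Nat.lt_of_succ_le hkn))
    calc ∑ e : Equiv.Perm (Fin N), Real.exp (lam * Zf x μ (k+1) e)
        ≤ Real.exp (lam^2 * (b-a)^2 / (8 * ((N:ℝ) - k - 1)^2)) *
            ∑ e : Equiv.Perm (Fin N), Real.exp (lam * Zf x μ k e) :=
          step_le x μ hμN a b hab hax hxb lam hk1
      _ ≤ Real.exp (lam^2 * (b-a)^2 / (8 * ((N:ℝ) - k - 1)^2)) *
            ((Nat.factorial N : ℝ) *
              Real.exp (lam^2 * (b-a)^2 / 8 * ∑ i ∈ Finset.range k, 1 / ((N:ℝ) - i - 1)^2)) :=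
          mul_le_mul_of_nonneg_left hih (Real.exp_pos _).le
      _ = (Nat.factorial N : ℝ) *
            Real.exp (lam^2 * (b-a)^2 / 8 * ∑ i ∈ Finset.range (k+1), 1 / ((N:ℝ) - i - 1)^2) := by
          rw [Finset.sum_range_succ]
          generalize hDgen : (N:ℝ) - k - 1 = D
          have hsplit : lam^2*(b-a)^2/8 *
                ((∑ i ∈ Finset.range k, 1/((N:ℝ)-i-1)^2) + 1/D^2)
              = lam^2*(b-a)^2/8 * (∑ i ∈ Finset.range k, 1/((N:ℝ)-i-1)^2)
                + lam^2*(b-a)^2/(8*D^2) := by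
            ring
          rw [hsplit, Real.exp_add]
          ring

end HSaux

namespace HSaux
open Real Finset

variable {N : ℕ}

/-- first hitting event at time `k` -/
noncomputable abbrev Bk (x : Fin N → ℝ) (μ u : ℝ) (k : ℕ) (e : Equiv.Perm (Fin N)) : Prop :=
  u ≤ Zf x μ k e ∧ ∀ j ∈ Finset.Ico 1 k, Zf x μ j e < u

lemma chain (x : Fin N → ℝ) (μ : ℝ) (hμN : (N:ℝ) * μ = ∑ i, x i) (lam u : ℝ)
    (n k : ℕ) (hkn : k ≤ n) (hn : n < N) :
    ∑ e : Equiv.Perm (Fin N), (if Bk x μ u k e then Real.exp (lam * Zf x μ k e) else 0)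
      ≤ ∑ e : Equiv.Perm (Fin N), (if Bk x μ u k e then Real.exp (lam * Zf x μ n e) else 0) := by
  have main : ∀ m, k ≤ m → m ≤ n →
      ∑ e : Equiv.Perm (Fin N), (if Bk x μ u k e then Real.exp (lam * Zf x μ k e) else 0)
        ≤ ∑ e : Equiv.Perm (Fin N), (if Bk x μ u k e then Real.exp (lam * Zf x μ m e) else 0) := by
    intro m
    induction m with
    | zero => intro hk0 _; have : k = 0 := Nat.le_zero.1 hk0; subst this; exact le_rfl
    | succ m ih =>
      intro hkm1 hm1n
      rcases Nat.lt_or_ge k (m+1) with hlt | hge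
      · have hkm : k ≤ m := Nat.lt_succ_iff.1 hlt
        have hm1N : m + 1 < N := lt_of_le_of_lt hm1n hn
        refine le_trans (ih hkm (le_trans (Nat.le_succ m) hm1n)) ?_
        apply step_ge x μ hμN lam hm1N
        intro e σ hσ
        have hZ : ∀ j, j ≤ m → Zf x μ j (e * σ) = Zf x μ j e := by
          intro j hj
          unfold Zf
          rw [pre_inv x μ j e σ (fun i hi => hσ i (lt_of_lt_of_le hi hj))]
        constructor
        · rintro ⟨h1, h2⟩
          refine ⟨by rwa [hZ k hkm] at h1, fun j hj => ?_⟩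
          have hjk := (Finset.mem_Ico.1 hj).2
          rw [← hZ j (le_trans (le_of_lt hjk) hkm)]
          exact h2 j hj
        · rintro ⟨h1, h2⟩
          refine ⟨by rwa [hZ k hkm], fun j hj => ?_⟩
          have hjk := (Finset.mem_Ico.1 hj).2
          rw [hZ j (le_trans (le_of_lt hjk) hkm)]
          exact h2 j hj
      · have : k = m + 1 := le_antisymm hkm1 hge
        subst this; exact le_rfl
  exact main n hkn le_rfl

lemma exists_first (x : Fin N → ℝ) (μ u : ℝ) (n : ℕ) (e : Equiv.Perm (Fin N))
    (h : ∃ k ∈ Finset.Icc 1 n, u ≤ Zf x μ k e) :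
    ∃ k ∈ Finset.Icc 1 n, Bk x μ u k e := by
  have hQ : ∃ k, 1 ≤ k ∧ k ≤ n ∧ u ≤ Zf x μ k e := by
    obtain ⟨k, hk, hu⟩ := h
    exact ⟨k, (Finset.mem_Icc.1 hk).1, (Finset.mem_Icc.1 hk).2, hu⟩
  set k0 := Nat.find hQ with hk0
  obtain ⟨h1, h2, h3⟩ := Nat.find_spec hQ
  refine ⟨k0, Finset.mem_Icc.2 ⟨h1, h2⟩, h3, ?_⟩
  intro j hj
  obtain ⟨hj1, hjk⟩ := Finset.mem_Ico.1 hj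
  by_contra hcon
  push_neg at hcon
  exact Nat.find_min hQ hjk ⟨hj1, le_trans (le_of_lt hjk) h2, hcon⟩

lemma at_most_one (x : Fin N → ℝ) (μ u : ℝ) (n : ℕ) (e : Equiv.Perm (Fin N)) :
    ((Finset.Icc 1 n).filter (fun k => Bk x μ u k e)).card ≤ 1 := by
  apply Finset.card_le_one.2
  intro k hk k' hk'
  obtain ⟨hkm, hB⟩ := Finset.mem_filter.1 hk
  obtain ⟨hkm', hB'⟩ := Finset.mem_filter.1 hk'
  by_contra hne
  rcases Nat.lt_or_ge k k' with hlt | hge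
  · exact absurd hB.1 (not_le.2 (hB'.2 k (Finset.mem_Ico.2 ⟨(Finset.mem_Icc.1 hkm).1, hlt⟩)))
  · have hlt : k' < k := lt_of_le_of_ne hge (fun h => hne h.symm)
    exact absurd hB'.1 (not_le.2 (hB.2 k' (Finset.mem_Ico.2 ⟨(Finset.mem_Icc.1 hkm').1, hlt⟩)))

lemma doob (x : Fin N → ℝ) (μ : ℝ) (hμN : (N:ℝ) * μ = ∑ i, x i) (lam u : ℝ) (hlam : 0 ≤ lam)
    (n : ℕ) (hn : n < N) (E : Finset (Equiv.Perm (Fin N)))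
    (hEmem : ∀ e ∈ E, ∃ k ∈ Finset.Icc 1 n, u ≤ Zf x μ k e) :
    (E.card : ℝ) * Real.exp (lam * u)
      ≤ ∑ e : Equiv.Perm (Fin N), Real.exp (lam * Zf x μ n e) := by
  have h1 : (E.card : ℝ) * Real.exp (lam * u) = ∑ _e ∈ E, Real.exp (lam * u) := by
    rw [Finset.sum_const, nsmul_eq_mul]
  rw [h1]
  have h2 : ∀ e ∈ E,
      Real.exp (lam * u)
        ≤ ∑ k ∈ Finset.Icc 1 n, (if Bk x μ u k e then Real.exp (lam * u) else 0) := by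
    intro e heE
    have he : ∃ k ∈ Finset.Icc 1 n, u ≤ Zf x μ k e := hEmem e heE
    obtain ⟨k0, hk0, hBk0⟩ := exists_first x μ u n e he
    calc Real.exp (lam * u)
        = (if Bk x μ u k0 e then Real.exp (lam * u) else 0) := (if_pos hBk0).symm
      _ ≤ ∑ k ∈ Finset.Icc 1 n, (if Bk x μ u k e then Real.exp (lam * u) else 0) :=
          Finset.single_le_sum (f := fun k => if Bk x μ u k e then Real.exp (lam * u) else 0)
            (fun k _ => by positivity) hk0
  calc ∑ _e ∈ E, Real.exp (lam * u)
      ≤ ∑ e ∈ E, ∑ k ∈ Finset.Icc 1 n,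
          (if Bk x μ u k e then Real.exp (lam * u) else 0) := Finset.sum_le_sum h2
    _ ≤ ∑ e : Equiv.Perm (Fin N), ∑ k ∈ Finset.Icc 1 n,
          (if Bk x μ u k e then Real.exp (lam * u) else 0) := by
        apply Finset.sum_le_sum_of_subset_of_nonneg (Finset.subset_univ E)
        intro e _ _
        exact Finset.sum_nonneg (fun k _ => by positivity)
    _ = ∑ k ∈ Finset.Icc 1 n, ∑ e : Equiv.Perm (Fin N),
          (if Bk x μ u k e then Real.exp (lam * u) else 0) := Finset.sum_comm
    _ ≤ ∑ k ∈ Finset.Icc 1 n, ∑ e : Equiv.Perm (Fin N),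
          (if Bk x μ u k e then Real.exp (lam * Zf x μ k e) else 0) := by
        apply Finset.sum_le_sum
        intro k _
        apply Finset.sum_le_sum
        intro e _
        by_cases hB : Bk x μ u k e
        · rw [if_pos hB, if_pos hB]
          exact Real.exp_le_exp.2 (mul_le_mul_of_nonneg_left hB.1 hlam)
        · rw [if_neg hB, if_neg hB]
    _ ≤ ∑ k ∈ Finset.Icc 1 n, ∑ e : Equiv.Perm (Fin N),
          (if Bk x μ u k e then Real.exp (lam * Zf x μ n e) else 0) := by
        apply Finset.sum_le_sum
        intro k hk
        exact chain x μ hμN lam u n k (Finset.mem_Icc.1 hk).2 hn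
    _ = ∑ e : Equiv.Perm (Fin N), ∑ k ∈ Finset.Icc 1 n,
          (if Bk x μ u k e then Real.exp (lam * Zf x μ n e) else 0) := Finset.sum_comm
    _ ≤ ∑ e : Equiv.Perm (Fin N), Real.exp (lam * Zf x μ n e) := by
        apply Finset.sum_le_sum
        intro e _
        have hrc : ∑ k ∈ Finset.Icc 1 n, (if Bk x μ u k e then Real.exp (lam * Zf x μ n e) else 0)
            = (((Finset.Icc 1 n).filter (fun k => Bk x μ u k e)).card : ℝ)
              * Real.exp (lam * Zf x μ n e) := by
          rw [← Finset.sum_filter, Finset.sum_const, nsmul_eq_mul]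
        rw [hrc]
        calc (((Finset.Icc 1 n).filter (fun k => Bk x μ u k e)).card : ℝ)
              * Real.exp (lam * Zf x μ n e)
            ≤ 1 * Real.exp (lam * Zf x μ n e) := by
              apply mul_le_mul_of_nonneg_right _ (Real.exp_pos _).le
              exact_mod_cast at_most_one x μ u n e
          _ = Real.exp (lam * Zf x μ n e) := one_mul _
end HSaux

namespace HSaux
open Real Finset

lemma serfling_sum (N : ℕ) : ∀ n : ℕ, 1 ≤ n → n < N →
    ∑ i ∈ Finset.range n, 1/((N:ℝ)-i-1)^2 ≤ n * ((N:ℝ)-n+1)/((N:ℝ)*((N:ℝ)-n)^2) := by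
  intro n
  induction n with
  | zero => intro h _; exact absurd h (by omega)
  | succ n ih =>
    intro _ hn1N
    rcases Nat.eq_zero_or_pos n with rfl | hn0
    · -- base case n = 1
      have hN : (1:ℝ) < N := by exact_mod_cast hn1N
      have hNpos : (0:ℝ) < N := by linarith
      have hne1 : (N:ℝ) - 1 ≠ 0 := by intro h; linarith
      have hne0 : (N:ℝ) ≠ 0 := by intro h; linarith
      apply le_of_eq
      rw [Finset.sum_range_succ, Finset.sum_range_zero, zero_add]
      push_cast
      field_simp
      rw [sub_zero, mul_div_assoc, div_self (pow_ne_zero 2 hne1)]; ring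
    · have hnN : n < N := Nat.lt_of_succ_lt hn1N
      have hih := ih hn0 hnN
      rw [Finset.sum_range_succ]
      -- real abbreviations
      have hm2 : (2:ℝ) ≤ (N:ℝ) - n := by
        have : n + 2 ≤ N := hn1N
        have h2 : ((n:ℝ) + 2) ≤ N := by exact_mod_cast this
        linarith
      set m : ℝ := (N:ℝ) - n with hm
      have hn0' : (1:ℝ) ≤ n := by exact_mod_cast hn0
      have hNpos : (0:ℝ) < N := by
        have : (0:ℕ) < N := Nat.lt_of_lt_of_le (Nat.lt_of_lt_of_le Nat.zero_lt_one hn0) hnN.le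
        exact_mod_cast this
      have hmpos : (0:ℝ) < m := by linarith
      have hm1pos : (0:ℝ) < m - 1 := by linarith
      have hterm : (N:ℝ) - (n:ℝ) - 1 = m - 1 := by rw [hm]
      have hstep : (n:ℝ) * (m+1)/((N:ℝ)*m^2) + 1/(m-1)^2
          ≤ ((n:ℝ)+1) * m/((N:ℝ)*(m-1)^2) := by
        rw [div_add_div _ _ (by positivity) (by positivity), div_le_div_iff₀ (by positivity) (by positivity)]
        have hNnm : (N:ℝ) = n + m := by rw [hm]; ring
        have hcore : (n:ℝ)*(m+1)*(m-1)^2 + (N:ℝ)*m^2 ≤ ((n:ℝ)+1)*m^3 := by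
          rw [hNnm]
          nlinarith [mul_nonneg (by linarith : (0:ℝ) ≤ (n:ℝ)) hm1pos.le]
        have hmul := mul_le_mul_of_nonneg_right hcore
          (le_of_lt (by positivity : (0:ℝ) < (N:ℝ)*(m-1)^2))
        nlinarith [hmul]
      have hcast : ((n:ℕ)+1:ℕ) = ((n:ℝ)+1 : ℝ) := by push_cast; ring
      calc (∑ i ∈ Finset.range n, 1/((N:ℝ)-i-1)^2) + 1/((N:ℝ)-n-1)^2
          ≤ (n:ℝ) * ((N:ℝ)-n+1)/((N:ℝ)*((N:ℝ)-n)^2) + 1/((N:ℝ)-n-1)^2 := by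
            exact add_le_add hih le_rfl
        _ = (n:ℝ) * (m+1)/((N:ℝ)*m^2) + 1/(m-1)^2 := by rw [hterm, ← hm]
        _ ≤ ((n:ℝ)+1) * m/((N:ℝ)*(m-1)^2) := hstep
        _ = ((n+1:ℕ):ℝ) * ((N:ℝ)-(n+1:ℕ)+1)/((N:ℝ)*((N:ℝ)-(n+1:ℕ))^2) := by
            push_cast
            rw [hm]
            ring_nf

end HSaux

namespace HSaux
open Real Finset

lemma comb_main {N : ℕ} (n : ℕ) (hn1 : 1 ≤ n) (hn : n < N) (x : Fin N → ℝ) (μ : ℝ)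
    (hμN : (N:ℝ) * μ = ∑ i, x i) (a b : ℝ) (hab : a < b)
    (hax : ∀ i, a ≤ x i) (hxb : ∀ i, x i ≤ b) (ε : ℝ) (hε : 0 < ε)
    (E : Finset (Equiv.Perm (Fin N)))
    (hEmem : ∀ e ∈ E, ∃ k ∈ Finset.Icc 1 n, (n * ε / ((N:ℝ) - n)) ≤ Zf x μ k e) :
    (E.card : ℝ) ≤ (Nat.factorial N : ℝ) *
      Real.exp (-(2 * n * ε ^ 2) / ((1 - ((n:ℝ) - 1) / N) * (b - a) ^ 2)) := by
  have hNn : (0:ℝ) < (N:ℝ) - n := by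
    have : (n:ℝ) < N := by exact_mod_cast hn
    linarith
  have hNpos : (0:ℝ) < (N:ℝ) := by
    have : (0:ℕ) < N := by omega
    exact_mod_cast this
  have hnpos : (0:ℝ) < n := by exact_mod_cast hn1
  set u : ℝ := n * ε / ((N:ℝ) - n) with hu_def
  have hu : 0 < u := by positivity
  set S : ℝ := ∑ i ∈ Finset.range n, 1/((N:ℝ)-i-1)^2 with hS_def
  have hSpos : 0 < S := by
    rw [hS_def]
    apply Finset.sum_pos
    · intro i hi
      have hiN : (i:ℝ) < (N:ℝ) - 1 := by
        have h1 : i < n := Finset.mem_range.1 hi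
        have : (i:ℝ) < n := by exact_mod_cast h1
        have : (n:ℝ) ≤ (N:ℝ) - 1 := by
          have : n + 1 ≤ N := hn
          have h2 : ((n:ℝ) + 1) ≤ N := by exact_mod_cast this
          linarith
        linarith
      have : (0:ℝ) < (N:ℝ) - i - 1 := by linarith
      positivity
    · exact Finset.nonempty_range_iff.2 (by omega)
  have hba : (0:ℝ) < b - a := by linarith
  set Q : ℝ := (b-a)^2 * S with hQ_def
  have hQpos : 0 < Q := by rw [hQ_def]; positivity
  set lam : ℝ := 4 * u / Q with hlam_def
  have hlam : 0 < lam := by positivity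
  -- Doob + mgf
  have hdoob := doob x μ hμN lam u hlam.le n hn E hEmem
  have hmgf := mgf_bound n hn x μ hμN a b hab hax hxb lam n le_rfl
  have hcomb : (E.card : ℝ) * Real.exp (lam * u)
      ≤ (Nat.factorial N : ℝ) * Real.exp (lam^2 * (b-a)^2 / 8 * S) := le_trans hdoob hmgf
  have hcard : (E.card : ℝ) ≤ (Nat.factorial N : ℝ) *
      Real.exp (lam^2 * (b-a)^2 / 8 * S - lam * u) := by
    have h2 : (E.card : ℝ)
        = (E.card : ℝ) * Real.exp (lam * u) * Real.exp (-(lam * u)) := by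
      rw [mul_assoc, ← Real.exp_add]
      simp
    rw [h2, Real.exp_sub]
    calc (E.card : ℝ) * Real.exp (lam * u) * Real.exp (-(lam * u))
        ≤ (Nat.factorial N : ℝ) * Real.exp (lam^2 * (b-a)^2 / 8 * S) * Real.exp (-(lam * u)) :=
          mul_le_mul_of_nonneg_right hcomb (Real.exp_pos _).le
      _ = (Nat.factorial N : ℝ) * (Real.exp (lam^2 * (b-a)^2 / 8 * S) / Real.exp (lam * u)) := by
          rw [Real.exp_neg]
          ring
  -- exponent computation : lam^2 * (b-a)^2/8 * S - lam*u = -(2*u^2)/Q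
  have hexpeq : lam^2 * (b-a)^2 / 8 * S - lam * u = -(2*u^2)/Q := by
    rw [hlam_def, hQ_def]
    have hSne : S ≠ 0 := ne_of_gt hSpos
    have hbane : (b-a) ≠ 0 := ne_of_gt hba
    field_simp
    ring
  -- compare exponents using serfling_sum
  have hserf := serfling_sum N n hn1 hn
  rw [← hS_def] at hserf
  have hc1 : (1 - ((n:ℝ) - 1) / N) = ((N:ℝ) - n + 1) / N := by
    field_simp
    ring
  have hfinal : -(2*u^2)/Q ≤ -(2 * n * ε ^ 2) / ((1 - ((n:ℝ) - 1) / N) * (b - a) ^ 2) := by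
    rw [hc1]
    have hpos1 : (0:ℝ) < ((N:ℝ) - n + 1) / N * (b - a) ^ 2 := by positivity
    have key : 2*n*ε^2/(((N:ℝ)-n+1)/N*(b-a)^2) ≤ 2*u^2/Q := by
      rw [div_le_div_iff₀ hpos1 hQpos]
      calc 2*(n:ℝ)*ε^2 * Q
          = 2*(n:ℝ)*ε^2*((b-a)^2*S) := by rw [hQ_def]
        _ ≤ 2*(n:ℝ)*ε^2*((b-a)^2*((n:ℝ)*((N:ℝ)-n+1)/((N:ℝ)*((N:ℝ)-n)^2))) := by
            apply mul_le_mul_of_nonneg_left _ (by positivity)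
            exact mul_le_mul_of_nonneg_left hserf (by positivity)
        _ = 2*u^2 * (((N:ℝ)-n+1)/N*(b-a)^2) := by
            rw [hu_def]
            field_simp
    rw [neg_div, neg_div]
    exact neg_le_neg key
  calc (E.card : ℝ) ≤ (Nat.factorial N : ℝ) *
        Real.exp (lam^2 * (b-a)^2 / 8 * S - lam * u) := hcard
    _ ≤ (Nat.factorial N : ℝ) *
        Real.exp (-(2 * n * ε ^ 2) / ((1 - ((n:ℝ) - 1) / N) * (b - a) ^ 2)) := by
        apply mul_le_mul_of_nonneg_left _ (by positivity)
        rw [hexpeq]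
        exact Real.exp_le_exp.2 hfinal

end HSaux


namespace HSaux
open Real Finset

lemma range_filter_sum {N : ℕ} {k : ℕ} (hk : k ≤ N) (w : ℕ → ℝ) :
    ∑ t ∈ Finset.range k, w t
      = ∑ t ∈ Finset.univ.filter (fun t : Fin N => (t:ℕ) < k), w t := by
  have himg : (Finset.univ.filter (fun t : Fin N => (t:ℕ) < k)).image Fin.val
      = Finset.range k := by
    ext m
    simp only [Finset.mem_image, Finset.mem_filter, Finset.mem_univ, true_and,
      Finset.mem_range]
    constructor
    · rintro ⟨t, ht, rfl⟩; exact ht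
    · intro hm; exact ⟨⟨m, lt_of_lt_of_le hm hk⟩, hm, rfl⟩
  rw [← himg, Finset.sum_image (by intro p _ q _ h; exact Fin.ext h)]

end HSaux

open HSaux in
/-- measure reduction + final bound -/
theorem hoeffding_serfling_second'
    {Ω : Type*} [MeasurableSpace Ω] (P : Measure Ω) [IsProbabilityMeasure P]
    (N n : ℕ) (hN : 1 < N) (hn1 : 1 ≤ n) (hn : n < N) (x : Fin N → ℝ)
    (X : ℕ → Ω → ℝ) (hXm : ∀ i, Measurable (X i))
    (hX : samplesWithoutReplacement P N x X)
    (a b : ℝ) (ha : IsLeast (Set.range x) a) (hb : IsGreatest (Set.range x) b)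
    (μ : ℝ) (hμ : μ = (∑ i, x i) / N)
    (ε : ℝ) (hε : 0 < ε) :
    P {ω | (Finset.Icc 1 n).sup' (Finset.nonempty_Icc.2 hn1)
          (fun k => (∑ t ∈ Finset.range k, (X t ω - μ)) / ((N : ℝ) - k)) ≥
          (n : ℝ) * ε / ((N : ℝ) - n)} ≤
      ENNReal.ofReal (Real.exp (-(2 * n * ε ^ 2) /
        ((1 - ((n : ℝ) - 1) / N) * (b - a) ^ 2))) := by
  classical
  have hNpos : (0:ℝ) < N := by
    have : (0:ℕ) < N := by omega
    exact_mod_cast this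
  have hμN : (N:ℝ) * μ = ∑ i, x i := by
    rw [hμ]; field_simp
  have hax : ∀ i, a ≤ x i := fun i => ha.2 ⟨i, rfl⟩
  have hxb : ∀ i, x i ≤ b := fun i => hb.2 ⟨i, rfl⟩
  set u : ℝ := (n : ℝ) * ε / ((N : ℝ) - n) with hu_def
  set g : ℕ → (Fin N → ℝ) → ℝ := fun k f =>
    (∑ t ∈ Finset.univ.filter (fun t : Fin N => (t:ℕ) < k), (f t - μ)) / ((N:ℝ) - k)
    with hg_def
  set T : Set (Fin N → ℝ) := {f | ∃ k ∈ Finset.Icc 1 n, u ≤ g k f} with hT_def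
  have hTmeas : MeasurableSet T := by
    have hTeq : T = ⋃ k ∈ (Finset.Icc 1 n : Finset ℕ), {f | u ≤ g k f} := by
      ext f
      simp only [hT_def, Set.mem_setOf_eq, Set.mem_iUnion, exists_prop]
    rw [hTeq]
    apply Finset.measurableSet_biUnion
    intro k _
    apply measurableSet_le measurable_const
    apply Measurable.div_const
    apply Finset.measurable_sum
    intro t _
    exact (measurable_pi_apply t).sub measurable_const
  -- event rewriting
  have hevent : {ω | (Finset.Icc 1 n).sup' (Finset.nonempty_Icc.2 hn1)
        (fun k => (∑ t ∈ Finset.range k, (X t ω - μ)) / ((N : ℝ) - k)) ≥ u}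
      = (fun ω (i : Fin N) => X i ω) ⁻¹' T := by
    ext ω
    simp only [Set.mem_setOf_eq, Set.mem_preimage, hT_def, ge_iff_le]
    rw [Finset.le_sup'_iff]
    constructor
    · rintro ⟨k, hk, hle⟩
      refine ⟨k, hk, ?_⟩
      have := range_filter_sum (N := N) (le_of_lt (lt_of_le_of_lt (Finset.mem_Icc.1 hk).2 hn))
        (fun t => X t ω - μ)
      rw [hg_def]
      simp only at this ⊢
      rw [← this]
      exact hle
    · rintro ⟨k, hk, hle⟩
      refine ⟨k, hk, ?_⟩
      have := range_filter_sum (N := N) (le_of_lt (lt_of_le_of_lt (Finset.mem_Icc.1 hk).2 hn))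
        (fun t => X t ω - μ)
      rw [hg_def] at hle
      simp only at this hle ⊢
      rw [this]
      exact hle
  rw [hevent]
  have hmeas_map : Measurable (fun ω (i : Fin N) => X i ω) :=
    measurable_pi_lambda _ (fun i => hXm i)
  rw [← Measure.map_apply hmeas_map hTmeas, hX, Measure.smul_apply,
    Measure.finset_sum_apply]
  have hdirac : ∀ e : Equiv.Perm (Fin N),
      Measure.dirac (fun i => x (e i)) T = if (fun i => x (e i)) ∈ T then 1 else 0 := by
    intro e
    rw [MeasureTheory.Measure.dirac_apply' _ hTmeas]
    simp [Set.indicator_apply]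
  rw [Finset.sum_congr rfl (fun e _ => hdirac e)]
  rw [Finset.sum_boole]
  set E : Finset (Equiv.Perm (Fin N)) :=
    Finset.univ.filter (fun e => (fun i => x (e i)) ∈ T) with hE_def
  -- membership in E gives the combinatorial event
  have hEmem : ∀ e ∈ E, ∃ k ∈ Finset.Icc 1 n, u ≤ Zf x μ k e := by
    intro e he
    obtain ⟨k, hk, hle⟩ := (Finset.mem_filter.1 he).2
    exact ⟨k, hk, hle⟩
  -- real cardinality bound
  have hreal : (E.card : ℝ) ≤ (Nat.factorial N : ℝ) *
      Real.exp (-(2 * n * ε ^ 2) / ((1 - ((n:ℝ) - 1) / N) * (b - a) ^ 2)) := by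
    rcases lt_or_eq_of_le (le_trans (hax ⟨0, by omega⟩) (hxb ⟨0, by omega⟩)) with hab | hab
    · exact comb_main n hn1 hn x μ hμN a b hab hax hxb ε hε E hEmem
    · -- degenerate case a = b
      have hxa : ∀ i, x i = a := fun i => le_antisymm (hab ▸ hxb i) (hax i)
      have hμa : μ = a := by
        rw [hμ]
        have : ∑ i, x i = N * a := by
          rw [Finset.sum_congr rfl (fun i _ => hxa i), Finset.sum_const, Finset.card_univ,
            Fintype.card_fin, nsmul_eq_mul]
        rw [this]
        field_simp
      have hZ : ∀ k e, Zf x μ k e = 0 := by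
        intro k e
        unfold Zf pre
        rw [Finset.sum_congr rfl (fun t _ => by rw [hxa, hμa, sub_self])]
        simp
      have hu : 0 < u := by
        have hNn : (0:ℝ) < (N:ℝ) - n := by
          have : (n:ℝ) < N := by exact_mod_cast hn
          linarith
        have : (0:ℝ) < (n:ℝ) := by exact_mod_cast hn1
        positivity
      have hEempty : E = ∅ := by
        rw [Finset.eq_empty_iff_forall_notMem]
        intro e he
        obtain ⟨k, _, hle⟩ := hEmem e he
        rw [hZ k e] at hle
        linarith
      rw [hEempty]
      simp only [Finset.card_empty, Nat.cast_zero]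
      positivity
  -- conversion to ℝ≥0∞
  have hfac0 : ((Nat.factorial N : ℝ≥0∞)) ≠ 0 := by
    simp [Nat.factorial_ne_zero]
  have hfactop : ((Nat.factorial N : ℝ≥0∞)) ≠ ⊤ := ENNReal.natCast_ne_top _
  rw [smul_eq_mul]
  rw [ENNReal.inv_mul_le_iff hfac0 hfactop]
  calc ((E.card : ℝ≥0∞))
      = ENNReal.ofReal (E.card : ℝ) := by
        rw [ENNReal.ofReal_natCast]
    _ ≤ ENNReal.ofReal ((Nat.factorial N : ℝ) *
          Real.exp (-(2 * n * ε ^ 2) / ((1 - ((n:ℝ) - 1) / N) * (b - a) ^ 2))) :=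
        ENNReal.ofReal_le_ofReal hreal
    _ = (Nat.factorial N : ℝ≥0∞) * ENNReal.ofReal (Real.exp (-(2 * n * ε ^ 2) /
          ((1 - ((n:ℝ) - 1) / N) * (b - a) ^ 2))) := by
        rw [ENNReal.ofReal_mul (by positivity), ENNReal.ofReal_natCast]

/-- Hoeffding–Serfling inequality, second part (Theorem 1 of Bardenet–Maillard). -/
theorem hoeffding_serfling_second
    {Ω : Type*} [MeasurableSpace Ω] (P : Measure Ω) [IsProbabilityMeasure P]
    (N n : ℕ) (hN : 1 < N) (hn1 : 1 ≤ n) (hn : n < N) (x : Fin N → ℝ)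
    (X : ℕ → Ω → ℝ) (hXm : ∀ i, Measurable (X i))
    (hX : samplesWithoutReplacement P N x X)
    (a b : ℝ) (ha : IsLeast (Set.range x) a) (hb : IsGreatest (Set.range x) b)
    (μ : ℝ) (hμ : μ = (∑ i, x i) / N)
    (ε : ℝ) (hε : 0 < ε) :
    P {ω | (Finset.Icc 1 n).sup' (Finset.nonempty_Icc.2 hn1)
          (fun k => (∑ t ∈ Finset.range k, (X t ω - μ)) / ((N : ℝ) - k)) ≥
          (n : ℝ) * ε / ((N : ℝ) - n)} ≤
      ENNReal.ofReal (Real.exp (-(2 * n * ε ^ 2) /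
        ((1 - ((n : ℝ) - 1) / N) * (b - a) ^ 2))) :=
  hoeffding_serfling_second' P N n hN hn1 hn x X hXm hX a b ha hb μ hμ ε hε
end

section
/- Let X_1,...,X_n be sampled without replacement from a finite population of N ≥ 2 reals with mean μ, range [a,b]. Define ρ_n = 1 − (n−1)/N if n ≤ N/2 and ρ_n = (1 − n/N)(1 + 1/n) if n > N/2. Then for all n ≤ N and δ ∈ (0,1], with probability at least 1 − δ, (1/n)∑_{t=1}^n (X_t − μ) ≤ (b−a)√(ρ_n log(1/δ)/(2n)). -/
set_option maxHeartbeats 1000000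


open MeasureTheory Finset Real
open scoped ENNReal

private lemma amgm_aux (p q A B : ℝ) : p * q * (B * A) ≤ 1/4 * (q * A + p * B)^2 := by
  nlinarith [sq_nonneg (q*A - p*B)]

lemma hoeffding_core (p : ℝ) (hp0 : 0 ≤ p) (hp1 : p ≤ 1) (u : ℝ) :
    (1 - p) * exp (-p * u) + p * exp ((1 - p) * u) ≤ exp (u ^ 2 / 8) := by
  set q : ℝ := 1 - p with hq
  have hq0 : 0 ≤ q := by simp [hq]; linarith
  set g : ℝ → ℝ := fun u => q * exp (-p * u) + p * exp (q * u) with hgdef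
  have gpos : ∀ u, 0 < g u := by
    intro u
    have hA := exp_pos (-p * u); have hB := exp_pos (q * u)
    rcases le_or_gt (exp (-p*u)) (exp (q*u)) with hle | hlt
    · have : q * exp (-p*u) + p * exp (-p*u) ≤ g u := by
        simp only [hgdef]; nlinarith
      nlinarith
    · have : q * exp (q*u) + p * exp (q*u) ≤ g u := by
        simp only [hgdef]; nlinarith
      nlinarith
  have hgd : ∀ u, HasDerivAt g (p * q * (exp (q * u) - exp (-p * u))) u := by
    intro u
    have h1 : HasDerivAt (fun u => exp (-p * u)) (-p * exp (-p * u)) u := by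
      simpa [mul_comm] using (((hasDerivAt_id u).const_mul (-p)).exp)
    have h2 : HasDerivAt (fun u => exp (q * u)) (q * exp (q * u)) u := by
      simpa [mul_comm] using (((hasDerivAt_id u).const_mul q).exp)
    have := (h1.const_mul q).add (h2.const_mul p)
    refine this.congr_deriv ?_; ring
  set h : ℝ → ℝ := fun u => p * q * (exp (q * u) - exp (-p * u)) / g u with hhdef
  have hfd : ∀ u, HasDerivAt (fun u => log (g u)) (h u) u := by
    intro u
    exact (hgd u).log (gpos u).ne'
  have hhd : ∀ u, HasDerivAt h (p * q * (exp (q*u) * exp (-p*u)) / (g u)^2) u := by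
    intro u
    have hnum : HasDerivAt (fun u => p * q * (exp (q * u) - exp (-p * u)))
        (p * q * (q * exp (q*u) + p * exp (-p*u))) u := by
      have h1 : HasDerivAt (fun u => exp (-p * u)) (-p * exp (-p * u)) u := by
        simpa [mul_comm] using (((hasDerivAt_id u).const_mul (-p)).exp)
      have h2 : HasDerivAt (fun u => exp (q * u)) (q * exp (q * u)) u := by
        simpa [mul_comm] using (((hasDerivAt_id u).const_mul q).exp)
      have := (h2.sub h1).const_mul (p * q)
      refine this.congr_deriv ?_; ring
    have := hnum.div (hgd u) (gpos u).ne'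
    refine this.congr_deriv ?_
    have hg : g u = q * exp (-p * u) + p * exp (q * u) := rfl
    rw [hg]
    field_simp
    ring
  have hbound : ∀ u, deriv h u ≤ 1/4 := by
    intro u
    rw [(hhd u).deriv]
    rw [div_le_iff₀ (pow_pos (gpos u) 2)]
    have hg : g u = q * exp (-p * u) + p * exp (q * u) := rfl
    rw [hg]
    exact amgm_aux p q (exp (-p*u)) (exp (q*u))
  -- G u := u/4 - h u is monotone
  set G : ℝ → ℝ := fun u => u/4 - h u with hGdef
  have hGd : ∀ u, HasDerivAt G (1/4 - deriv h u) u := by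
    intro u
    exact ((hasDerivAt_id u).div_const 4).sub ((hhd u).deriv ▸ (hhd u))
  have hGmono : Monotone G := by
    apply monotone_of_deriv_nonneg
    · exact fun u => (hGd u).differentiableAt
    · intro u
      rw [(hGd u).deriv]
      linarith [hbound u]
  have hG0 : G 0 = 0 := by
    simp [hGdef, hhdef]
  -- F u := u^2/8 - log (g u)
  set F : ℝ → ℝ := fun u => u^2/8 - log (g u) with hFdef
  have hFd : ∀ u, HasDerivAt F (G u) u := by
    intro u
    have h1 : HasDerivAt (fun u : ℝ => u^2/8) (u/4) u := by
      have := (hasDerivAt_pow 2 u).div_const 8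
      norm_num at this
      refine this.congr_deriv ?_
      ring
    exact h1.sub (hfd u)
  have hF : ∀ u, 0 ≤ F u := by
    intro u
    have hFc : Continuous F := by
      have : Differentiable ℝ F := fun u => (hFd u).differentiableAt
      exact this.continuous
    rcases le_or_gt 0 u with hu | hu
    · have := monotoneOn_of_deriv_nonneg (convex_Ici 0) hFc.continuousOn
        (fun x _ => (hFd x).differentiableAt.differentiableWithinAt)
        (fun x hx => by
          rw [(hFd x).deriv]
          have : (0:ℝ) ≤ x := le_of_lt (by simpa using hx)
          calc (0:ℝ) = G 0 := hG0.symm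
          _ ≤ G x := hGmono this)
        (Set.self_mem_Ici) (Set.mem_Ici.2 hu) hu
      have hF0 : F 0 = 0 := by simp [hFdef, hgdef, hq]
      linarith
    · have := antitoneOn_of_deriv_nonpos (convex_Iic 0) hFc.continuousOn
        (fun x _ => (hFd x).differentiableAt.differentiableWithinAt)
        (fun x hx => by
          rw [(hFd x).deriv]
          have hx0 : x ≤ (0:ℝ) := le_of_lt (by simpa using hx)
          calc G x ≤ G 0 := hGmono hx0
          _ = 0 := hG0)
        (Set.mem_Iic.2 hu.le) (Set.self_mem_Iic) hu.le
      have hF0 : F 0 = 0 := by simp [hFdef, hgdef, hq]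
      linarith
  have hlog : log (g u) ≤ u^2/8 := by
    have := hF u
    simp only [hFdef] at this
    linarith
  calc (1 - p) * exp (-p * u) + p * exp ((1 - p) * u) = g u := rfl
  _ = exp (log (g u)) := (exp_log (gpos u)).symm
  _ ≤ exp (u^2/8) := exp_le_exp.2 hlog

lemma sum_exp_le {ι : Type*} (s : Finset ι) (hs : s.Nonempty) (v : ι → ℝ) (α β t : ℝ)
    (hv : ∀ i ∈ s, v i ∈ Set.Icc α β) :
    ∑ i ∈ s, exp (t * v i) ≤
      (s.card : ℝ) * exp (t * ((∑ i ∈ s, v i) / (s.card : ℝ)) + t^2 * (β - α)^2 / 8) := by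
  obtain ⟨i0, hi0⟩ := hs
  have hc : (0:ℝ) < (s.card : ℝ) := by
    exact_mod_cast Finset.card_pos.2 ⟨i0, hi0⟩
  have hαβ : α ≤ β := le_trans (hv i0 hi0).1 (hv i0 hi0).2
  set m : ℝ := (∑ i ∈ s, v i) / (s.card : ℝ) with hm
  have hms : (∑ i ∈ s, v i) = (s.card:ℝ) * m := by rw [hm]; field_simp
  have hmα : α ≤ m := by
    rw [hm, le_div_iff₀ hc]
    have := Finset.card_nsmul_le_sum s v α (fun i hi => (hv i hi).1)
    simpa [nsmul_eq_mul, mul_comm] using this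
  have hmβ : m ≤ β := by
    rw [hm, div_le_iff₀ hc]
    have := Finset.sum_le_card_nsmul s v β (fun i hi => (hv i hi).2)
    simpa [nsmul_eq_mul, mul_comm] using this
  rcases eq_or_lt_of_le hαβ with heq | hlt
  · subst heq
    have hv' : ∀ i ∈ s, v i = α := fun i hi => le_antisymm (hv i hi).2 (hv i hi).1
    have h2 : m = α := le_antisymm hmβ hmα
    have h1 : ∑ i ∈ s, exp (t * v i) = (s.card:ℝ) * exp (t*α) := by
      rw [Finset.sum_congr rfl (fun i hi => by rw [hv' i hi])]
      simp [nsmul_eq_mul]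
    rw [h1, h2]
    simp
  · set u : ℝ := t * (β - α) with hu
    set p : ℝ := (m - α)/(β - α) with hp
    have hβα : (0:ℝ) < β - α := by linarith
    have hp0 : 0 ≤ p := div_nonneg (by linarith) hβα.le
    have hp1 : p ≤ 1 := (div_le_one hβα).2 (by linarith)
    have core := hoeffding_core p hp0 hp1 u
    have e1 : -p * u = t*α - t*m := by
      rw [hp, hu]; field_simp; ring
    have e2 : (1-p) * u = t*β - t*m := by
      rw [hp, hu]; field_simp; ring
    have hA : exp (t*α) = exp (t*m) * exp (-p * u) := by
      rw [← exp_add, e1]; ring_nf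
    have hB : exp (t*β) = exp (t*m) * exp ((1-p) * u) := by
      rw [← exp_add, e2]; ring_nf
    have hbm : β - m = (β - α) * (1 - p) := by
      rw [hp]; field_simp; ring
    have hma : m - α = (β - α) * p := by
      rw [hp]; field_simp
    have key : (β-m)*exp (t*α) + (m-α)*exp (t*β) ≤ (β-α) * exp (t*m + t^2*(β-α)^2/8) := by
      calc (β-m)*exp (t*α) + (m-α)*exp (t*β)
          = (β-α) * (exp (t*m) * ((1-p)*exp (-p*u) + p*exp ((1-p)*u))) := by
            rw [hA, hB, hbm, hma]; ring
        _ ≤ (β-α) * (exp (t*m) * exp (u^2/8)) := by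
            apply mul_le_mul_of_nonneg_left _ hβα.le
            exact mul_le_mul_of_nonneg_left core (exp_pos _).le
        _ = (β-α) * exp (t*m + t^2*(β-α)^2/8) := by
            rw [← exp_add, hu]; ring_nf
    have pointwise : ∀ i ∈ s, exp (t * v i) ≤
        ((β - v i)*exp (t*α) + (v i - α)*exp (t*β))/(β-α) := by
      intro i hi
      have hvi := hv i hi
      have w1 : (0:ℝ) ≤ (β - v i)/(β-α) := div_nonneg (by linarith [hvi.2]) hβα.le
      have w2 : (0:ℝ) ≤ (v i - α)/(β-α) := div_nonneg (by linarith [hvi.1]) hβα.le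
      have wsum : (β - v i)/(β-α) + (v i - α)/(β-α) = 1 := by field_simp; ring
      have hcvx := convexOn_exp.2 (Set.mem_univ (t*α)) (Set.mem_univ (t*β)) w1 w2 wsum
      simp only [smul_eq_mul] at hcvx
      have harg : (β - v i)/(β-α) * (t*α) + (v i - α)/(β-α) * (t*β) = t * v i := by
        field_simp; ring
      rw [harg] at hcvx
      calc exp (t * v i) ≤ (β - v i)/(β-α) * exp (t*α) + (v i - α)/(β-α) * exp (t*β) := hcvx
        _ = ((β - v i)*exp (t*α) + (v i - α)*exp (t*β))/(β-α) := by ring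
    calc ∑ i ∈ s, exp (t * v i)
        ≤ ∑ i ∈ s, ((β - v i)*exp (t*α) + (v i - α)*exp (t*β))/(β-α) :=
          Finset.sum_le_sum pointwise
      _ = ((s.card:ℝ)*((β-m)*exp (t*α) + (m-α)*exp (t*β)))/(β-α) := by
          rw [← Finset.sum_div]
          congr 1
          rw [Finset.sum_add_distrib, ← Finset.sum_mul, ← Finset.sum_mul,
            Finset.sum_sub_distrib, Finset.sum_sub_distrib, Finset.sum_const, hms]
          simp [nsmul_eq_mul]
          ring
      _ ≤ ((s.card:ℝ)*((β-α) * exp (t*m + t^2*(β-α)^2/8)))/(β-α) := by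
          rw [div_eq_mul_inv, div_eq_mul_inv]
          exact mul_le_mul_of_nonneg_right (mul_le_mul_of_nonneg_left key hc.le) (by positivity)
      _ = (s.card : ℝ) * exp (t * m + t^2 * (β - α)^2 / 8) := by
          rw [mul_left_comm (s.card:ℝ) (β-α), mul_div_cancel_left₀ _ hβα.ne']

private def Sk (N : ℕ) (x : Fin N → ℝ) (k : ℕ) (e : Equiv.Perm (Fin N)) : ℝ :=
  ∑ i ∈ Finset.univ.filter (fun i : Fin N => (i:ℕ) < k), x (e i)

private lemma card_filter_lt_fin (N k : ℕ) :
    (Finset.univ.filter (fun i : Fin N => (i:ℕ) < k)).card = min k N := by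
  rw [Finset.card_filter]
  rw [Fin.sum_univ_eq_sum_range (fun j => if j < k then 1 else 0)]
  rw [← Finset.card_filter]
  have : (Finset.range N).filter (· < k) = Finset.range (min k N) := by
    ext j; simp [Nat.lt_min, and_comm]
  rw [this, Finset.card_range]

private lemma card_filter_ge_fin (N k : ℕ) (hk : k ≤ N) :
    (Finset.univ.filter (fun i : Fin N => k ≤ (i:ℕ))).card = N - k := by
  have h1 : Finset.univ.filter (fun i : Fin N => k ≤ (i:ℕ))
      = (Finset.univ.filter (fun i : Fin N => (i:ℕ) < k))ᶜ := by
    ext i; simp [not_lt]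
  rw [h1, Finset.card_compl, card_filter_lt_fin, Fintype.card_fin, min_eq_left hk]

private lemma Sk_succ (N : ℕ) (x : Fin N → ℝ) (k : ℕ) (hk : k < N) (e : Equiv.Perm (Fin N)) :
    Sk N x (k+1) e = Sk N x k e + x (e ⟨k, hk⟩) := by
  unfold Sk
  have hins : Finset.univ.filter (fun i : Fin N => (i:ℕ) < k+1)
      = insert (⟨k, hk⟩ : Fin N) (Finset.univ.filter (fun i : Fin N => (i:ℕ) < k)) := by
    ext i
    simp only [Finset.mem_filter, Finset.mem_univ, true_and, Finset.mem_insert, Fin.ext_iff]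
    omega
  rw [hins, Finset.sum_insert (by simp)]
  ring

private lemma Sk_comp (N : ℕ) (x : Fin N → ℝ) (k : ℕ) (e σ : Equiv.Perm (Fin N))
    (hσ : ∀ i : Fin N, (i:ℕ) < k → σ i = i) : Sk N x k (e * σ) = Sk N x k e := by
  unfold Sk
  apply Finset.sum_congr rfl
  intro i hi
  simp only [Finset.mem_filter] at hi
  rw [Equiv.Perm.mul_apply, hσ i hi.2]

private lemma Sk_top (N : ℕ) (x : Fin N → ℝ) (e : Equiv.Perm (Fin N)) :
    Sk N x N e = ∑ i, x i := by
  unfold Sk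
  rw [Finset.filter_true_of_mem (fun i _ => i.isLt)]
  exact Equiv.sum_comp e x

private lemma sum_perm_mul {M : Type*} [AddCommMonoid M] (N : ℕ) (σ : Equiv.Perm (Fin N))
    (f : Equiv.Perm (Fin N) → M) :
    ∑ e : Equiv.Perm (Fin N), f (e * σ) = ∑ e : Equiv.Perm (Fin N), f e :=
  Fintype.sum_bijective (· * σ) (Group.mulRight_bijective σ) _ _ (fun _ => rfl)

private lemma mgf_perm (N : ℕ) (x : Fin N → ℝ) (a b : ℝ) (hx : ∀ i, x i ∈ Set.Icc a b)
    (ν : ℝ) (hν : ∑ i, x i = N * ν) :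
    ∀ (k : ℕ), k < N → ∀ t : ℝ,
      ∑ e : Equiv.Perm (Fin N), exp (t * ((Sk N x k e - k*ν)/((N:ℝ) - k))) ≤
        (N.factorial : ℝ) * exp (t^2*(b-a)^2/8 * ∑ j ∈ Finset.range k, (1/((N:ℝ)-(j+1)))^2) := by
  intro k
  induction k with
  | zero =>
    intro _ t
    have h0 : ∀ e : Equiv.Perm (Fin N),
        exp (t * ((Sk N x 0 e - (0:ℕ)*ν)/((N:ℝ) - (0:ℕ)))) = 1 := by
      intro e; simp [Sk]
    rw [Finset.sum_congr rfl (fun e _ => h0 e)]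
    simp [Fintype.card_perm]
  | succ k ih =>
    intro hk1 t
    have hkN : k < N := Nat.lt_of_succ_lt hk1
    have hm : (0:ℝ) < (N:ℝ) - k := by
      have : (k:ℝ) < N := by exact_mod_cast hkN
      linarith
    have hm1 : (0:ℝ) < (N:ℝ) - ((k:ℝ)+1) := by
      have : ((k:ℝ)+1) < N := by exact_mod_cast hk1
      linarith
    set pk : Fin N := ⟨k, hkN⟩ with hpk
    set sk := Finset.univ.filter (fun p : Fin N => k ≤ (p:ℕ)) with hsk
    have hcard : (sk.card : ℝ) = (N:ℝ) - k := by
      rw [hsk, card_filter_ge_fin N k hkN.le]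
      push_cast [Nat.cast_sub hkN.le]
      ring
    have hpk_mem : pk ∈ sk := by simp [hsk, hpk]
    set F : ℝ → ℝ → ℝ :=
      fun s y => exp (t * ((s + y - ((k:ℝ)+1)*ν)/((N:ℝ)-((k:ℝ)+1)))) with hF
    have hstep : ∀ e : Equiv.Perm (Fin N),
        exp (t * ((Sk N x (k+1) e - ((k+1:ℕ):ℝ)*ν)/((N:ℝ) - ((k+1:ℕ):ℝ))))
          = F (Sk N x k e) (x (e pk)) := by
      intro e
      rw [Sk_succ N x k hkN e, hF, ← hpk]
      push_cast
      ring_nf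
    have claimA : ∀ pi ∈ sk,
        (∑ e : Equiv.Perm (Fin N), F (Sk N x k e) (x (e pk)))
          = ∑ e : Equiv.Perm (Fin N), F (Sk N x k e) (x (e pi)) := by
      intro pi hpi
      have hpiv : k ≤ (pi:ℕ) := by
        simpa [hsk] using hpi
      have hfix : ∀ i : Fin N, (i:ℕ) < k → Equiv.swap pk pi i = i := by
        intro i hi
        apply Equiv.swap_apply_of_ne_of_ne
        · intro h; rw [h] at hi; simp [hpk] at hi
        · intro h; rw [h] at hi; exact absurd hi (not_lt.2 hpiv)
      calc (∑ e : Equiv.Perm (Fin N), F (Sk N x k e) (x (e pk)))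
          = ∑ e : Equiv.Perm (Fin N),
              F (Sk N x k (e * Equiv.swap pk pi)) (x ((e * Equiv.swap pk pi) pk)) :=
            (sum_perm_mul N (Equiv.swap pk pi)
              (fun e => F (Sk N x k e) (x (e pk)))).symm
        _ = ∑ e : Equiv.Perm (Fin N), F (Sk N x k e) (x (e pi)) := by
            apply Finset.sum_congr rfl
            intro e _
            rw [Sk_comp N x k e _ hfix, Equiv.Perm.mul_apply, Equiv.swap_apply_left]
    have hA : ((N:ℝ) - k) * ∑ e : Equiv.Perm (Fin N), F (Sk N x k e) (x (e pk))
        = ∑ e : Equiv.Perm (Fin N), ∑ pi ∈ sk, F (Sk N x k e) (x (e pi)) := by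
      calc ((N:ℝ) - k) * ∑ e : Equiv.Perm (Fin N), F (Sk N x k e) (x (e pk))
          = ∑ _pi ∈ sk, ∑ e : Equiv.Perm (Fin N), F (Sk N x k e) (x (e pk)) := by
            rw [Finset.sum_const, nsmul_eq_mul, hcard]
        _ = ∑ pi ∈ sk, ∑ e : Equiv.Perm (Fin N), F (Sk N x k e) (x (e pi)) :=
            Finset.sum_congr rfl claimA
        _ = ∑ e : Equiv.Perm (Fin N), ∑ pi ∈ sk, F (Sk N x k e) (x (e pi)) :=
            Finset.sum_comm
    have claimB : ∀ e : Equiv.Perm (Fin N),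
        (∑ pi ∈ sk, F (Sk N x k e) (x (e pi))) ≤
          ((N:ℝ) - k) * (exp (t * ((Sk N x k e - (k:ℝ)*ν)/((N:ℝ)-(k:ℝ))))
            * exp (t^2*(b-a)^2/8 * (1/((N:ℝ)-((k:ℝ)+1)))^2)) := by
      intro e
      have hsum_sk : ∑ pi ∈ sk, x (e pi) = (N:ℝ)*ν - Sk N x k e := by
        have hsplit := Finset.sum_filter_add_sum_filter_not Finset.univ
          (fun i : Fin N => (i:ℕ) < k) (fun i => x (e i))
        have huniv : (∑ i, x (e i)) = (N:ℝ)*ν := by rw [Equiv.sum_comp e x, hν]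
        have hnot : Finset.univ.filter (fun i : Fin N => ¬ (i:ℕ) < k) = sk := by
          rw [hsk]; ext i; simp [not_lt]
        rw [hnot, huniv] at hsplit
        have hSkdef : Sk N x k e
            = ∑ i ∈ Finset.univ.filter (fun i : Fin N => (i:ℕ) < k), x (e i) := rfl
        linarith
      have happ := sum_exp_le sk ⟨pk, hpk_mem⟩ (fun pi => x (e pi)) a b
        (t / ((N:ℝ)-((k:ℝ)+1))) (fun pi _ => hx (e pi))
      rw [hcard, hsum_sk] at happ
      have hFsplit : ∑ pi ∈ sk, F (Sk N x k e) (x (e pi))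
          = (∑ pi ∈ sk, exp ((t / ((N:ℝ)-((k:ℝ)+1))) * x (e pi)))
            * exp (t * ((Sk N x k e - ((k:ℝ)+1)*ν)/((N:ℝ)-((k:ℝ)+1)))) := by
        rw [Finset.sum_mul]
        apply Finset.sum_congr rfl
        intro pi _
        simp only [hF]
        rw [← exp_add]
        congr 1
        ring
      rw [hFsplit]
      calc (∑ pi ∈ sk, exp ((t / ((N:ℝ)-((k:ℝ)+1))) * x (e pi)))
            * exp (t * ((Sk N x k e - ((k:ℝ)+1)*ν)/((N:ℝ)-((k:ℝ)+1))))
          ≤ (((N:ℝ)-k) * exp ((t / ((N:ℝ)-((k:ℝ)+1))) * (((N:ℝ)*ν - Sk N x k e)/((N:ℝ)-(k:ℝ)))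
              + (t / ((N:ℝ)-((k:ℝ)+1)))^2 * (b-a)^2/8))
            * exp (t * ((Sk N x k e - ((k:ℝ)+1)*ν)/((N:ℝ)-((k:ℝ)+1)))) :=
            mul_le_mul_of_nonneg_right happ (exp_pos _).le
        _ = ((N:ℝ) - k) * (exp (t * ((Sk N x k e - (k:ℝ)*ν)/((N:ℝ)-(k:ℝ))))
            * exp (t^2*(b-a)^2/8 * (1/((N:ℝ)-((k:ℝ)+1)))^2)) := by
            rw [mul_assoc, ← exp_add, ← exp_add]
            congr 2
            field_simp [hm.ne', hm1.ne']
            ring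
    -- assemble
    rw [Finset.sum_congr rfl (fun e _ => hstep e)]
    rw [← mul_le_mul_iff_right₀ hm]
    rw [hA]
    calc (∑ e : Equiv.Perm (Fin N), ∑ pi ∈ sk, F (Sk N x k e) (x (e pi)))
        ≤ ∑ e : Equiv.Perm (Fin N), ((N:ℝ) - k) *
            (exp (t * ((Sk N x k e - (k:ℝ)*ν)/((N:ℝ)-(k:ℝ))))
              * exp (t^2*(b-a)^2/8 * (1/((N:ℝ)-((k:ℝ)+1)))^2)) :=
          Finset.sum_le_sum (fun e _ => claimB e)
      _ = ((N:ℝ) - k) * exp (t^2*(b-a)^2/8 * (1/((N:ℝ)-((k:ℝ)+1)))^2)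
            * ∑ e : Equiv.Perm (Fin N), exp (t * ((Sk N x k e - (k:ℝ)*ν)/((N:ℝ)-(k:ℝ)))) := by
          rw [Finset.mul_sum]
          apply Finset.sum_congr rfl
          intro e _
          ring
      _ ≤ ((N:ℝ) - k) * exp (t^2*(b-a)^2/8 * (1/((N:ℝ)-((k:ℝ)+1)))^2)
            * ((N.factorial : ℝ) * exp (t^2*(b-a)^2/8 * ∑ j ∈ Finset.range k, (1/((N:ℝ)-(j+1)))^2)) := by
          apply mul_le_mul_of_nonneg_left _ (by positivity)
          exact ih hkN t
      _ = ((N:ℝ) - k) * ((N.factorial : ℝ)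
            * exp (t^2*(b-a)^2/8 * ∑ j ∈ Finset.range (k+1), (1/((N:ℝ)-(j+1)))^2)) := by
          rw [Finset.sum_range_succ]
          rw [mul_add, exp_add]
          push_cast
          ring

private lemma tele (N : ℕ) (c : ℝ) (hc : 0 < c) :
    ∀ k : ℕ, k ≤ N → (∀ j : ℕ, j < k → c ≤ (N:ℝ) - (j+1)) →
      ∑ j ∈ Finset.range k, (1/((N:ℝ)-(j+1)))^2 ≤ (1 + 1/c) * (1/((N:ℝ)-k) - 1/N) := by
  intro k
  induction k with
  | zero => intro _ _; simp
  | succ k ih =>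
    intro hk1 hj
    have hk : k ≤ N := Nat.le_of_succ_le hk1
    have hd : c ≤ (N:ℝ) - ((k:ℝ)+1) := hj k (by omega)
    have hdpos : (0:ℝ) < (N:ℝ) - ((k:ℝ)+1) := lt_of_lt_of_le hc hd
    rw [Finset.sum_range_succ]
    have ihh := ih hk (fun j hjk => hj j (by omega))
    have key : (1/((N:ℝ)-((k:ℝ)+1)))^2
        ≤ (1+1/c) * (1/((N:ℝ)-((k:ℝ)+1)) - 1/((N:ℝ)-(k:ℝ))) := by
      set d := (N:ℝ) - ((k:ℝ)+1) with hdd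
      have h2 : (N:ℝ) - (k:ℝ) = d + 1 := by rw [hdd]; ring
      rw [h2]
      have hd1 : (0:ℝ) < d + 1 := by linarith
      have e1 : 1/d - 1/(d+1) = 1/(d*(d+1)) := by
        field_simp
        ring
      rw [e1]
      have hdiff : (1+1/c) * (1/(d*(d+1))) - (1/d)^2 = (d - c)/(c*d^2*(d+1)) := by
        field_simp
        ring
      have hnum : (0:ℝ) ≤ (d - c)/(c*d^2*(d+1)) := by
        apply div_nonneg (by linarith)
        positivity
      linarith [hdiff ▸ hnum]
    calc (∑ j ∈ Finset.range k, (1/((N:ℝ)-(j+1)))^2) + (1/((N:ℝ)-((k:ℝ)+1)))^2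
        ≤ (1+1/c)*(1/((N:ℝ)-(k:ℝ)) - 1/N)
            + (1+1/c) * (1/((N:ℝ)-((k:ℝ)+1)) - 1/((N:ℝ)-(k:ℝ))) := add_le_add ihh key
      _ = (1+1/c)*(1/((N:ℝ)-((k+1:ℕ):ℝ)) - 1/N) := by push_cast; ring

private lemma sum_comp_perm (N n : ℕ) (hn : n ≤ N) (x : Fin N → ℝ) (f : ℝ → ℝ) :
    ∑ e : Equiv.Perm (Fin N),
        f (∑ pi ∈ Finset.univ.filter (fun p : Fin N => n ≤ (p:ℕ)), x (e pi))
      = ∑ e : Equiv.Perm (Fin N), f (Sk N x (N-n) e) := by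
  classical
  set p : Fin N → Prop := fun i => (i:ℕ) < N - n with hp
  set q : Fin N → Prop := fun i => n ≤ (i:ℕ) with hq2
  have hcp : Fintype.card {i : Fin N // p i} = Fintype.card {i : Fin N // q i} := by
    rw [Fintype.card_subtype, Fintype.card_subtype]
    rw [show (Finset.filter p Finset.univ) = Finset.univ.filter (fun i : Fin N => (i:ℕ) < N - n) from rfl]
    rw [show (Finset.filter q Finset.univ) = Finset.univ.filter (fun i : Fin N => n ≤ (i:ℕ)) from rfl]
    rw [card_filter_lt_fin, card_filter_ge_fin N n hn]
    omega
  have hcn : Fintype.card {i : Fin N // ¬ p i} = Fintype.card {i : Fin N // ¬ q i} := by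
    rw [Fintype.card_subtype_compl, Fintype.card_subtype_compl, hcp]
  set ep := Fintype.equivOfCardEq hcp with hep
  set en := Fintype.equivOfCardEq hcn with hen
  set σ : Equiv.Perm (Fin N) :=
    ((Equiv.sumCompl p).symm.trans ((ep.sumCongr en).trans (Equiv.sumCompl q))) with hσdef
  have hσpos : ∀ (i : Fin N) (hi : p i), σ i = (ep ⟨i, hi⟩ : {i : Fin N // q i}) := by
    intro i hi
    simp only [hσdef, Equiv.trans_apply]
    rw [Equiv.sumCompl_symm_apply_of_pos hi]
    rfl
  have hσq : ∀ (i : Fin N), p i → q (σ i) := by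
    intro i hi
    rw [hσpos i hi]
    exact (ep ⟨i, hi⟩).2
  have hσsym : ∀ (j : Fin N) (hj : q j), σ.symm j = (ep.symm ⟨j, hj⟩ : {i : Fin N // p i}) := by
    intro j hj
    simp only [hσdef, Equiv.symm_trans_apply, Equiv.symm_symm]
    rw [Equiv.sumCompl_symm_apply_of_pos hj]
    rfl
  have hσp : ∀ (j : Fin N), q j → p (σ.symm j) := by
    intro j hj
    rw [hσsym j hj]
    exact (ep.symm ⟨j, hj⟩).2
  have hSk : ∀ e : Equiv.Perm (Fin N),
      Sk N x (N-n) (e * σ) = ∑ pi ∈ Finset.univ.filter (fun p : Fin N => n ≤ (p:ℕ)), x (e pi) := by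
    intro e
    unfold Sk
    apply Finset.sum_nbij' (i := fun i => σ i) (j := fun j => σ.symm j)
    · intro i hi
      simp only [Finset.mem_filter, Finset.mem_univ, true_and] at hi ⊢
      exact hσq i hi
    · intro j hj
      simp only [Finset.mem_filter, Finset.mem_univ, true_and] at hj ⊢
      exact hσp j hj
    · intro i _; exact σ.symm_apply_apply i
    · intro j _; exact σ.apply_symm_apply j
    · intro i _
      rw [Equiv.Perm.mul_apply]
  calc ∑ e : Equiv.Perm (Fin N),
        f (∑ pi ∈ Finset.univ.filter (fun p : Fin N => n ≤ (p:ℕ)), x (e pi))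
      = ∑ e : Equiv.Perm (Fin N), f (Sk N x (N-n) (e * σ)) := by
        apply Finset.sum_congr rfl
        intro e _
        rw [hSk e]
    _ = ∑ e : Equiv.Perm (Fin N), f (Sk N x (N-n) e) :=
        sum_perm_mul N σ (fun e => f (Sk N x (N-n) e))

open scoped Classical in
private lemma bad_le (N n : ℕ) (hN : 2 ≤ N) (hn1 : 1 ≤ n) (hn : n ≤ N) (x : Fin N → ℝ)
    (a b : ℝ) (hx : ∀ i, x i ∈ Set.Icc a b) (hab : a ≤ b) (ν : ℝ)
    (hν : ∑ i, x i = (N:ℝ) * ν) (ρ : ℝ)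
    (hρ : ρ = if 2 * n ≤ N then 1 - ((n : ℝ) - 1) / N
              else (1 - (n : ℝ) / N) * (1 + 1 / (n : ℝ)))
    (δ : ℝ) (hδ0 : 0 < δ) (hδ1 : δ ≤ 1) :
    ∑ e : Equiv.Perm (Fin N),
        (if (n:ℝ) * ((b - a) * Real.sqrt (ρ * Real.log (1/δ) / (2*(n:ℝ)))) < Sk N x n e - (n:ℝ)*ν
         then (1:ℝ) else 0) ≤ δ * N.factorial := by
  have hn0 : (0:ℝ) < n := by exact_mod_cast hn1
  have hN0 : (0:ℝ) < N := by positivity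
  set L : ℝ := Real.log (1/δ) with hL
  have hL0 : 0 ≤ L := Real.log_nonneg (by rw [le_div_iff₀ hδ0]; linarith)
  set ε : ℝ := (b - a) * Real.sqrt (ρ * L / (2*(n:ℝ))) with hε
  have hε0 : 0 ≤ ε := mul_nonneg (by linarith) (Real.sqrt_nonneg _)
  have hnε0 : 0 ≤ (n:ℝ) * ε := mul_nonneg hn0.le hε0
  rcases eq_or_lt_of_le hn with hnN | hnN
  · -- n = N : the sum is identically zero
    have hzero : ∀ e : Equiv.Perm (Fin N),
        (if (n:ℝ) * ε < Sk N x n e - (n:ℝ)*ν then (1:ℝ) else 0) = 0 := by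
      intro e
      apply if_neg
      have : Sk N x n e = (N:ℝ) * ν := by
        rw [hnN, Sk_top, hν]
      rw [this, hnN]
      push_neg
      have h0 : (0:ℝ) ≤ (N:ℝ)*ε := by rw [← hnN]; exact hnε0
      linarith
    rw [Finset.sum_congr rfl (fun e _ => hzero e)]
    simp only [Finset.sum_const_zero]
    positivity
  · -- n < N
    have hnNr : (n:ℝ) < N := by exact_mod_cast hnN
    have hρ0 : 0 < ρ := by
      rw [hρ]
      split_ifs
      · rw [sub_pos, div_lt_one hN0]; linarith
      · apply mul_pos
        · rw [sub_pos, div_lt_one hN0]; exact hnNr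
        · positivity
    rcases eq_or_lt_of_le hab with heqab | hltab
    · -- a = b : all values equal, sum again zero
      have hxa : ∀ i, x i = a := by
        intro i
        have := hx i
        rw [← heqab] at this
        exact le_antisymm this.2 this.1
      have hνa : ν = a := by
        have : ∑ i, x i = (N:ℝ) * a := by
          rw [Finset.sum_congr rfl (fun i _ => hxa i)]
          simp [Finset.card_univ, mul_comm]
        rw [this] at hν
        have := mul_left_cancel₀ hN0.ne' hν.symm
        linarith [this]
      have hzero : ∀ e : Equiv.Perm (Fin N),
          (if (n:ℝ) * ε < Sk N x n e - (n:ℝ)*ν then (1:ℝ) else 0) = 0 := by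
        intro e
        apply if_neg
        have hS : Sk N x n e = (n:ℝ) * a := by
          unfold Sk
          rw [Finset.sum_congr rfl (fun i _ => hxa (e i))]
          rw [Finset.sum_const, nsmul_eq_mul, card_filter_lt_fin, min_eq_left hn]
        rw [hS, hνa]
        push_neg
        linarith
      rw [Finset.sum_congr rfl (fun e _ => hzero e)]
      simp only [Finset.sum_const_zero]
      positivity
    · -- main case : a < b, n < N
      have hba0 : (0:ℝ) < b - a := sub_pos.2 hltab
      have hεsq : ε^2 = (b-a)^2 * (ρ * L / (2*(n:ℝ))) := by
        rw [hε, mul_pow, Real.sq_sqrt (by positivity)]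
      set t0 : ℝ := 4*ε/(ρ*(b-a)^2) with ht0
      have ht00 : 0 ≤ t0 := by positivity
      clear_value L ε t0
      -- the mgf bound
      have hmain : ∑ e : Equiv.Perm (Fin N), exp (t0 * (Sk N x n e - (n:ℝ)*ν)) ≤
          (N.factorial:ℝ) * exp (t0^2 * (n:ℝ) * ρ * (b-a)^2/8) := by
        by_cases hcase : 2 * n ≤ N
        · -- forward case
          have hNn0 : (0:ℝ) < (N:ℝ) - n := by linarith
          have hrw : ∀ e : Equiv.Perm (Fin N), t0 * (Sk N x n e - (n:ℝ)*ν)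
              = (t0*((N:ℝ)-n)) * ((Sk N x n e - (n:ℝ)*ν)/((N:ℝ)-(n:ℝ))) := by
            intro e
            field_simp
          have htele := tele N ((N:ℝ)-n) hNn0 n hn (by
            intro j hj
            have : (j:ℝ)+1 ≤ (n:ℝ) := by exact_mod_cast Nat.succ_le_of_lt hj
            linarith)
          have hid : ((N:ℝ)-n)^2 * ((1 + 1/((N:ℝ)-n)) * (1/((N:ℝ)-(n:ℝ)) - 1/(N:ℝ)))
              = (n:ℝ) * ρ := by
            rw [hρ, if_pos hcase]
            field_simp
            ring
          calc ∑ e : Equiv.Perm (Fin N), exp (t0 * (Sk N x n e - (n:ℝ)*ν))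
              = ∑ e : Equiv.Perm (Fin N),
                  exp ((t0*((N:ℝ)-n)) * ((Sk N x n e - (n:ℝ)*ν)/((N:ℝ)-(n:ℝ)))) := by
                apply Finset.sum_congr rfl
                intro e _
                rw [hrw e]
            _ ≤ (N.factorial:ℝ) * exp ((t0*((N:ℝ)-n))^2*(b-a)^2/8
                  * ∑ j ∈ Finset.range n, (1/((N:ℝ)-(j+1)))^2) :=
                mgf_perm N x a b hx ν hν n hnN (t0*((N:ℝ)-n))
            _ ≤ (N.factorial:ℝ) * exp (t0^2 * (n:ℝ) * ρ * (b-a)^2/8) := by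
                apply mul_le_mul_of_nonneg_left _ (by positivity)
                apply exp_le_exp.2
                calc (t0*((N:ℝ)-n))^2*(b-a)^2/8 * ∑ j ∈ Finset.range n, (1/((N:ℝ)-(j+1)))^2
                    ≤ (t0*((N:ℝ)-n))^2*(b-a)^2/8
                        * ((1 + 1/((N:ℝ)-n)) * (1/((N:ℝ)-(n:ℝ)) - 1/(N:ℝ))) := by
                      apply mul_le_mul_of_nonneg_left htele (by positivity)
                  _ = t0^2 * (n:ℝ) * ρ * (b-a)^2/8 := by
                      linear_combination (t0^2*(b-a)^2/8) * hid
        · -- backward case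
          have hm : N - n < N := by omega
          have hmcast : ((N - n : ℕ):ℝ) = (N:ℝ) - n := by
            push_cast [Nat.cast_sub hn]; ring
          have hstep1 : ∀ e : Equiv.Perm (Fin N),
              t0 * (Sk N x n e - (n:ℝ)*ν)
                = -t0 * ((∑ pi ∈ Finset.univ.filter (fun p : Fin N => n ≤ (p:ℕ)), x (e pi))
                    - ((N:ℝ)-n)*ν) := by
            intro e
            have hsplit := Finset.sum_filter_add_sum_filter_not Finset.univ
              (fun i : Fin N => (i:ℕ) < n) (fun i => x (e i))
            have huniv : (∑ i, x (e i)) = (N:ℝ)*ν := by rw [Equiv.sum_comp e x, hν]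
            have hnot : Finset.univ.filter (fun i : Fin N => ¬ (i:ℕ) < n)
                = Finset.univ.filter (fun p : Fin N => n ≤ (p:ℕ)) := by
              ext i; simp [not_lt]
            rw [hnot, huniv] at hsplit
            have hSkdef : Sk N x n e
                = ∑ i ∈ Finset.univ.filter (fun i : Fin N => (i:ℕ) < n), x (e i) := rfl
            have : (∑ pi ∈ Finset.univ.filter (fun p : Fin N => n ≤ (p:ℕ)), x (e pi))
                = (N:ℝ)*ν - Sk N x n e := by
              rw [hSkdef]; linarith
            rw [this]; ring
          have htele := tele N (n:ℝ) hn0 (N-n) (Nat.sub_le N n) (by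
            intro j hj
            have hj' : (j:ℝ)+1 ≤ (N:ℝ)-n := by
              rw [← hmcast]; exact_mod_cast Nat.succ_le_of_lt hj
            linarith)
          have hid : ((n:ℝ))^2 * ((1 + 1/(n:ℝ)) * (1/((N:ℝ)-((N-n:ℕ):ℝ)) - 1/(N:ℝ)))
              = (n:ℝ) * ρ := by
            rw [hρ, if_neg hcase, hmcast]
            have : (N:ℝ) - ((N:ℝ)-n) = (n:ℝ) := by ring
            rw [this]
            field_simp
          calc ∑ e : Equiv.Perm (Fin N), exp (t0 * (Sk N x n e - (n:ℝ)*ν))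
              = ∑ e : Equiv.Perm (Fin N),
                  exp (-t0 * ((∑ pi ∈ Finset.univ.filter (fun p : Fin N => n ≤ (p:ℕ)), x (e pi))
                    - ((N:ℝ)-n)*ν)) := by
                apply Finset.sum_congr rfl
                intro e _
                rw [hstep1 e]
            _ = ∑ e : Equiv.Perm (Fin N),
                  exp (-t0 * (Sk N x (N-n) e - ((N:ℝ)-n)*ν)) :=
                sum_comp_perm N n hn x (fun s => exp (-t0 * (s - ((N:ℝ)-n)*ν)))
            _ = ∑ e : Equiv.Perm (Fin N),
                  exp ((-t0*(n:ℝ)) * ((Sk N x (N-n) e - ((N-n:ℕ):ℝ)*ν)/((N:ℝ)-((N-n:ℕ):ℝ)))) := by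
                apply Finset.sum_congr rfl
                intro e _
                congr 1
                rw [hmcast]
                have h1 : (N:ℝ) - ((N:ℝ)-n) = (n:ℝ) := by ring
                rw [h1]
                field_simp
            _ ≤ (N.factorial:ℝ) * exp ((-t0*(n:ℝ))^2*(b-a)^2/8
                  * ∑ j ∈ Finset.range (N-n), (1/((N:ℝ)-(j+1)))^2) :=
                mgf_perm N x a b hx ν hν (N-n) hm (-t0*(n:ℝ))
            _ ≤ (N.factorial:ℝ) * exp (t0^2 * (n:ℝ) * ρ * (b-a)^2/8) := by
                apply mul_le_mul_of_nonneg_left _ (by positivity)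
                apply exp_le_exp.2
                calc (-t0*(n:ℝ))^2*(b-a)^2/8 * ∑ j ∈ Finset.range (N-n), (1/((N:ℝ)-(j+1)))^2
                    ≤ (-t0*(n:ℝ))^2*(b-a)^2/8
                        * ((1 + 1/(n:ℝ)) * (1/((N:ℝ)-((N-n:ℕ):ℝ)) - 1/(N:ℝ))) := by
                      apply mul_le_mul_of_nonneg_left _ (by positivity)
                      convert htele using 3
                  _ = t0^2 * (n:ℝ) * ρ * (b-a)^2/8 := by
                      linear_combination (t0^2*(b-a)^2/8) * hid
      -- Chernoff
      have hchern : ∑ e : Equiv.Perm (Fin N),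
          (if (n:ℝ) * ε < Sk N x n e - (n:ℝ)*ν then (1:ℝ) else 0)
            ≤ exp (-(t0*((n:ℝ)*ε))) * ∑ e : Equiv.Perm (Fin N), exp (t0 * (Sk N x n e - (n:ℝ)*ν)) := by
        rw [Finset.mul_sum]
        apply Finset.sum_le_sum
        intro e _
        split_ifs with h
        · rw [← exp_add]
          rw [show (1:ℝ) = exp 0 from (exp_zero).symm]
          apply exp_le_exp.2
          nlinarith [mul_le_mul_of_nonneg_left h.le ht00]
        · positivity
      have hexpid : exp (-(t0*((n:ℝ)*ε))) * ((N.factorial:ℝ) * exp (t0^2 * (n:ℝ) * ρ * (b-a)^2/8))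
          = (N.factorial:ℝ) * exp (t0^2 * (n:ℝ) * ρ * (b-a)^2/8 - t0*((n:ℝ)*ε)) := by
        rw [exp_sub, exp_neg, div_eq_mul_inv]
        ring
      have hexparg : t0^2 * (n:ℝ) * ρ * (b-a)^2/8 - t0*((n:ℝ)*ε) = -L := by
        have h2 : 2*(n:ℝ)*ε^2 = (ρ*(b-a)^2) * L := by
          rw [hεsq]; field_simp
        have h3 : t0^2 * (n:ℝ) * ρ * (b-a)^2/8 - t0*((n:ℝ)*ε)
            = -(2*(n:ℝ)*ε^2)/(ρ*(b-a)^2) := by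
          rw [ht0]; field_simp; ring
        rw [h3, h2]
        field_simp
      have hexpL : exp (-L) = δ := by
        rw [hL, one_div, Real.log_inv, neg_neg, Real.exp_log hδ0]
      calc ∑ e : Equiv.Perm (Fin N),
            (if (n:ℝ) * ε < Sk N x n e - (n:ℝ)*ν then (1:ℝ) else 0)
          ≤ exp (-(t0*((n:ℝ)*ε))) * ∑ e : Equiv.Perm (Fin N), exp (t0 * (Sk N x n e - (n:ℝ)*ν)) := hchern
        _ ≤ exp (-(t0*((n:ℝ)*ε))) * ((N.factorial:ℝ) * exp (t0^2 * (n:ℝ) * ρ * (b-a)^2/8)) :=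
            mul_le_mul_of_nonneg_left hmain (exp_pos _).le
        _ = (N.factorial:ℝ) * exp (t0^2 * (n:ℝ) * ρ * (b-a)^2/8 - t0*((n:ℝ)*ε)) := hexpid
        _ = (N.factorial:ℝ) * δ := by rw [hexparg, hexpL]
        _ = δ * N.factorial := by ring
/-- Corollary 1 (inverted Hoeffding–Serfling bound): with probability at least `1 - δ`,
`(1/n) ∑_{t=1}^n (X_t - μ) ≤ (b-a) √(ρ_n log(1/δ)/(2n))`. -/
theorem hoeffding_serfling_corollary
    {Ω : Type*} [MeasurableSpace Ω] (P : Measure Ω) [IsProbabilityMeasure P]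
    (N n : ℕ) (hN : 2 ≤ N) (hn1 : 1 ≤ n) (hn : n ≤ N) (x : Fin N → ℝ)
    (X : ℕ → Ω → ℝ) (hXm : ∀ i, Measurable (X i))
    (hX : samplesWithoutReplacement P N x X)
    (a b : ℝ) (ha : IsLeast (Set.range x) a) (hb : IsGreatest (Set.range x) b)
    (μ : ℝ) (hμ : μ = (∑ i, x i) / N)
    (ρ : ℝ)
    (hρ : ρ = if 2 * n ≤ N then 1 - ((n : ℝ) - 1) / N
              else (1 - (n : ℝ) / N) * (1 + 1 / (n : ℝ)))
    (δ : ℝ) (hδ0 : 0 < δ) (hδ1 : δ ≤ 1) :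
    ENNReal.ofReal (1 - δ) ≤
      P {ω | (∑ t ∈ Finset.range n, (X t ω - μ)) / (n : ℝ) ≤
          (b - a) * Real.sqrt (ρ * Real.log (1 / δ) / (2 * n))} := by
  classical
  have hN0 : (0:ℝ) < N := by positivity
  have hn0 : (0:ℝ) < n := by exact_mod_cast hn1
  have hNpos : 0 < N := by omega
  set r : ℝ := (b - a) * Real.sqrt (ρ * Real.log (1 / δ) / (2 * (n:ℝ))) with hr
  have hx : ∀ i, x i ∈ Set.Icc a b := fun i =>
    ⟨ha.2 (Set.mem_range_self i), hb.2 (Set.mem_range_self i)⟩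
  have hab : a ≤ b := by
    obtain ⟨i0, hi0⟩ := ha.1
    calc a = x i0 := hi0.symm
      _ ≤ b := hb.2 (Set.mem_range_self i0)
  have hν : ∑ i, x i = (N:ℝ) * μ := by
    rw [hμ]; field_simp
  -- the target set as a preimage
  have hY : Measurable (fun ω (i : Fin N) => X i ω) :=
    measurable_pi_lambda _ (fun i => hXm i)
  set B : Set (Fin N → ℝ) :=
    {y | (∑ i ∈ Finset.univ.filter (fun i : Fin N => (i:ℕ) < n), (y i - μ)) / (n:ℝ) ≤ r} with hB
  have hBm : MeasurableSet B := by
    have hf : Measurable (fun y : Fin N → ℝ =>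
        (∑ i ∈ Finset.univ.filter (fun i : Fin N => (i:ℕ) < n), (y i - μ)) / (n:ℝ)) := by
      apply Measurable.div_const
      apply Finset.measurable_sum
      intro i _
      exact (measurable_pi_apply i).sub measurable_const
    exact measurableSet_le hf measurable_const
  have hset : {ω | (∑ t ∈ Finset.range n, (X t ω - μ)) / (n : ℝ) ≤ r}
      = (fun ω (i : Fin N) => X i ω) ⁻¹' B := by
    ext ω
    simp only [Set.mem_setOf_eq, Set.mem_preimage, hB]
    have hsum : ∑ t ∈ Finset.range n, (X t ω - μ)
        = ∑ i ∈ Finset.univ.filter (fun i : Fin N => (i:ℕ) < n), (X (i:ℕ) ω - μ) := by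
      apply Finset.sum_nbij' (i := fun t => (⟨t % N, Nat.mod_lt t hNpos⟩ : Fin N))
        (j := fun i => (i:ℕ))
      · intro t ht
        simp only [Finset.mem_range] at ht
        simp only [Finset.mem_filter, Finset.mem_univ, true_and]
        rw [Nat.mod_eq_of_lt (by omega)]
        exact ht
      · intro i hi
        simp only [Finset.mem_filter, Finset.mem_univ, true_and] at hi
        simpa using hi
      · intro t ht
        simp only [Finset.mem_range] at ht
        simp [Nat.mod_eq_of_lt (show t < N by omega)]
      · intro i _
        apply Fin.ext
        simp [Nat.mod_eq_of_lt i.isLt]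
      · intro t ht
        simp only [Finset.mem_range] at ht
        simp [Nat.mod_eq_of_lt (show t < N by omega)]
    rw [hsum]
  have hX' : Measure.map (fun ω (i : Fin N) => X i ω) P =
      (Nat.factorial N : ℝ≥0∞)⁻¹ • ∑ e : Equiv.Perm (Fin N), Measure.dirac (fun i => x (e i)) := hX
  rw [hset, ← Measure.map_apply hY hBm, hX']
  rw [Measure.smul_apply, Measure.finset_sum_apply, smul_eq_mul]
  have heval : ∀ e : Equiv.Perm (Fin N),
      Measure.dirac (fun i => x (e i)) B
        = ENNReal.ofReal (if (fun i : Fin N => x (e i)) ∈ B then (1:ℝ) else 0) := by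
    intro e
    rw [Measure.dirac_apply' _ hBm, Set.indicator_apply]
    split_ifs <;> simp
  rw [Finset.sum_congr rfl (fun e _ => heval e)]
  rw [← ENNReal.ofReal_sum_of_nonneg (fun e _ => by positivity)]
  set Sgood : ℝ := ∑ e : Equiv.Perm (Fin N),
    (if (fun i : Fin N => x (e i)) ∈ B then (1:ℝ) else 0) with hSgood
  set Sbad : ℝ := ∑ e : Equiv.Perm (Fin N),
    (if (fun i : Fin N => x (e i)) ∈ B then (0:ℝ) else 1) with hSbad
  have hfacpos : (0:ℝ) < (N.factorial : ℝ) := by positivity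
  have hsumgb : Sgood + Sbad = (N.factorial : ℝ) := by
    have h1 : ∀ e : Equiv.Perm (Fin N),
        ((if (fun i : Fin N => x (e i)) ∈ B then (1:ℝ) else 0)
          + (if (fun i : Fin N => x (e i)) ∈ B then (0:ℝ) else 1)) = 1 := by
      intro e
      by_cases h : (fun i : Fin N => x (e i)) ∈ B <;> simp [h]
    rw [hSgood, hSbad, ← Finset.sum_add_distrib]
    rw [Finset.sum_congr rfl (fun e _ => h1 e)]
    simp [Finset.card_univ, Fintype.card_perm]
  have hexpand : ∀ e : Equiv.Perm (Fin N),
      (∑ i ∈ Finset.univ.filter (fun i : Fin N => (i:ℕ) < n), (x (e i) - μ))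
        = Sk N x n e - (n:ℝ)*μ := by
    intro e
    rw [Finset.sum_sub_distrib, Finset.sum_const, nsmul_eq_mul,
      card_filter_lt_fin, min_eq_left hn]
    rfl
  have hbad : Sbad ≤ δ * (N.factorial : ℝ) := by
    have hb2 := bad_le N n hN hn1 hn x a b hx hab μ hν ρ hρ δ hδ0 hδ1
    rw [hSbad]
    calc Sbad = ∑ e : Equiv.Perm (Fin N),
        (if (n:ℝ) * ((b - a) * Real.sqrt (ρ * Real.log (1/δ) / (2*(n:ℝ)))) < Sk N x n e - (n:ℝ)*μ
         then (1:ℝ) else 0) := by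
          rw [hSbad]
          apply Finset.sum_congr rfl
          intro e _
          have hmem : ((fun i : Fin N => x (e i)) ∈ B)
              ↔ (Sk N x n e - (n:ℝ)*μ)/(n:ℝ) ≤ r := by
            rw [hB]
            simp only [Set.mem_setOf_eq]
            rw [hexpand e]
          by_cases h : (n:ℝ) * ((b - a) * Real.sqrt (ρ * Real.log (1/δ) / (2*(n:ℝ)))) < Sk N x n e - (n:ℝ)*μ
          · rw [if_pos h, if_neg]
            rw [hmem]
            rw [not_le, lt_div_iff₀ hn0, hr]
            linarith [h]
          · rw [if_neg h, if_pos]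
            rw [hmem]
            rw [div_le_iff₀ hn0, hr]
            push_neg at h
            linarith [h]
      _ ≤ δ * (N.factorial : ℝ) := hb2
  have hreal : 1 - δ ≤ Sgood / (N.factorial : ℝ) := by
    rw [le_div_iff₀ hfacpos]
    nlinarith [hsumgb, hbad]
  calc ENNReal.ofReal (1 - δ)
      ≤ ENNReal.ofReal (Sgood / (N.factorial : ℝ)) := ENNReal.ofReal_le_ofReal hreal
    _ = ENNReal.ofReal Sgood / ENNReal.ofReal (N.factorial : ℝ) :=
        ENNReal.ofReal_div_of_pos hfacpos
    _ = (N.factorial : ℝ≥0∞)⁻¹ * ENNReal.ofReal Sgood := by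
        rw [ENNReal.ofReal_natCast, div_eq_mul_inv, mul_comm]
end

section
/- Let X_1,...,X_N be sampled without replacement from a finite population of N reals with mean μ and variance σ² = (1/N)∑_{i=1}^N (x_i − μ)². Then for each 1 ≤ k ≤ N, E[(X_k − μ)² | X_1,...,X_{k−1}] = σ² − Q*_{k−1}, where Q*_{k−1} = (∑_{i=1}^{k−1} ((X_i − μ)² − σ²))/(N−k+1). -/
open MeasureTheory Finset Real
open scoped ENNReal

lemma key_sum (N m : ℕ) (hm : m < N) (x : Fin N → ℝ) (μ : ℝ) (F : (Fin m → ℝ) → ℝ) :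
    ((N : ℝ) - m) * ∑ e : Equiv.Perm (Fin N),
        F (fun j => x (e (Fin.castLE hm.le j))) * (x (e ⟨m, hm⟩) - μ) ^ 2
      = ∑ e : Equiv.Perm (Fin N), F (fun j => x (e (Fin.castLE hm.le j))) *
          ((∑ i, (x i - μ) ^ 2) - ∑ j : Fin m, (x (e (Fin.castLE hm.le j)) - μ) ^ 2) := by
  classical
  set B : Finset (Fin N) := (univ : Finset (Fin m)).map (Fin.castLEEmb hm.le) with hB
  have hBmem : ∀ j : Fin N, j ∈ B ↔ (j : ℕ) < m := by
    intro j
    simp only [hB, mem_map, mem_univ, true_and, Fin.castLEEmb, Function.Embedding.coeFn_mk]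
    constructor
    · rintro ⟨a, rfl⟩; exact a.2
    · intro h; exact ⟨⟨j, h⟩, rfl⟩
  have hcardB : B.card = m := by simp [hB]
  have hcardBc : Bᶜ.card = N - m := by
    rw [Finset.card_compl, hcardB]; simp
  have hsplit : ∀ e : Equiv.Perm (Fin N),
      (∑ i, (x i - μ) ^ 2) - ∑ j : Fin m, (x (e (Fin.castLE hm.le j)) - μ) ^ 2
        = ∑ j ∈ Bᶜ, (x (e j) - μ) ^ 2 := by
    intro e
    have h1 : ∑ i, (x i - μ) ^ 2 = ∑ i : Fin N, (x (e i) - μ) ^ 2 :=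
      (Equiv.sum_comp e fun i => (x i - μ) ^ 2).symm
    have h2 : ∑ j : Fin m, (x (e (Fin.castLE hm.le j)) - μ) ^ 2
        = ∑ j ∈ B, (x (e j) - μ) ^ 2 := by
      rw [hB, Finset.sum_map]; rfl
    rw [h1, h2, ← Finset.sum_compl_add_sum B (fun j => (x (e j) - μ) ^ 2)]
    ring
  have hswap : ∀ j : Fin N, j ∈ Bᶜ →
      ∑ e : Equiv.Perm (Fin N), F (fun i => x (e (Fin.castLE hm.le i))) * (x (e j) - μ) ^ 2
        = ∑ e : Equiv.Perm (Fin N),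
            F (fun i => x (e (Fin.castLE hm.le i))) * (x (e ⟨m, hm⟩) - μ) ^ 2 := by
    intro j hj
    have hjm : m ≤ (j : ℕ) := by
      have := (hBmem j).not.1 (Finset.mem_compl.1 hj); omega
    set τ : Equiv.Perm (Fin N) := Equiv.swap ⟨m, hm⟩ j with hτ
    have := Equiv.sum_comp (Equiv.mulRight τ)
      (fun e : Equiv.Perm (Fin N) => F (fun i => x (e (Fin.castLE hm.le i))) * (x (e j) - μ) ^ 2)
    rw [← this]
    refine Finset.sum_congr rfl fun e _ => ?_
    have hfix : ∀ i : Fin m, τ (Fin.castLE hm.le i) = Fin.castLE hm.le i := by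
      intro i
      apply Equiv.swap_apply_of_ne_of_ne
      · intro h; have := congrArg Fin.val h; simp at this; omega
      · intro h; have := congrArg Fin.val h; simp at this; omega
    have hτj : τ j = ⟨m, hm⟩ := Equiv.swap_apply_right _ _
    simp only [Equiv.coe_mulRight, Equiv.Perm.mul_apply]
    rw [hτj]
    congr 1
    congr 1
    funext i
    rw [hfix i]
  calc ((N : ℝ) - m) * ∑ e : Equiv.Perm (Fin N),
        F (fun j => x (e (Fin.castLE hm.le j))) * (x (e ⟨m, hm⟩) - μ) ^ 2
      = ∑ j ∈ Bᶜ, ∑ e : Equiv.Perm (Fin N),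
          F (fun i => x (e (Fin.castLE hm.le i))) * (x (e j) - μ) ^ 2 := by
        rw [Finset.sum_congr rfl hswap, Finset.sum_const, hcardBc, nsmul_eq_mul,
          Nat.cast_sub hm.le]
    _ = ∑ e : Equiv.Perm (Fin N), ∑ j ∈ Bᶜ,
          F (fun i => x (e (Fin.castLE hm.le i))) * (x (e j) - μ) ^ 2 := Finset.sum_comm
    _ = _ := by
        refine Finset.sum_congr rfl fun e _ => ?_
        rw [hsplit e, Finset.mul_sum]

/-- Lemma 3 (first part): conditional second moment of the `k`-th draw:
`E[(X_k - μ)² | X_1, …, X_{k-1}] = σ² - Q*_{k-1}` where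
`Q*_{k-1} = (∑_{i=1}^{k-1} ((X_i - μ)² - σ²))/(N - k + 1)`. -/
theorem condexp_sq_draw_without_replacement
    {Ω : Type*} [MeasurableSpace Ω] (P : Measure Ω) [IsProbabilityMeasure P]
    (N : ℕ) (hN : 2 ≤ N) (x : Fin N → ℝ)
    (X : ℕ → Ω → ℝ) (hXm : ∀ i, Measurable (X i))
    (hX : samplesWithoutReplacement P N x X)
    (μ : ℝ) (hμ : μ = (∑ i, x i) / N)
    (σ2 : ℝ) (hσ2 : σ2 = (∑ i, (x i - μ) ^ 2) / N)
    (k : ℕ) (hk1 : 1 ≤ k) (hk : k ≤ N) :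
    MeasureTheory.condExp
        (MeasurableSpace.comap (fun ω (j : Fin (k - 1)) => X j ω) inferInstance)
        P (fun ω => (X (k - 1) ω - μ) ^ 2)
      =ᵐ[P] fun ω =>
        σ2 - (∑ i ∈ Finset.range (k - 1), ((X i ω - μ) ^ 2 - σ2)) / ((N : ℝ) - k + 1) := by
  classical
  have hmN : k - 1 < N := by omega
  set W : Ω → (Fin N → ℝ) := fun ω (i : Fin N) => X i ω with hWdef
  have hW : Measurable W := measurable_pi_lambda _ fun i => hXm i
  have hν : Measure.map W P =
      (Nat.factorial N : ℝ≥0∞)⁻¹ • ∑ e : Equiv.Perm (Fin N), Measure.dirac (fun i => x (e i)) :=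
    hX
  set Y : Ω → (Fin (k - 1) → ℝ) := fun ω (j : Fin (k - 1)) => X j ω with hYdef
  have hY : Measurable Y := measurable_pi_lambda _ fun j => hXm j
  set pr : (Fin N → ℝ) → (Fin (k - 1) → ℝ) := fun v j => v (Fin.castLE hmN.le j) with hprdef
  have hpr : Measurable pr := measurable_pi_lambda _ fun j => measurable_pi_apply _
  have hYW : Y = pr ∘ W := rfl
  -- denominators
  have hd0 : ((N : ℝ) - (k - 1 : ℕ)) ≠ 0 := by
    have : ((k - 1 : ℕ) : ℝ) < (N : ℝ) := by exact_mod_cast hmN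
    exact sub_ne_zero.2 (ne_of_gt this)
  have hdeq : ((N : ℝ) - k + 1) = ((N : ℝ) - (k - 1 : ℕ)) := by
    have : ((k - 1 : ℕ) : ℝ) = (k : ℝ) - 1 := by
      rw [Nat.cast_sub hk1, Nat.cast_one]
    rw [this]; ring
  -- the two functions on the path space
  set φ : (Fin N → ℝ) → ℝ := fun v => (v ⟨k - 1, hmN⟩ - μ) ^ 2 with hφdef
  have hφ : Measurable φ :=
    ((measurable_pi_apply _).sub measurable_const).pow measurable_const
  set ψ : (Fin N → ℝ) → ℝ := fun v =>
    σ2 - (∑ j : Fin (k - 1), ((v (Fin.castLE hmN.le j) - μ) ^ 2 - σ2)) / ((N : ℝ) - (k - 1 : ℕ))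
    with hψdef
  have hψ : Measurable ψ := by
    apply Measurable.const_sub
    apply Measurable.div_const
    exact Finset.measurable_sum _ fun j _ =>
      (((measurable_pi_apply _).sub measurable_const).pow measurable_const).sub measurable_const
  set f : Ω → ℝ := fun ω => (X (k - 1) ω - μ) ^ 2 with hfdef
  set g : Ω → ℝ := fun ω =>
    σ2 - (∑ i ∈ Finset.range (k - 1), ((X i ω - μ) ^ 2 - σ2)) / ((N : ℝ) - k + 1) with hgdef
  have hfW : f = fun ω => φ (W ω) := rfl
  have hgW : g = fun ω => ψ (W ω) := by
    funext ω
    show σ2 - (∑ i ∈ Finset.range (k - 1), ((X i ω - μ) ^ 2 - σ2)) / ((N : ℝ) - k + 1)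
        = σ2 - (∑ j : Fin (k - 1), ((W ω (Fin.castLE hmN.le j) - μ) ^ 2 - σ2))
            / ((N : ℝ) - (k - 1 : ℕ))
    rw [hdeq, ← Fin.sum_univ_eq_sum_range (fun i => ((X i ω - μ) ^ 2 - σ2)) (k - 1)]
    rfl
  -- integrability of compositions
  have hint : ∀ h : (Fin N → ℝ) → ℝ, Measurable h → Integrable (fun ω => h (W ω)) P := by
    intro h hh
    have h1 : Integrable h (Measure.map W P) := by
      rw [hν]
      refine Integrable.smul_measure ?_
        (ENNReal.inv_ne_top.2 (by exact_mod_cast N.factorial_ne_zero))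
      refine integrable_finset_sum_measure.2 fun e _ => ?_
      refine ⟨hh.aestronglyMeasurable, ?_⟩
      rw [hasFiniteIntegral_def, lintegral_dirac]
      exact ENNReal.coe_lt_top
    exact (integrable_map_measure hh.aestronglyMeasurable hW.aemeasurable).1 h1
  -- integral computation
  have hcalc : ∀ h : (Fin N → ℝ) → ℝ, Measurable h →
      ∫ ω, h (W ω) ∂P
        = (N.factorial : ℝ)⁻¹ * ∑ e : Equiv.Perm (Fin N), h (fun i => x (e i)) := by
    intro h hh
    rw [← integral_map hW.aemeasurable hh.aestronglyMeasurable, hν, integral_smul_measure,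
      integral_finset_sum_measure (fun e _ => ?_)]
    · simp only [integral_dirac, smul_eq_mul]
      congr 1
      rw [ENNReal.toReal_inv, ENNReal.toReal_natCast]
    · refine ⟨hh.aestronglyMeasurable, ?_⟩
      rw [hasFiniteIntegral_def, lintegral_dirac]
      exact ENNReal.coe_lt_top
  -- variance total
  have hN0 : (N : ℝ) ≠ 0 := by positivity
  have hTot : (∑ i, (x i - μ) ^ 2) = N * σ2 := by rw [hσ2]; field_simp
  -- conditional expectation machinery
  have hYle : MeasurableSpace.comap Y inferInstance ≤ ‹MeasurableSpace Ω› := hY.comap_le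
  have hYmF : @Measurable Ω (Fin (k - 1) → ℝ) (MeasurableSpace.comap Y inferInstance) _ Y :=
    Measurable.of_comap_le le_rfl
  refine (ae_eq_condExp_of_forall_setIntegral_eq hYle ?_ ?_ ?_ ?_).symm
  · exact hfW ▸ hint φ hφ
  · intro s _ _
    exact (hgW ▸ hint ψ hψ).integrableOn
  · rintro s ⟨A, hA, rfl⟩ _
    have hsW : Y ⁻¹' A = W ⁻¹' (pr ⁻¹' A) := by rw [hYW]; rfl
    have hmsY : MeasurableSet (Y ⁻¹' A) := hY hA
    have hindg : ∀ ω, Set.indicator (Y ⁻¹' A) g ω = Set.indicator (pr ⁻¹' A) ψ (W ω) := by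
      intro ω
      by_cases h : W ω ∈ pr ⁻¹' A
      · rw [Set.indicator_of_mem h,
          Set.indicator_of_mem (by rwa [hsW]), hgW]
      · rw [Set.indicator_of_notMem h,
          Set.indicator_of_notMem (by rwa [hsW])]
    have hindf : ∀ ω, Set.indicator (Y ⁻¹' A) f ω = Set.indicator (pr ⁻¹' A) φ (W ω) := by
      intro ω
      by_cases h : W ω ∈ pr ⁻¹' A
      · rw [Set.indicator_of_mem h,
          Set.indicator_of_mem (by rwa [hsW]), hfW]
      · rw [Set.indicator_of_notMem h,
          Set.indicator_of_notMem (by rwa [hsW])]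
    rw [← integral_indicator hmsY, ← integral_indicator hmsY]
    calc ∫ ω, Set.indicator (Y ⁻¹' A) g ω ∂P
        = ∫ ω, Set.indicator (pr ⁻¹' A) ψ (W ω) ∂P := by
          exact integral_congr_ae (Filter.Eventually.of_forall hindg)
      _ = (N.factorial : ℝ)⁻¹ * ∑ e : Equiv.Perm (Fin N),
            Set.indicator (pr ⁻¹' A) ψ (fun i => x (e i)) :=
          hcalc _ (hψ.indicator (hpr hA))
      _ = (N.factorial : ℝ)⁻¹ * ∑ e : Equiv.Perm (Fin N),
            Set.indicator (pr ⁻¹' A) φ (fun i => x (e i)) := by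
          congr 1
          -- reduce to key_sum with F = indicator of A
          set F : (Fin (k - 1) → ℝ) → ℝ := fun u => if u ∈ A then (1 : ℝ) else 0 with hF
          have hψind : ∀ e : Equiv.Perm (Fin N),
              Set.indicator (pr ⁻¹' A) ψ (fun i => x (e i))
                = F (fun j => x (e (Fin.castLE hmN.le j))) * ψ (fun i => x (e i)) := by
            intro e
            by_cases h : (fun i => x (e i)) ∈ pr ⁻¹' A
            · rw [Set.indicator_of_mem h]
              have h2 : (fun j => x (e (Fin.castLE hmN.le j))) ∈ A := h
              simp only [hF, if_pos h2, one_mul]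
            · rw [Set.indicator_of_notMem h]
              have h2 : (fun j => x (e (Fin.castLE hmN.le j))) ∉ A := h
              simp only [hF, if_neg h2, zero_mul]
          have hφind : ∀ e : Equiv.Perm (Fin N),
              Set.indicator (pr ⁻¹' A) φ (fun i => x (e i))
                = F (fun j => x (e (Fin.castLE hmN.le j))) * φ (fun i => x (e i)) := by
            intro e
            by_cases h : (fun i => x (e i)) ∈ pr ⁻¹' A
            · rw [Set.indicator_of_mem h]
              have h2 : (fun j => x (e (Fin.castLE hmN.le j))) ∈ A := h
              simp only [hF, if_pos h2, one_mul]
            · rw [Set.indicator_of_notMem h]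
              have h2 : (fun j => x (e (Fin.castLE hmN.le j))) ∉ A := h
              simp only [hF, if_neg h2, zero_mul]
          rw [Finset.sum_congr rfl fun e _ => hψind e,
            Finset.sum_congr rfl fun e _ => hφind e]
          have hψval : ∀ e : Equiv.Perm (Fin N),
              ψ (fun i => x (e i))
                = ((∑ i, (x i - μ) ^ 2)
                    - ∑ j : Fin (k - 1), (x (e (Fin.castLE hmN.le j)) - μ) ^ 2)
                  / ((N : ℝ) - (k - 1 : ℕ)) := by
            intro e
            simp only [hψdef]
            rw [hTot]
            have hsum : ∑ j : Fin (k - 1), ((x (e (Fin.castLE hmN.le j)) - μ) ^ 2 - σ2)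
                = (∑ j : Fin (k - 1), (x (e (Fin.castLE hmN.le j)) - μ) ^ 2)
                  - (k - 1 : ℕ) * σ2 := by
              rw [Finset.sum_sub_distrib, Finset.sum_const, Finset.card_univ,
                Fintype.card_fin, nsmul_eq_mul]
            rw [hsum, eq_div_iff hd0, sub_mul, div_mul_cancel₀ _ hd0]
            ring
          rw [Finset.sum_congr rfl fun e _ => by rw [hψval e]]
          have hkey := key_sum N (k - 1) hmN x μ F
          have : ∑ e : Equiv.Perm (Fin N), F (fun j => x (e (Fin.castLE hmN.le j))) *
              (((∑ i, (x i - μ) ^ 2)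
                  - ∑ j : Fin (k - 1), (x (e (Fin.castLE hmN.le j)) - μ) ^ 2)
                / ((N : ℝ) - (k - 1 : ℕ)))
              = (((N : ℝ) - (k - 1 : ℕ)))⁻¹ * (((N : ℝ) - (k - 1 : ℕ)) *
                ∑ e : Equiv.Perm (Fin N), F (fun j => x (e (Fin.castLE hmN.le j))) *
                  (x (e ⟨k - 1, hmN⟩) - μ) ^ 2) := by
            rw [hkey, Finset.mul_sum]
            refine Finset.sum_congr rfl fun e _ => ?_
            field_simp
            try ring
          rw [this, ← mul_assoc, inv_mul_cancel₀ hd0, one_mul]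
      _ = ∫ ω, Set.indicator (pr ⁻¹' A) φ (W ω) ∂P :=
          (hcalc _ (hφ.indicator (hpr hA))).symm
      _ = ∫ ω, Set.indicator (Y ⁻¹' A) f ω ∂P := by
          exact integral_congr_ae (Filter.Eventually.of_forall fun ω => (hindf ω).symm)
  · -- AEStronglyMeasurable' of g
    set G : (Fin (k - 1) → ℝ) → ℝ := fun u =>
      σ2 - (∑ j : Fin (k - 1), ((u j - μ) ^ 2 - σ2)) / ((N : ℝ) - k + 1) with hGdef
    have hG : Measurable G := by
      apply Measurable.const_sub
      apply Measurable.div_const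
      exact Finset.measurable_sum _ fun j _ =>
        (((measurable_pi_apply _).sub measurable_const).pow measurable_const).sub measurable_const
    have hgY : g = fun ω => G (Y ω) := by
      funext ω
      show σ2 - (∑ i ∈ Finset.range (k - 1), ((X i ω - μ) ^ 2 - σ2)) / ((N : ℝ) - k + 1)
          = σ2 - (∑ j : Fin (k - 1), ((Y ω j - μ) ^ 2 - σ2)) / ((N : ℝ) - k + 1)
      rw [← Fin.sum_univ_eq_sum_range (fun i => ((X i ω - μ) ^ 2 - σ2)) (k - 1)]
    have hmg : @Measurable Ω ℝ (MeasurableSpace.comap Y inferInstance) _ g := by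
      rw [hgY]; exact hG.comp hYmF
    exact StronglyMeasurable.aestronglyMeasurable hmg.stronglyMeasurable
end

section
/- Let X_1,...,X_N be sampled without replacement from a finite population of N reals with mean μ and variance σ². Then the process (−Q*_{k})_k, where Q*_k = (∑_{i=1}^{k} ((X_i − μ)² − σ²))/(N−k), is a martingale: E[−Q*_{k−1} | Q*_{k−2},...,Q*_1] = −Q*_{k−2}. -/
open MeasureTheory Finset Real
open scoped ENNReal

section BMAux

lemma BM_core {N : ℕ} (p : Fin N) (hp : (p : ℕ) + 2 ≤ N) (Y : Fin N → ℝ)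
    (hY : ∑ i, Y i = 0) (Φ : Equiv.Perm (Fin N) → ℝ)
    (hΦ : ∀ (e : Equiv.Perm (Fin N)) (j : Fin N), p ≤ j → Φ (e * Equiv.swap p j) = Φ e)
    (a : ℝ) (ha : a = (N : ℝ) - (p : ℕ) - 1) :
    ∑ e : Equiv.Perm (Fin N), Φ e *
      ((∑ i ∈ Finset.Iio p, Y (e i) + Y (e p)) / a -
       (∑ i ∈ Finset.Iio p, Y (e i)) / (a + 1)) = 0 := by
  have hpN : ((p : ℕ) : ℝ) + 2 ≤ (N : ℝ) := by exact_mod_cast hp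
  have ha0 : a ≠ 0 := by rw [ha]; nlinarith
  have ha1 : a + 1 ≠ 0 := by rw [ha]; nlinarith
  have hcard : ((Finset.Ici p).card : ℝ) = a + 1 := by
    rw [Fin.card_Ici, ha]
    have h1 : (p : ℕ) ≤ N := by omega
    push_cast [Nat.cast_sub h1]
    ring
  have key : ∀ e : Equiv.Perm (Fin N),
      ∑ j ∈ Finset.Ici p, ((∑ i ∈ Finset.Iio p, Y (e i) + Y (e j)) / a -
        (∑ i ∈ Finset.Iio p, Y (e i)) / (a + 1)) = 0 := by
    intro e
    set S := ∑ i ∈ Finset.Iio p, Y (e i) with hS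
    have hsplit : ∑ j ∈ Finset.Ici p, Y (e j) = -S := by
      have htot : ∑ j : Fin N, Y (e j) = 0 := by
        rw [Equiv.sum_comp e Y]; exact hY
      have hunion : Finset.Iio p ∪ Finset.Ici p = Finset.univ := by
        ext i
        simp only [Finset.mem_union, Finset.mem_Iio, Finset.mem_Ici, Finset.mem_univ, iff_true]
        exact lt_or_ge i p
      have hdisj : Disjoint (Finset.Iio p) (Finset.Ici p) :=
        Finset.disjoint_left.mpr fun i hi hi' =>
          absurd (Finset.mem_Ici.mp hi') (not_le.mpr (Finset.mem_Iio.mp hi))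
      have hu := Finset.sum_union hdisj (f := fun j => Y (e j))
      rw [hunion, htot] at hu
      linarith [hu]
    have hterm : ∀ j : Fin N, (S + Y (e j)) / a - S / (a + 1)
        = (S / a - S / (a + 1)) + Y (e j) * a⁻¹ := by
      intro j; field_simp; ring
    rw [Finset.sum_congr rfl fun j _ => hterm j, Finset.sum_add_distrib,
      Finset.sum_const, ← Finset.sum_mul, hsplit, nsmul_eq_mul, hcard]
    field_simp
    ring
  have hre : ∀ j : Fin N, p ≤ j →
      (∑ e : Equiv.Perm (Fin N), Φ e *
        ((∑ i ∈ Finset.Iio p, Y (e i) + Y (e p)) / a -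
         (∑ i ∈ Finset.Iio p, Y (e i)) / (a + 1)))
      = ∑ e : Equiv.Perm (Fin N), Φ e *
        ((∑ i ∈ Finset.Iio p, Y (e i) + Y (e j)) / a -
         (∑ i ∈ Finset.Iio p, Y (e i)) / (a + 1)) := by
    intro j hj
    rw [← Equiv.sum_comp (Equiv.mulRight (Equiv.swap p j))
      (fun e : Equiv.Perm (Fin N) => Φ e *
        ((∑ i ∈ Finset.Iio p, Y (e i) + Y (e p)) / a -
         (∑ i ∈ Finset.Iio p, Y (e i)) / (a + 1)))]
    refine Finset.sum_congr rfl fun e _ => ?_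
    have h1 : Φ (Equiv.mulRight (Equiv.swap p j) e) = Φ e := hΦ e j hj
    have h2 : ∀ i ∈ Finset.Iio p, Y ((Equiv.mulRight (Equiv.swap p j) e) i) = Y (e i) := by
      intro i hi
      have hip : i ≠ p := ne_of_lt (Finset.mem_Iio.mp hi)
      have hij : i ≠ j := ne_of_lt (lt_of_lt_of_le (Finset.mem_Iio.mp hi) hj)
      simp [Equiv.Perm.mul_apply, Equiv.swap_apply_of_ne_of_ne hip hij]
    have h3 : (Equiv.mulRight (Equiv.swap p j) e) p = e j := by
      simp [Equiv.Perm.mul_apply]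
    rw [h1, Finset.sum_congr rfl h2, h3]
  have hM : (Finset.Ici p).card ≠ 0 := by
    rw [Fin.card_Ici]; omega
  have hMsum : ((Finset.Ici p).card : ℕ) •
      (∑ e : Equiv.Perm (Fin N), Φ e *
        ((∑ i ∈ Finset.Iio p, Y (e i) + Y (e p)) / a -
         (∑ i ∈ Finset.Iio p, Y (e i)) / (a + 1))) = 0 := by
    rw [← Finset.sum_const]
    calc ∑ _j ∈ Finset.Ici p, ∑ e : Equiv.Perm (Fin N), Φ e *
          ((∑ i ∈ Finset.Iio p, Y (e i) + Y (e p)) / a -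
           (∑ i ∈ Finset.Iio p, Y (e i)) / (a + 1))
        = ∑ j ∈ Finset.Ici p, ∑ e : Equiv.Perm (Fin N), Φ e *
          ((∑ i ∈ Finset.Iio p, Y (e i) + Y (e j)) / a -
           (∑ i ∈ Finset.Iio p, Y (e i)) / (a + 1)) := by
          refine Finset.sum_congr rfl fun j hj => hre j (Finset.mem_Ici.mp hj)
      _ = ∑ e : Equiv.Perm (Fin N), Φ e *
          (∑ j ∈ Finset.Ici p, ((∑ i ∈ Finset.Iio p, Y (e i) + Y (e j)) / a -
           (∑ i ∈ Finset.Iio p, Y (e i)) / (a + 1))) := by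
          rw [Finset.sum_comm]
          exact Finset.sum_congr rfl fun e _ => (Finset.mul_sum _ _ _).symm
      _ = 0 := by
          refine Finset.sum_eq_zero fun e _ => ?_
          rw [key e, mul_zero]
  exact (smul_eq_zero.mp hMsum).resolve_left (by exact_mod_cast hM)

noncomputable def BM_QF (N : ℕ) (μ σ2 : ℝ) (m : ℕ) (v : Fin N → ℝ) : ℝ :=
  (∑ i ∈ Finset.filter (fun i : Fin N => (i : ℕ) < m) Finset.univ, ((v i - μ) ^ 2 - σ2)) /
    ((N : ℝ) - m)

lemma BM_QF_measurable (N : ℕ) (μ σ2 : ℝ) (m : ℕ) : Measurable (BM_QF N μ σ2 m) := by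
  unfold BM_QF
  exact (Finset.measurable_sum _ fun i _ =>
    (by fun_prop : Measurable fun v : Fin N → ℝ => (v i - μ) ^ 2 - σ2)).div_const _

lemma BM_sum_filter_eq_sum_range {N m : ℕ} (hm : m ≤ N) (f : ℕ → ℝ) :
    ∑ i ∈ Finset.filter (fun i : Fin N => (i : ℕ) < m) Finset.univ, f i
      = ∑ i ∈ Finset.range m, f i := by
  rw [Finset.sum_filter, Fin.sum_univ_eq_sum_range (fun i => if i < m then f i else 0),
    ← Finset.sum_filter]
  congr 1
  ext i
  simp only [Finset.mem_filter, Finset.mem_range]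
  omega

lemma BM_QF_congr {N : ℕ} {μ σ2 : ℝ} {m : ℕ} {v w : Fin N → ℝ}
    (h : ∀ i : Fin N, (i : ℕ) < m → v i = w i) :
    BM_QF N μ σ2 m v = BM_QF N μ σ2 m w := by
  unfold BM_QF
  congr 1
  exact Finset.sum_congr rfl fun i hi => by rw [h i (Finset.mem_filter.mp hi).2]

lemma BM_integrable_mix {N : ℕ} (x : Fin N → ℝ) {h : (Fin N → ℝ) → ℝ} (hh : Measurable h) :
    Integrable h ((Nat.factorial N : ℝ≥0∞)⁻¹ •
      ∑ e : Equiv.Perm (Fin N), Measure.dirac (fun i => x (e i))) := by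
  refine Integrable.smul_measure ?_ (by simp [Nat.factorial_ne_zero])
  rw [integrable_finset_sum_measure]
  intro e _
  refine ⟨hh.aestronglyMeasurable, ?_⟩
  rw [HasFiniteIntegral, lintegral_dirac]
  exact ENNReal.coe_lt_top

lemma BM_integral_mix {N : ℕ} (x : Fin N → ℝ) {h : (Fin N → ℝ) → ℝ} (hh : Measurable h) :
    ∫ v, h v ∂((Nat.factorial N : ℝ≥0∞)⁻¹ •
        ∑ e : Equiv.Perm (Fin N), Measure.dirac (fun i => x (e i)))
      = ((Nat.factorial N : ℝ≥0∞)⁻¹).toReal *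
        ∑ e : Equiv.Perm (Fin N), h (fun i => x (e i)) := by
  rw [integral_smul_measure, integral_finset_sum_measure (fun e _ => ?_)]
  · simp only [integral_dirac]
    rfl
  · refine ⟨hh.aestronglyMeasurable, ?_⟩
    rw [HasFiniteIntegral, lintegral_dirac]
    exact ENNReal.coe_lt_top

end BMAux

/-- The process `-Q*_k`, where `Q*_k = (∑_{i=1}^k ((X_i - μ)^2 - σ^2))/(N - k)`, is a
martingale: `E[-Q*_{k-1} | Q*_1, …, Q*_{k-2}] = -Q*_{k-2}`. -/
theorem Qstar_martingale
    {Ω : Type*} [MeasurableSpace Ω] (P : Measure Ω) [IsProbabilityMeasure P]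
    (N : ℕ) (hN : 2 ≤ N) (x : Fin N → ℝ)
    (X : ℕ → Ω → ℝ) (hXm : ∀ i, Measurable (X i))
    (hX : samplesWithoutReplacement P N x X)
    (μ : ℝ) (hμ : μ = (∑ i, x i) / N)
    (σ2 : ℝ) (hσ2 : σ2 = (∑ i, (x i - μ) ^ 2) / N)
    (Qs : ℕ → Ω → ℝ)
    (hQs : ∀ k ω, Qs k ω = (∑ i ∈ Finset.range k, ((X i ω - μ) ^ 2 - σ2)) / ((N : ℝ) - k))
    (k : ℕ) (hk1 : 3 ≤ k) (hk : k ≤ N) :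
    MeasureTheory.condExp
        (MeasurableSpace.comap (fun ω (j : Fin (k - 2)) => Qs (j + 1) ω) inferInstance)
        P (fun ω => -Qs (k - 1) ω)
      =ᵐ[P] fun ω => -Qs (k - 2) ω := by
  classical
  set G : Ω → (Fin (k - 2) → ℝ) := fun ω (j : Fin (k - 2)) => Qs (j + 1) ω with hGdef
  set V : Ω → (Fin N → ℝ) := fun ω (i : Fin N) => X i ω with hVdef
  have hVm : Measurable V := measurable_pi_lambda _ fun i => hXm i
  have hmap : Measure.map V P = (Nat.factorial N : ℝ≥0∞)⁻¹ •
      ∑ e : Equiv.Perm (Fin N), Measure.dirac (fun i => x (e i)) := hX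
  have hQseq : ∀ m : ℕ, m ≤ N → ∀ ω, Qs m ω = BM_QF N μ σ2 m (V ω) := by
    intro m hm ω
    rw [hQs, BM_QF]
    congr 1
    exact (BM_sum_filter_eq_sum_range hm fun i => (X i ω - μ) ^ 2 - σ2).symm
  have hQsm : ∀ m : ℕ, Measurable (Qs m) := by
    intro m
    have h : Qs m = fun ω => (∑ i ∈ Finset.range m, ((X i ω - μ) ^ 2 - σ2)) / ((N : ℝ) - m) :=
      funext fun ω => hQs m ω
    rw [h]
    exact (Finset.measurable_sum _ fun i _ =>
      (((hXm i).sub_const μ).pow_const 2).sub_const σ2).div_const _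
  have hGm : Measurable G := measurable_pi_lambda _ fun j => hQsm _
  have hmle : MeasurableSpace.comap G inferInstance ≤ ‹MeasurableSpace Ω› := hGm.comap_le
  haveI : SigmaFinite (P.trim hmle) := by
    have := isFiniteMeasure_trim (μ := P) hmle
    infer_instance
  have hint : ∀ m : ℕ, m ≤ N → Integrable (fun ω => -Qs m ω) P := by
    intro m hm
    have heq : (fun ω => -Qs m ω) = (fun v => -BM_QF N μ σ2 m v) ∘ V :=
      funext fun ω => by simp only [Function.comp_apply]; rw [hQseq m hm ω]
    rw [heq]
    refine (integrable_map_measure ?_ hVm.aemeasurable).mp ?_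
    · exact (BM_QF_measurable N μ σ2 m).neg.aestronglyMeasurable
    · rw [hmap]; exact BM_integrable_mix x (BM_QF_measurable N μ σ2 m).neg
  refine (ae_eq_condExp_of_forall_setIntegral_eq hmle (hint (k - 1) (by omega))
    (fun s _ _ => (hint (k - 2) (by omega)).integrableOn) ?_ ?_).symm
  · -- set integrals agree
    rintro s ⟨A, hA, rfl⟩ -
    set g' : (Fin N → ℝ) → (Fin (k - 2) → ℝ) := fun v j => BM_QF N μ σ2 (j + 1) v with hg'def
    have hg'm : Measurable g' := measurable_pi_lambda _ fun j => BM_QF_measurable _ _ _ _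
    have hGV : G = g' ∘ V := funext fun ω => funext fun j => by
      have hj := j.2
      simp only [Function.comp_apply, hGdef, hg'def]
      exact hQseq (j + 1) (by omega) ω
    have hpre : G ⁻¹' A = V ⁻¹' (g' ⁻¹' A) := by rw [hGV]; rfl
    set B := g' ⁻¹' A with hBdef
    have hBm : MeasurableSet B := hg'm hA
    have hside : ∀ m : ℕ, m ≤ N →
        ∫ ω in G ⁻¹' A, -Qs m ω ∂P
          = ((Nat.factorial N : ℝ≥0∞)⁻¹).toReal *
            ∑ e : Equiv.Perm (Fin N),
              B.indicator (fun v => -BM_QF N μ σ2 m v) (fun i => x (e i)) := by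
      intro m hm
      have h1 : ∀ ω, -Qs m ω = -BM_QF N μ σ2 m (V ω) := fun ω => by rw [hQseq m hm ω]
      calc ∫ ω in G ⁻¹' A, -Qs m ω ∂P
          = ∫ ω in V ⁻¹' B, -BM_QF N μ σ2 m (V ω) ∂P := by
            rw [hpre]; simp only [h1]
        _ = ∫ v in B, -BM_QF N μ σ2 m v ∂(Measure.map V P) :=
            (setIntegral_map hBm (BM_QF_measurable N μ σ2 m).neg.aestronglyMeasurable
              hVm.aemeasurable).symm
        _ = ∫ v, B.indicator (fun v => -BM_QF N μ σ2 m v) v ∂(Measure.map V P) :=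
            (integral_indicator hBm).symm
        _ = ((Nat.factorial N : ℝ≥0∞)⁻¹).toReal *
            ∑ e : Equiv.Perm (Fin N),
              B.indicator (fun v => -BM_QF N μ σ2 m v) (fun i => x (e i)) := by
            rw [hmap]
            exact BM_integral_mix x ((BM_QF_measurable N μ σ2 m).neg.indicator hBm)
    rw [hside (k - 2) (by omega), hside (k - 1) (by omega)]
    congr 1
    -- the combinatorial identity
    set Y : Fin N → ℝ := fun i => (x i - μ) ^ 2 - σ2 with hYdef
    have hNne : (N : ℝ) ≠ 0 := Nat.cast_ne_zero.mpr (by omega)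
    have hY : ∑ i, Y i = 0 := by
      simp only [hYdef, Finset.sum_sub_distrib, Finset.sum_const, Finset.card_univ,
        Fintype.card_fin, nsmul_eq_mul]
      rw [hσ2]
      field_simp
      ring
    set p : Fin N := ⟨k - 2, by omega⟩ with hpdef
    have hp : (p : ℕ) + 2 ≤ N := by simp [hpdef]; omega
    set χ : Equiv.Perm (Fin N) → ℝ :=
      fun e => if (fun i => x (e i)) ∈ B then (1 : ℝ) else 0 with hχdef
    have hind : ∀ (m : ℕ) (e : Equiv.Perm (Fin N)),
        B.indicator (fun v => -BM_QF N μ σ2 m v) (fun i => x (e i))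
          = χ e * (-BM_QF N μ σ2 m (fun i => x (e i))) := by
      intro m e
      simp only [Set.indicator, hχdef]
      split <;> simp
    have hQFk2 : ∀ e : Equiv.Perm (Fin N),
        BM_QF N μ σ2 (k - 2) (fun i => x (e i))
          = (∑ i ∈ Finset.Iio p, Y (e i)) / ((N : ℝ) - ((k - 2 : ℕ) : ℝ)) := by
      intro e
      rw [BM_QF]
      congr 1
      refine Finset.sum_congr ?_ fun i _ => rfl
      ext i
      simp only [Finset.mem_filter, Finset.mem_univ, true_and, Finset.mem_Iio, Fin.lt_def, hpdef]
    have hQFk1 : ∀ e : Equiv.Perm (Fin N),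
        BM_QF N μ σ2 (k - 1) (fun i => x (e i))
          = (∑ i ∈ Finset.Iio p, Y (e i) + Y (e p)) / ((N : ℝ) - ((k - 1 : ℕ) : ℝ)) := by
      intro e
      rw [BM_QF]
      congr 1
      have hfilter : Finset.filter (fun i : Fin N => (i : ℕ) < k - 1) Finset.univ
          = insert p (Finset.Iio p) := by
        ext i
        simp only [Finset.mem_filter, Finset.mem_univ, true_and, Finset.mem_insert,
          Finset.mem_Iio, Fin.lt_def, Fin.ext_iff, hpdef]
        omega
      rw [hfilter, Finset.sum_insert (by simp)]
      exact add_comm _ _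
    set a : ℝ := (N : ℝ) - ((k - 1 : ℕ) : ℝ) with hadef
    have ha : a = (N : ℝ) - ((p : ℕ) : ℝ) - 1 := by
      simp only [hadef, hpdef]
      have h1 : ((k - 1 : ℕ) : ℝ) = (k : ℝ) - 1 := by
        push_cast [Nat.cast_sub (by omega : 1 ≤ k)]; ring
      have h2 : ((k - 2 : ℕ) : ℝ) = (k : ℝ) - 2 := by
        push_cast [Nat.cast_sub (by omega : 2 ≤ k)]; ring
      rw [h1, h2]; ring
    have ha1 : (N : ℝ) - ((k - 2 : ℕ) : ℝ) = a + 1 := by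
      have h1 : ((k - 1 : ℕ) : ℝ) = (k : ℝ) - 1 := by
        push_cast [Nat.cast_sub (by omega : 1 ≤ k)]; ring
      have h2 : ((k - 2 : ℕ) : ℝ) = (k : ℝ) - 2 := by
        push_cast [Nat.cast_sub (by omega : 2 ≤ k)]; ring
      rw [hadef, h1, h2]; ring
    have hΦ : ∀ (e : Equiv.Perm (Fin N)) (j : Fin N), p ≤ j →
        χ (e * Equiv.swap p j) = χ e := by
      intro e j hj
      have hg'eq : g' (fun i => x ((e * Equiv.swap p j) i)) = g' (fun i => x (e i)) := by
        funext j'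
        simp only [hg'def]
        refine BM_QF_congr fun i hi => ?_
        have hj' := j'.2
        have hik : (i : ℕ) < k - 2 := by omega
        have hip : i ≠ p := by
          intro h; rw [h] at hik; simp [hpdef] at hik
        have hij : i ≠ j := by
          intro h
          have := Fin.le_def.mp hj
          rw [h] at hik
          simp [hpdef] at this
          omega
        simp [Equiv.Perm.mul_apply, Equiv.swap_apply_of_ne_of_ne hip hij]
      simp only [hχdef, hBdef, Set.mem_preimage, hg'eq]
    have hgoal : ∀ e : Equiv.Perm (Fin N),
        B.indicator (fun v => -BM_QF N μ σ2 (k - 2) v) (fun i => x (e i))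
          - B.indicator (fun v => -BM_QF N μ σ2 (k - 1) v) (fun i => x (e i))
          = χ e * ((∑ i ∈ Finset.Iio p, Y (e i) + Y (e p)) / a -
              (∑ i ∈ Finset.Iio p, Y (e i)) / (a + 1)) := by
      intro e
      rw [hind, hind, hQFk1 e, hQFk2 e, ha1]
      ring
    rw [← sub_eq_zero, ← Finset.sum_sub_distrib]
    rw [Finset.sum_congr rfl fun e _ => hgoal e]
    exact BM_core p hp Y hY χ hΦ a ha
  · -- a.e. strong measurability wrt the comap σ-algebra
    refine StronglyMeasurable.aestronglyMeasurable ?_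
    have hj0 : k - 3 < k - 2 := by omega
    have heq : (fun ω => -Qs (k - 2) ω)
        = (fun y : Fin (k - 2) → ℝ => -y ⟨k - 3, hj0⟩) ∘ G := by
      funext ω
      simp only [Function.comp_apply, hGdef]
      have h : k - 3 + 1 = k - 2 := by omega
      rw [h]
    rw [heq]
    exact (((measurable_pi_apply _).neg).comp (comap_measurable G)).stronglyMeasurable
end
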